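/- arXiv:1810.04397 — 3 statements merged into one kernel-verified Lean document; each statement's English description precedes it below -/
import Mathlib

section
/- Let G be a finite simple graph, R(G) a residual graph of G, and H = G − V(R(G)). Then n(H)/2 + γ_MB(R(G)) − 1 ≤ γ_MB(G) ≤ n(H)/2 + γ_MB(R(G)), with the convention that both bounds are ∞ when γ_MB(R(G)) = ∞. -/
variable {V : Type*}

/-- `D` dominates every vertex of `G` outside of `A`: each such vertex lies in the
closed neighborhood of some member of `D`. (Take `A = ∅` for ordinary domination.) -/
def Dominates (G : SimpleGraph V) (A : Set V) (D : Finset V) : Prop :=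
  ∀ v : V, v ∉ A → ∃ u ∈ D, u = v ∨ G.Adj u v

/-- `MBWin G A t k D S`: in the Maker-Breaker domination game on `G` where the vertices of
`A` are regarded as already dominated, with `D` the set of vertices selected so far by
Dominator, `S` the set selected so far by Staller, and where it is Dominator's turn if
`t = true` and Staller's turn if `t = false`, Dominator has a strategy guaranteeing that
his selected vertices dominate `V \ A` after he selects at most `k` further vertices.
Players alternately select vertices not previously selected by either player; if no
unselected vertex remains and Dominator's vertices do not dominate, Dominator has lost. -/
inductive MBWin [Fintype V] [DecidableEq V] (G : SimpleGraph V) (A : Set V) :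
    Bool → ℕ → Finset V → Finset V → Prop
  | win (t : Bool) (k : ℕ) (D S : Finset V) : Dominates G A D → MBWin G A t k D S
  | dmove (k : ℕ) (D S : Finset V) (v : V) : v ∉ D → v ∉ S →
      MBWin G A false k (insert v D) S → MBWin G A true (k + 1) D S
  | smove (k : ℕ) (D S : Finset V) : D ∪ S ≠ Finset.univ →
      (∀ v, v ∉ D → v ∉ S → MBWin G A true k D (insert v S)) → MBWin G A false k D S

/-- The Maker-Breaker domination number `γ_MB(G|A)` of the game in which the vertices of `A`
are regarded as already dominated and Dominator moves first: the minimum `m` such that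
Dominator has a winning strategy using at most `m` of his own moves, and `⊤ = ∞` if
Dominator has no winning strategy. -/
noncomputable def gammaMBRes [Fintype V] [DecidableEq V] (G : SimpleGraph V) (A : Set V) :
    ℕ∞ :=
  sInf ((fun m : ℕ => (m : ℕ∞)) '' {m : ℕ | MBWin G A true m ∅ ∅})

/-- `γ_MB'(G|A)`: as `gammaMBRes`, but Staller moves first. -/
noncomputable def gammaMBRes' [Fintype V] [DecidableEq V] (G : SimpleGraph V) (A : Set V) :
    ℕ∞ :=
  sInf ((fun m : ℕ => (m : ℕ∞)) '' {m : ℕ | MBWin G A false m ∅ ∅})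

/-- The Maker-Breaker domination number `γ_MB(G)` (Dominator moves first). -/
noncomputable def gammaMB [Fintype V] [DecidableEq V] (G : SimpleGraph V) : ℕ∞ :=
  gammaMBRes G ∅

/-- The Staller-start Maker-Breaker domination number `γ_MB'(G)`. -/
noncomputable def gammaMB' [Fintype V] [DecidableEq V] (G : SimpleGraph V) : ℕ∞ :=
  gammaMBRes' G ∅

/-- The domination number `γ(G)`: the minimum size of a dominating set of `G`. -/
noncomputable def dominationNumber [Fintype V] (G : SimpleGraph V) : ℕ :=
  sInf {m : ℕ | ∃ D : Finset V, Dominates G ∅ D ∧ D.card = m}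

/-- A `γ`-set of `G`: a dominating set of minimum size. -/
def IsGammaSet [Fintype V] (G : SimpleGraph V) (D : Finset V) : Prop :=
  Dominates G ∅ D ∧ D.card = dominationNumber G

/-- `PendantStep G s t`: the induced subgraph of `G` on `t` is obtained from the induced
subgraph of `G` on `s` by removing a pendant `P₂` (a path `xy` on two vertices attached to
the rest of the graph by exactly one edge, so that `x` is a leaf and `y` has degree `2`),
or by removing the entire remaining graph when it is a single `P₂`. -/
def PendantStep [DecidableEq V] (G : SimpleGraph V) (s t : Finset V) : Prop :=
  (∃ x ∈ s, ∃ y ∈ s, G.Adj x y ∧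
      (∀ w ∈ s, G.Adj x w → w = y) ∧
      (∃ z ∈ s, z ≠ x ∧ G.Adj y z ∧ ∀ w ∈ s, G.Adj y w → w = x ∨ w = z) ∧
      t = (s.erase x).erase y) ∨
  (∃ x ∈ s, ∃ y ∈ s, G.Adj x y ∧ s = {x, y} ∧ t = ∅)

/-- `s` is the vertex set of a residual graph `R(G)` of `G`: it is obtained from the full
vertex set by iteratively removing pendant `P₂`'s until no such removal is possible. -/
def IsResidualSet [Fintype V] [DecidableEq V] (G : SimpleGraph V) (s : Finset V) : Prop :=
  Relation.ReflTransGen (PendantStep G) Finset.univ s ∧ ∀ t, ¬ PendantStep G s t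


/-! ### Auxiliary development: a board-restricted version of the game -/

set_option linter.unusedSectionVars false
set_option maxHeartbeats 4000000

/-- Domination of board `B` relative to exempt set `A`. -/
def RDom (G : SimpleGraph V) (B : Finset V) (A : Set V) (D : Finset V) : Prop :=
  ∀ v ∈ B, v ∉ A → ∃ u ∈ D, u = v ∨ G.Adj u v

/-- The Maker-Breaker domination game restricted to the board `B`. -/
inductive RWin [DecidableEq V] (G : SimpleGraph V) (B : Finset V) (A : Set V) :
    Bool → ℕ → Finset V → Finset V → Prop
  | win (t : Bool) (k : ℕ) (D S : Finset V) : RDom G B A D → RWin G B A t k D S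
  | dmove (k : ℕ) (D S : Finset V) (v : V) : v ∈ B → v ∉ D → v ∉ S →
      RWin G B A false k (insert v D) S → RWin G B A true (k + 1) D S
  | smove (k : ℕ) (D S : Finset V) : (∃ v ∈ B, v ∉ D ∧ v ∉ S) →
      (∀ v ∈ B, v ∉ D → v ∉ S → RWin G B A true k D (insert v S)) → RWin G B A false k D S

section Basic

variable [DecidableEq V] {G : SimpleGraph V} {B : Finset V} {A : Set V}


theorem RDom.mono {D D' : Finset V} (h : RDom G B A D) (hDD : D ⊆ D') : RDom G B A D' := by
  intro v hv hvA
  obtain ⟨u, hu, h'⟩ := h v hv hvA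
  exact ⟨u, hDD hu, h'⟩

theorem RWin.succ {t k D S} (h : RWin G B A t k D S) : RWin G B A t (k+1) D S := by
  induction h with
  | win t k D S hd => exact .win _ _ _ _ hd
  | dmove k D S v hvB hvD hvS _ ih => exact .dmove _ _ _ v hvB hvD hvS ih
  | smove k D S hex _ ih => exact .smove _ _ _ hex ih

theorem RWin.mono {t k k' D S} (h : RWin G B A t k D S) (hk : k ≤ k') : RWin G B A t k' D S := by
  induction k' with
  | zero => exact Nat.le_zero.mp hk ▸ h
  | succ n ih =>
    rcases Nat.lt_or_ge k (n+1) with h' | h'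
    · exact (ih (Nat.lt_succ_iff.mp h')).succ
    · exact (Nat.le_antisymm hk h') ▸ h

/-- Removing Staller stones can only help Dominator. -/
theorem RWin.sremove {t k D S} (h : RWin G B A t k D S) :
    ∀ S' ⊆ S, RWin G B A t k D S' := by
  induction h with
  | win t k D S hd => exact fun S' _ => .win _ _ _ _ hd
  | dmove k D S v hvB hvD hvS _ ih =>
    exact fun S' hS' => .dmove _ _ _ v hvB hvD (fun hc => hvS (hS' hc)) (ih S' hS')
  | smove k D S hex hch ih =>
    intro S' hS'
    obtain ⟨u, huB, huD, huS⟩ := hex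
    refine .smove _ _ _ ⟨u, huB, huD, fun hc => huS (hS' hc)⟩ ?_
    intro v hvB hvD hvS'
    by_cases hvS : v ∈ S
    · exact ih u huB huD huS (insert v S') (by
        intro w hw
        rcases Finset.mem_insert.mp hw with rfl | hw
        · exact Finset.mem_insert_of_mem hvS
        · exact Finset.mem_insert_of_mem (hS' hw))
    · exact ih v hvB hvD hvS (insert v S') (Finset.insert_subset_insert _ hS')

/-- It is never bad for Dominator that it is his move. -/
theorem RWin.stos {k D S} (h : RWin G B A false k D S) : RWin G B A true k D S := by
  cases h with
  | win _ _ _ _ hd => exact .win _ _ _ _ hd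
  | smove k D S hex hch =>
    obtain ⟨u, huB, huD, huS⟩ := hex
    exact (hch u huB huD huS).sremove S (Finset.subset_insert _ _)

/-- Changing the exempt set, provided newly non-exempt board vertices are dominated. -/
theorem RWin.achange {t k D S} (h : RWin G B A t k D S) (A' : Set V)
    (hA : ∀ v ∈ B, v ∈ A → v ∉ A' → ∃ u ∈ D, u = v ∨ G.Adj u v) :
    RWin G B A' t k D S := by
  induction h with
  | win t k D S hd =>
    refine .win _ _ _ _ ?_
    intro v hvB hvA'
    by_cases hvA : v ∈ A
    · exact hA v hvB hvA hvA'
    · exact hd v hvB hvA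
  | dmove k D S v hvB hvD hvS _ ih =>
    refine .dmove _ _ _ v hvB hvD hvS (ih ?_)
    intro w hwB hwA hwA'
    obtain ⟨u, hu, h'⟩ := hA w hwB hwA hwA'
    exact ⟨u, Finset.mem_insert_of_mem hu, h'⟩
  | smove k D S hex hch ih => exact .smove _ _ _ hex (fun v hvB hvD hvS => ih v hvB hvD hvS hA)

/-- If the whole closed neighborhood (within the board) of a needed vertex belongs to
Staller, Dominator cannot win. -/
theorem RWin.noWin {t k D S} (h : RWin G B A t k D S) {p : V} (hpB : p ∈ B) (hpA : p ∉ A)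
    (hcov : ∀ u ∈ B, (u = p ∨ G.Adj u p) → u ∈ S) (hDB : D ⊆ B) (hdisj : ∀ u ∈ D, u ∉ S) :
    False := by
  induction h with
  | win t k D S hd =>
    obtain ⟨u, huD, h'⟩ := hd p hpB hpA
    exact hdisj u huD (hcov u (hDB huD) h')
  | dmove k D S v hvB hvD hvS _ ih =>
    refine ih hcov (Finset.insert_subset hvB hDB) ?_
    intro u hu
    rcases Finset.mem_insert.mp hu with rfl | hu
    · exact hvS
    · exact hdisj u hu
  | smove k D S hex hch ih =>
    obtain ⟨u, huB, huD, huS⟩ := hex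
    refine ih u huB huD huS ?_ hDB ?_
    · intro w hwB hw
      exact Finset.mem_insert_of_mem (hcov w hwB hw)
    · intro w hwD hwS
      rcases Finset.mem_insert.mp hwS with rfl | hwS
      · exact huD hwD
      · exact hdisj w hwD hwS

/-- With a full board at Dominator's move, winning means already dominating. -/
theorem RWin.fullTrue {k D S} (h : RWin G B A true k D S)
    (hfull : ∀ v ∈ B, v ∈ D ∨ v ∈ S) : RDom G B A D := by
  cases h with
  | win _ _ _ _ hd => exact hd
  | dmove k D S v hvB hvD hvS _ =>
    rcases hfull v hvB with h' | h' <;> [exact absurd h' hvD; exact absurd h' hvS]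


/-- Φ: extra Dominator stones never hurt; and at Staller's move, Dominator can also
afford a wasted tempo. -/
theorem RWin.phi {t k D S} (h : RWin G B A t k D S) :
    (∀ X : Finset V, (∀ x ∈ X, x ∉ S) → RWin G B A t k (D ∪ X) S) ∧
    (t = false → ∀ X : Finset V, (∀ x ∈ X, x ∉ S) → RWin G B A true (k+1) (D ∪ X) S) := by
  induction h with
  | win t k D S hd =>
    exact ⟨fun X _ => .win _ _ _ _ (hd.mono Finset.subset_union_left),
           fun _ X _ => .win _ _ _ _ (hd.mono Finset.subset_union_left)⟩
  | dmove k D S v hvB hvD hvS hchild ih =>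
    refine ⟨?_, fun h => by cases h⟩
    intro X hX
    by_cases hvX : v ∈ X
    · have h2 := ih.2 rfl (X.erase v) (fun x hx => hX x (Finset.erase_subset _ _ hx))
      have : insert v D ∪ X.erase v = D ∪ X := by
        ext w
        simp only [Finset.mem_union, Finset.mem_insert, Finset.mem_erase]
        constructor
        · rintro (⟨rfl | hw⟩ | ⟨hne, hw⟩)
          · exact Or.inr hvX
          · exact Or.inl hw
          · exact Or.inr hw
        · rintro (hw | hw)
          · exact Or.inl (Or.inr hw)
          · by_cases hwv : w = v
            · exact Or.inl (Or.inl hwv)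
            · exact Or.inr ⟨hwv, hw⟩
      rwa [this] at h2
    · refine .dmove _ _ _ v hvB ?_ hvS ?_
      · simp only [Finset.mem_union]
        rintro (h' | h') <;> [exact hvD h'; exact hvX h']
      · have := ih.1 X hX
        rwa [Finset.insert_union] at this
  | smove k D S hex hch ih =>
    have main : ∀ X : Finset V, (∀ x ∈ X, x ∉ S) → RWin G B A false k (D ∪ X) S := by
      intro X hX
      by_cases hfree : ∃ w ∈ B, w ∉ D ∪ X ∧ w ∉ S
      · obtain ⟨w, hwB, hwDX, hwS⟩ := hfree
        refine .smove _ _ _ ⟨w, hwB, hwDX, hwS⟩ ?_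
        intro v hvB hvDX hvS
        have hvD : v ∉ D := fun h' => hvDX (Finset.mem_union_left _ h')
        have := (ih v hvB hvD hvS).1 X (by
          intro x hx hxS
          rcases Finset.mem_insert.mp hxS with rfl | hxS
          · exact hvDX (Finset.mem_union_right _ hx)
          · exact hX x hx hxS)
        exact this
      · -- board is full w.r.t. D ∪ X; the original free vertex must be in X
        push_neg at hfree
        obtain ⟨u, huB, huD, huS⟩ := hex
        have huX : u ∈ X := by
          rcases Finset.mem_union.mp (by
            by_contra hc
            exact huS (hfree u huB hc)) with h' | h'
          · exact absurd h' huD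
          · exact h'
        have h2 := (ih u huB huD huS).1 (X.erase u) (fun x hx hxS => by
          rcases Finset.mem_insert.mp hxS with rfl | hxS
          · exact (Finset.mem_erase.mp hx).1 rfl
          · exact hX x (Finset.erase_subset _ _ hx) hxS)
        have hfull : ∀ v ∈ B, v ∈ D ∪ X.erase u ∨ v ∈ insert u S := by
          intro v hvB
          by_cases hvu : v = u
          · exact Or.inr (Finset.mem_insert.mpr (Or.inl hvu))
          · by_cases hvS : v ∈ S
            · exact Or.inr (Finset.mem_insert_of_mem hvS)
            · rcases Finset.mem_union.mp (by
                by_contra hc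
                exact hvS (hfree v hvB hc)) with h' | h'
              · exact Or.inl (Finset.mem_union_left _ h')
              · exact Or.inl (Finset.mem_union_right _ (Finset.mem_erase.mpr ⟨hvu, h'⟩))
        have hdom := h2.fullTrue hfull
        refine .win _ _ _ _ (hdom.mono ?_)
        intro w hw
        rcases Finset.mem_union.mp hw with h' | h'
        · exact Finset.mem_union_left _ h'
        · exact Finset.mem_union_right _ (Finset.erase_subset _ _ h')
    refine ⟨main, ?_⟩
    intro _ X hX
    by_cases hfree : ∃ w ∈ B, w ∉ D ∪ X ∧ w ∉ S
    · obtain ⟨w, hwB, hwDX, hwS⟩ := hfree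
      refine .dmove _ _ _ w hwB hwDX hwS ?_
      have := main (insert w X) (fun x hx => by
        rcases Finset.mem_insert.mp hx with rfl | hx
        · exact hwS
        · exact hX x hx)
      have heq : D ∪ insert w X = insert w (D ∪ X) := by
        rw [Finset.union_insert]
      rwa [heq] at this
    · -- full board: extract domination as above
      push_neg at hfree
      obtain ⟨u, huB, huD, huS⟩ := hex
      have huX : u ∈ X := by
        rcases Finset.mem_union.mp (by
          by_contra hc
          exact huS (hfree u huB hc)) with h' | h'
        · exact absurd h' huD
        · exact h'
      have h2 := (ih u huB huD huS).1 (X.erase u) (fun x hx hxS => by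
        rcases Finset.mem_insert.mp hxS with rfl | hxS
        · exact (Finset.mem_erase.mp hx).1 rfl
        · exact hX x (Finset.erase_subset _ _ hx) hxS)
      have hfull : ∀ v ∈ B, v ∈ D ∪ X.erase u ∨ v ∈ insert u S := by
        intro v hvB
        by_cases hvu : v = u
        · exact Or.inr (Finset.mem_insert.mpr (Or.inl hvu))
        · by_cases hvS : v ∈ S
          · exact Or.inr (Finset.mem_insert_of_mem hvS)
          · rcases Finset.mem_union.mp (by
              by_contra hc
              exact hvS (hfree v hvB hc)) with h' | h'
            · exact Or.inl (Finset.mem_union_left _ h')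
            · exact Or.inl (Finset.mem_union_right _ (Finset.mem_erase.mpr ⟨hvu, h'⟩))
      have hdom := h2.fullTrue hfull
      refine .win _ _ _ _ (hdom.mono ?_)
      intro w hw
      rcases Finset.mem_union.mp hw with h' | h'
      · exact Finset.mem_union_left _ h'
      · exact Finset.mem_union_right _ (Finset.erase_subset _ _ h')

theorem RWin.extra {t k D S} (h : RWin G B A t k D S) (X : Finset V)
    (hX : ∀ x ∈ X, x ∉ S) : RWin G B A t k (D ∪ X) S :=
  h.phi.1 X hX

theorem RWin.skip {k D S} (h : RWin G B A false k D S) : RWin G B A true (k+1) D S := by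
  have := h.phi.2 rfl ∅ (by simp)
  rwa [Finset.union_empty] at this


/-- Strip a pendant pair `x,y` with `x ∈ D`, `y ∈ S` off the board. -/
theorem RWin.stripXY {s : Finset V} {x y : V}
    (hleaf : ∀ w ∈ s, G.Adj x w → w = y) :
    ∀ {t k D S}, RWin G s A t k D S → x ∈ D → y ∈ S → D ⊆ s → S ⊆ s → (∀ u ∈ D, u ∉ S) →
    RWin G ((s.erase x).erase y) A t k (D.erase x) (S.erase y) := by
  intro t k D S h
  induction h with
  | win t k D S hd =>
    intro hxD hyS hDs hSs hdisj
    refine .win _ _ _ _ ?_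
    intro v hv hvA
    have hvy : v ≠ y := (Finset.mem_erase.mp hv).1
    have hvx : v ≠ x := (Finset.mem_erase.mp (Finset.mem_erase.mp hv).2).1
    have hvs : v ∈ s := (Finset.mem_erase.mp (Finset.mem_erase.mp hv).2).2
    obtain ⟨u, huD, hcov⟩ := hd v hvs hvA
    refine ⟨u, Finset.mem_erase.mpr ⟨?_, huD⟩, hcov⟩
    rintro rfl
    rcases hcov with rfl | hadj
    · exact hvx rfl
    · exact hvy (hleaf v hvs hadj)
  | dmove k D S v hvB hvD hvS hchild ih =>
    intro hxD hyS hDs hSs hdisj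
    have hvx : v ≠ x := fun h => hvD (h ▸ hxD)
    have hvy : v ≠ y := fun h => hvS (h ▸ hyS)
    refine .dmove _ _ _ v ?_ ?_ ?_ ?_
    · exact Finset.mem_erase.mpr ⟨hvy, Finset.mem_erase.mpr ⟨hvx, hvB⟩⟩
    · exact fun h => hvD (Finset.erase_subset _ _ h)
    · exact fun h => hvS (Finset.erase_subset _ _ h)
    · have := ih (Finset.mem_insert_of_mem hxD) hyS
        (Finset.insert_subset hvB hDs) hSs (by
          intro u hu
          rcases Finset.mem_insert.mp hu with rfl | hu
          · exact hvS
          · exact hdisj u hu)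
      rwa [Finset.erase_insert_of_ne hvx] at this
  | smove k D S hex hch ih =>
    intro hxD hyS hDs hSs hdisj
    obtain ⟨w, hwB, hwD, hwS⟩ := hex
    have hwx : w ≠ x := fun h => hwD (h ▸ hxD)
    have hwy : w ≠ y := fun h => hwS (h ▸ hyS)
    refine .smove _ _ _ ⟨w, Finset.mem_erase.mpr ⟨hwy, Finset.mem_erase.mpr ⟨hwx, hwB⟩⟩,
      fun h => hwD (Finset.erase_subset _ _ h), fun h => hwS (Finset.erase_subset _ _ h)⟩ ?_
    intro v hv hvD hvS
    have hvy : v ≠ y := (Finset.mem_erase.mp hv).1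
    have hvx : v ≠ x := (Finset.mem_erase.mp (Finset.mem_erase.mp hv).2).1
    have hvs : v ∈ s := (Finset.mem_erase.mp (Finset.mem_erase.mp hv).2).2
    have hvD' : v ∉ D := fun h => hvD (Finset.mem_erase.mpr ⟨hvx, h⟩)
    have hvS' : v ∉ S := fun h => hvS (Finset.mem_erase.mpr ⟨hvy, h⟩)
    have := ih v hvs hvD' hvS' hxD (Finset.mem_insert_of_mem hyS) hDs
      (Finset.insert_subset hvs hSs) (by
        intro u hu huS
        rcases Finset.mem_insert.mp huS with rfl | huS
        · exact hvD' hu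
        · exact hdisj u hu huS)
    rwa [Finset.erase_insert_of_ne hvy] at this

/-- Remove an owned vertex from the board, exempting everything it covered. -/
theorem RWin.stripOwned {y : V} :
    ∀ {t k D S}, RWin G B A t k D S → y ∈ D →
    RWin G (B.erase y) (A ∪ {w | G.Adj y w}) t k (D.erase y) S := by
  intro t k D S h
  induction h with
  | win t k D S hd =>
    intro hyD
    refine .win _ _ _ _ ?_
    intro v hv hvA
    have hvy : v ≠ y := (Finset.mem_erase.mp hv).1
    have hvB : v ∈ B := (Finset.mem_erase.mp hv).2
    have hvA' : v ∉ A := fun h => hvA (Set.mem_union_left _ h)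
    have hvAdj : ¬ G.Adj y v := fun h => hvA (Set.mem_union_right _ h)
    obtain ⟨u, huD, hcov⟩ := hd v hvB hvA'
    refine ⟨u, Finset.mem_erase.mpr ⟨?_, huD⟩, hcov⟩
    rintro rfl
    rcases hcov with rfl | hadj
    · exact hvy rfl
    · exact hvAdj hadj
  | dmove k D S v hvB hvD hvS hchild ih =>
    intro hyD
    have hvy : v ≠ y := fun h => hvD (h ▸ hyD)
    refine .dmove _ _ _ v (Finset.mem_erase.mpr ⟨hvy, hvB⟩)
      (fun h => hvD (Finset.erase_subset _ _ h)) hvS ?_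
    have := ih (Finset.mem_insert_of_mem hyD)
    rwa [Finset.erase_insert_of_ne hvy] at this
  | smove k D S hex hch ih =>
    intro hyD
    obtain ⟨w, hwB, hwD, hwS⟩ := hex
    have hwy : w ≠ y := fun h => hwD (h ▸ hyD)
    refine .smove _ _ _ ⟨w, Finset.mem_erase.mpr ⟨hwy, hwB⟩,
      fun h => hwD (Finset.erase_subset _ _ h), hwS⟩ ?_
    intro v hv hvD hvS
    have hvy : v ≠ y := (Finset.mem_erase.mp hv).1
    have hvB : v ∈ B := (Finset.mem_erase.mp hv).2
    exact ih v hvB (fun h => hvD (Finset.mem_erase.mpr ⟨hvy, h⟩)) hvS hyD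

/-- Remove an owned dead vertex `x` (everything it could cover is exempt or covered). -/
theorem RWin.dvOwned {x : V} :
    ∀ {t k D S}, RWin G B A t k D S → x ∈ D →
    (∀ w ∈ B, G.Adj x w → (w ∈ A ∨ ∃ u ∈ D.erase x, u = w ∨ G.Adj u w)) →
    RWin G (B.erase x) A t k (D.erase x) S := by
  intro t k D S h
  induction h with
  | win t k D S hd =>
    intro hxD hcond
    refine .win _ _ _ _ ?_
    intro v hv hvA
    have hvx : v ≠ x := (Finset.mem_erase.mp hv).1
    have hvB : v ∈ B := (Finset.mem_erase.mp hv).2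
    obtain ⟨u, huD, hcov⟩ := hd v hvB hvA
    by_cases hux : u = x
    · subst hux
      rcases hcov with rfl | hadj
      · exact absurd rfl hvx
      · rcases hcond v hvB hadj with h' | ⟨u', hu', hcov'⟩
        · exact absurd h' hvA
        · exact ⟨u', hu', hcov'⟩
    · exact ⟨u, Finset.mem_erase.mpr ⟨hux, huD⟩, hcov⟩
  | dmove k D S v hvB hvD hvS hchild ih =>
    intro hxD hcond
    have hvx : v ≠ x := fun h => hvD (h ▸ hxD)
    refine .dmove _ _ _ v (Finset.mem_erase.mpr ⟨hvx, hvB⟩)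
      (fun h => hvD (Finset.erase_subset _ _ h)) hvS ?_
    have := ih (Finset.mem_insert_of_mem hxD) (by
      intro w hwB hadj
      rcases hcond w hwB hadj with h' | ⟨u', hu', hcov'⟩
      · exact Or.inl h'
      · refine Or.inr ⟨u', ?_, hcov'⟩
        rw [Finset.erase_insert_of_ne hvx]
        exact Finset.mem_insert_of_mem hu')
    rwa [Finset.erase_insert_of_ne hvx] at this
  | smove k D S hex hch ih =>
    intro hxD hcond
    obtain ⟨w, hwB, hwD, hwS⟩ := hex
    have hwx : w ≠ x := fun h => hwD (h ▸ hxD)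
    refine .smove _ _ _ ⟨w, Finset.mem_erase.mpr ⟨hwx, hwB⟩,
      fun h => hwD (Finset.erase_subset _ _ h), hwS⟩ ?_
    intro v hv hvD hvS
    have hvx : v ≠ x := (Finset.mem_erase.mp hv).1
    have hvB : v ∈ B := (Finset.mem_erase.mp hv).2
    exact ih v hvB (fun h => hvD (Finset.mem_erase.mpr ⟨hvx, h⟩)) hvS hxD hcond

/-- Remove a free dead vertex from the board. -/
theorem RWin.dvFree {x : V} (hxB : x ∈ B) :
    ∀ {t k D S}, RWin G B A t k D S → x ∉ D → x ∉ S →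
    (∀ w ∈ B, G.Adj x w → (w ∈ A ∨ ∃ u ∈ D, u = w ∨ G.Adj u w)) →
    RWin G (B.erase x) A t k D S := by
  intro t k D S h
  induction h with
  | win t k D S hd =>
    intro _ _ _
    refine .win _ _ _ _ (fun v hv hvA => hd v (Finset.mem_erase.mp hv).2 hvA)
  | dmove k D S v hvB hvD hvS hchild ih =>
    intro hxD hxS hcond
    by_cases hvx : v = x
    · subst hvx
      have h1 := hchild.dvOwned (Finset.mem_insert_self _ _) (by
        intro w hwB hadj
        rcases hcond w hwB hadj with h' | ⟨u', hu', hcov'⟩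
        · exact Or.inl h'
        · refine Or.inr ⟨u', ?_, hcov'⟩
          rw [Finset.erase_insert hxD]
          exact hu')
      rw [Finset.erase_insert hxD] at h1
      exact h1.skip
    · refine .dmove _ _ _ v (Finset.mem_erase.mpr ⟨hvx, hvB⟩) hvD hvS ?_
      exact ih (fun h => hxD (by
          rcases Finset.mem_insert.mp h with h' | h'
          · exact absurd h'.symm hvx
          · exact absurd h' hxD))
        hxS (by
          intro w hwB hadj
          rcases hcond w hwB hadj with h' | ⟨u', hu', hcov'⟩
          · exact Or.inl h'
          · exact Or.inr ⟨u', Finset.mem_insert_of_mem hu', hcov'⟩)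
  | smove k D S hex hch ih =>
    intro hxD hxS hcond
    by_cases hfree : ∃ w ∈ B.erase x, w ∉ D ∧ w ∉ S
    · obtain ⟨w, hwB, hwD, hwS⟩ := hfree
      refine .smove _ _ _ ⟨w, hwB, hwD, hwS⟩ ?_
      intro v hv hvD hvS
      have hvx : v ≠ x := (Finset.mem_erase.mp hv).1
      exact ih v (Finset.mem_erase.mp hv).2 hvD hvS hxD
        (fun h => (Finset.mem_insert.mp h).elim (fun h' => hvx h'.symm) hxS) hcond
    · push_neg at hfree
      have h_x := hch x hxB hxD hxS
      have hdom := h_x.fullTrue (by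
        intro v hvB
        by_cases hvx : v = x
        · exact Or.inr (Finset.mem_insert.mpr (Or.inl hvx))
        · rcases em (v ∈ D) with h' | h'
          · exact Or.inl h'
          · exact Or.inr (Finset.mem_insert_of_mem
              (hfree v (Finset.mem_erase.mpr ⟨hvx, hvB⟩) h')))
      exact .win _ _ _ _ (fun v hv hvA => hdom v (Finset.mem_erase.mp hv).2 hvA)

end Basic

section Bridge

variable [Fintype V] [DecidableEq V] {G : SimpleGraph V} {A : Set V}


theorem ne_univ_iff' {W : Type*} [Fintype W] {s : Finset W} :
    s ≠ Finset.univ ↔ ∃ a, a ∉ s := by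
  constructor
  · intro h
    by_contra hc
    push_neg at hc
    exact h (Finset.eq_univ_iff_forall.mpr hc)
  · rintro ⟨a, ha⟩ rfl
    exact ha (Finset.mem_univ a)

theorem mbwin_iff_rwin_univ {t k D S} :
    MBWin G A t k D S ↔ RWin G Finset.univ A t k D S := by
  constructor
  · intro h
    induction h with
    | win t k D S hd => exact .win _ _ _ _ (fun v _ hvA => hd v hvA)
    | dmove k D S v hvD hvS _ ih => exact .dmove _ _ _ v (Finset.mem_univ v) hvD hvS ih
    | smove k D S hne hch ih =>
      obtain ⟨a, ha⟩ := ne_univ_iff'.mp hne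
      refine .smove _ _ _ ⟨a, Finset.mem_univ a, fun h => ha (Finset.mem_union_left _ h),
        fun h => ha (Finset.mem_union_right _ h)⟩ ?_
      exact fun v _ hvD hvS => ih v hvD hvS
  · intro h
    induction h with
    | win t k D S hd => exact .win _ _ _ _ (fun v hvA => hd v (Finset.mem_univ v) hvA)
    | dmove k D S v _ hvD hvS _ ih => exact .dmove _ _ _ v hvD hvS ih
    | smove k D S hex hch ih =>
      obtain ⟨w, _, hwD, hwS⟩ := hex
      refine .smove _ _ _ ?_ (fun v hvD hvS => ih v (Finset.mem_univ v) hvD hvS)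
      exact ne_univ_iff'.mpr
        ⟨w, fun h => (Finset.mem_union.mp h).elim hwD hwS⟩

section Induce

variable (s : Finset V)

noncomputable abbrev sEmb : ↥(↑s : Set V) ↪ V := Function.Embedding.subtype _

theorem mbwin_induce_to_rwin :
    ∀ {t k} {D S : Finset ↥(↑s : Set V)},
      MBWin (G.induce (↑s : Set V)) ∅ t k D S →
      RWin G s ∅ t k (D.map (sEmb s)) (S.map (sEmb s)) := by
  intro t k D S h
  induction h with
  | win t k D S hd =>
    refine .win _ _ _ _ ?_
    intro v hv _
    obtain ⟨u, huD, hcov⟩ := hd ⟨v, by exact_mod_cast hv⟩ (Set.notMem_empty _)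
    refine ⟨↑u, Finset.mem_map_of_mem _ huD, ?_⟩
    rcases hcov with rfl | hadj
    · exact Or.inl rfl
    · exact Or.inr (by exact_mod_cast hadj)
  | dmove k D S v hvD hvS _ ih =>
    refine .dmove _ _ _ ↑v (by exact_mod_cast v.2) ?_ ?_ ?_
    · intro h
      obtain ⟨v₀, hv₀, he⟩ := Finset.mem_map.mp h
      exact hvD (by rwa [show v₀ = v from Subtype.ext he] at hv₀)
    · intro h
      obtain ⟨v₀, hv₀, he⟩ := Finset.mem_map.mp h
      exact hvS (by rwa [show v₀ = v from Subtype.ext he] at hv₀)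
    · rwa [Finset.map_insert] at ih
  | smove k D S hne hch ih =>
    obtain ⟨a, ha⟩ := ne_univ_iff'.mp hne
    refine .smove _ _ _ ⟨↑a, by exact_mod_cast a.2, ?_, ?_⟩ ?_
    · intro h
      obtain ⟨v₀, hv₀, he⟩ := Finset.mem_map.mp h
      exact ha (Finset.mem_union_left _ (by rwa [show v₀ = a from Subtype.ext he] at hv₀))
    · intro h
      obtain ⟨v₀, hv₀, he⟩ := Finset.mem_map.mp h
      exact ha (Finset.mem_union_right _ (by rwa [show v₀ = a from Subtype.ext he] at hv₀))
    · intro v hvs hvD hvS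
      have h1 := ih ⟨v, by exact_mod_cast hvs⟩
        (fun h => hvD (Finset.mem_map_of_mem _ h))
        (fun h => hvS (Finset.mem_map_of_mem _ h))
      rwa [Finset.map_insert] at h1

theorem rwin_to_mbwin_induce :
    ∀ {t k D' S'}, RWin G s ∅ t k D' S' →
      ∀ (D S : Finset ↥(↑s : Set V)), D' = D.map (sEmb s) → S' = S.map (sEmb s) →
      MBWin (G.induce (↑s : Set V)) ∅ t k D S := by
  intro t k D' S' h
  induction h with
  | win t k D' S' hd =>
    rintro D S rfl rfl
    refine .win _ _ _ _ ?_
    intro v _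
    obtain ⟨u, huD, hcov⟩ := hd ↑v (by exact_mod_cast v.2) (Set.notMem_empty _)
    obtain ⟨u₀, hu₀, he⟩ := Finset.mem_map.mp huD
    refine ⟨u₀, hu₀, ?_⟩
    rcases hcov with he' | hadj
    · exact Or.inl (Subtype.ext (he.trans he'))
    · refine Or.inr ?_
      show G.Adj ((sEmb s) u₀) ↑v
      rw [he]
      exact hadj
  | dmove k D' S' v hvB hvD hvS _ ih =>
    rintro D S rfl rfl
    refine .dmove _ _ _ ⟨v, by exact_mod_cast hvB⟩ ?_ ?_ ?_
    · exact fun h => hvD (Finset.mem_map_of_mem _ h)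
    · exact fun h => hvS (Finset.mem_map_of_mem _ h)
    · exact ih (insert ⟨v, by exact_mod_cast hvB⟩ D) S (by rw [Finset.map_insert]; rfl) rfl
  | smove k D' S' hex hch ih =>
    rintro D S rfl rfl
    obtain ⟨w, hws, hwD, hwS⟩ := hex
    refine .smove _ _ _ ?_ ?_
    · intro hc
      have : (⟨w, by exact_mod_cast hws⟩ : ↥(↑s : Set V)) ∈ D ∪ S := by
        rw [hc]; exact Finset.mem_univ _
      rcases Finset.mem_union.mp this with h' | h'
      · exact hwD (Finset.mem_map_of_mem _ h')
      · exact hwS (Finset.mem_map_of_mem _ h')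
    · intro v hvD hvS
      exact ih ↑v (by exact_mod_cast v.2)
        (fun h => by
          obtain ⟨v₀, hv₀, he⟩ := Finset.mem_map.mp h
          exact hvD (by rwa [show v₀ = v from Subtype.ext he] at hv₀))
        (fun h => by
          obtain ⟨v₀, hv₀, he⟩ := Finset.mem_map.mp h
          exact hvS (by rwa [show v₀ = v from Subtype.ext he] at hv₀))
        D (insert v S) rfl (by rw [Finset.map_insert]; rfl)

end Induce

end Bridge


section Step

variable [DecidableEq V] {G : SimpleGraph V} {s : Finset V} {x y : V}

/-- Pendant-pair step lemma for the upper bound: Dominator can win on `s` with one more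
move than on `s` minus the pendant pair `x,y`. -/
theorem lup (hx : x ∈ s) (hy : y ∈ s) (hadj : G.Adj x y)
    (hleaf : ∀ w ∈ s, G.Adj x w → w = y) :
    ∀ {τ k} {D S : Finset V}, RWin G ((s.erase x).erase y) ∅ τ k D S →
      D ⊆ (s.erase x).erase y → S ⊆ (s.erase x).erase y →
      RWin G s ∅ τ (k+1) D S ∧
      (∀ a b, ((a = x ∧ b = y) ∨ (a = y ∧ b = x)) →
        RWin G s ∅ τ k (insert a D) (insert b S)) := by
  have hxy : x ≠ y := hadj.ne
  have hmem : ∀ v ∈ (s.erase x).erase y, v ∈ s ∧ v ≠ x ∧ v ≠ y := by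
    intro v hv
    exact ⟨(Finset.mem_erase.mp (Finset.mem_erase.mp hv).2).2,
      (Finset.mem_erase.mp (Finset.mem_erase.mp hv).2).1, (Finset.mem_erase.mp hv).1⟩
  have hxt : x ∉ (s.erase x).erase y := fun h => (hmem x h).2.1 rfl
  have hyt : y ∉ (s.erase x).erase y := fun h => (hmem y h).2.2 rfl
  have hcov : ∀ c, (c = x ∨ c = y) → ∀ v, (v = x ∨ v = y) → c = v ∨ G.Adj c v := by
    rintro c (rfl | rfl) v (rfl | rfl)
    · exact Or.inl rfl
    · exact Or.inr hadj
    · exact Or.inr hadj.symm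
    · exact Or.inl rfl
  have domext : ∀ (c : V) (D : Finset V), (c = x ∨ c = y) →
      RDom G ((s.erase x).erase y) ∅ D → RDom G s ∅ (insert c D) := by
    intro c D hc hd v hvs _
    by_cases hvx : v = x
    · exact ⟨c, Finset.mem_insert_self _ _, hcov c hc v (Or.inl hvx)⟩
    · by_cases hvy : v = y
      · exact ⟨c, Finset.mem_insert_self _ _, hcov c hc v (Or.inr hvy)⟩
      · obtain ⟨u, huD, h'⟩ := hd v
          (Finset.mem_erase.mpr ⟨hvy, Finset.mem_erase.mpr ⟨hvx, hvs⟩⟩) (Set.notMem_empty _)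
        exact ⟨u, Finset.mem_insert_of_mem huD, h'⟩
  intro τ k D S h
  induction h with
  | win τ k D S hd =>
    intro hDt hSt
    constructor
    · cases τ with
      | true =>
        refine .dmove _ _ _ x hx (fun h => hxt (hDt h)) (fun h => hxt (hSt h)) ?_
        exact .win _ _ _ _ (domext x D (Or.inl rfl) hd)
      | false =>
        refine .smove _ _ _ ⟨x, hx, fun h => hxt (hDt h), fun h => hxt (hSt h)⟩ ?_
        intro v hvs hvD hvS
        by_cases hvx : v = x
        · subst hvx
          refine .dmove _ _ _ y hy (fun h => hyt (hDt h)) ?_ ?_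
          · intro h
            rcases Finset.mem_insert.mp h with h' | h'
            · exact hxy h'.symm
            · exact hyt (hSt h')
          · exact .win _ _ _ _ (domext y D (Or.inr rfl) hd)
        · refine .dmove _ _ _ x hx (fun h => hxt (hDt h)) ?_ ?_
          · intro h
            rcases Finset.mem_insert.mp h with h' | h'
            · exact hvx h'.symm
            · exact hxt (hSt h')
          · exact .win _ _ _ _ (domext x D (Or.inl rfl) hd)
    · rintro a b hab
      have ha : a = x ∨ a = y := by rcases hab with ⟨rfl, _⟩ | ⟨rfl, _⟩ <;> simp
      exact .win _ _ _ _ (domext a D ha hd)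
  | dmove k D S v hvB hvD hvS hchild ih =>
    intro hDt hSt
    obtain ⟨hvs, hvx, hvy⟩ := hmem v hvB
    have ihh := ih (Finset.insert_subset hvB hDt) hSt
    constructor
    · exact .dmove _ _ _ v hvs hvD hvS ihh.1
    · rintro a b hab
      have hva : v ≠ a := by rcases hab with ⟨rfl, _⟩ | ⟨rfl, _⟩ <;> [exact hvx; exact hvy]
      have hvb : v ≠ b := by rcases hab with ⟨_, rfl⟩ | ⟨_, rfl⟩ <;> [exact hvy; exact hvx]
      refine .dmove _ _ _ v hvs ?_ ?_ ?_
      · intro h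
        rcases Finset.mem_insert.mp h with h' | h' <;> [exact hva h'; exact hvD h']
      · intro h
        rcases Finset.mem_insert.mp h with h' | h' <;> [exact hvb h'; exact hvS h']
      · have := ihh.2 a b hab
        rwa [Finset.insert_comm] at this
  | smove k D S hex hch ih =>
    intro hDt hSt
    obtain ⟨w, hwt, hwD, hwS⟩ := hex
    obtain ⟨hws, hwx, hwy⟩ := hmem w hwt
    have P3 : ∀ a b, ((a = x ∧ b = y) ∨ (a = y ∧ b = x)) →
        RWin G s ∅ false k (insert a D) (insert b S) := by
      rintro a b hab
      have hwa : w ≠ a := by rcases hab with ⟨rfl, _⟩ | ⟨rfl, _⟩ <;> [exact hwx; exact hwy]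
      have hwb : w ≠ b := by rcases hab with ⟨_, rfl⟩ | ⟨_, rfl⟩ <;> [exact hwy; exact hwx]
      refine .smove _ _ _ ⟨w, hws, ?_, ?_⟩ ?_
      · intro h
        rcases Finset.mem_insert.mp h with h' | h' <;> [exact hwa h'; exact hwD h']
      · intro h
        rcases Finset.mem_insert.mp h with h' | h' <;> [exact hwb h'; exact hwS h']
      · intro v hvs hvD' hvS'
        have hva : v ≠ a := fun h => hvD' (h ▸ Finset.mem_insert_self _ _)
        have hvb : v ≠ b := fun h => hvS' (h ▸ Finset.mem_insert_self _ _)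
        have hvx : v ≠ x := by rcases hab with ⟨rfl, rfl⟩ | ⟨rfl, rfl⟩ <;> [exact hva; exact hvb]
        have hvy : v ≠ y := by rcases hab with ⟨rfl, rfl⟩ | ⟨rfl, rfl⟩ <;> [exact hvb; exact hva]
        have hvt : v ∈ (s.erase x).erase y :=
          Finset.mem_erase.mpr ⟨hvy, Finset.mem_erase.mpr ⟨hvx, hvs⟩⟩
        have hvD : v ∉ D := fun h => hvD' (Finset.mem_insert_of_mem h)
        have hvS : v ∉ S := fun h => hvS' (Finset.mem_insert_of_mem h)
        have := (ih v hvt hvD hvS hDt (Finset.insert_subset hvt hSt)).2 a b hab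
        rwa [Finset.insert_comm] at this
    refine ⟨?_, P3⟩
    refine .smove _ _ _ ⟨w, hws, hwD, hwS⟩ ?_
    intro v hvs hvD hvS
    by_cases hvx : v = x
    · subst hvx
      refine .dmove _ _ _ y hy (fun h => hyt (hDt h)) ?_ (P3 y v (Or.inr ⟨rfl, rfl⟩))
      intro h
      rcases Finset.mem_insert.mp h with h' | h'
      · exact hxy h'.symm
      · exact hyt (hSt h')
    · by_cases hvy : v = y
      · subst hvy
        refine .dmove _ _ _ x hx (fun h => hxt (hDt h)) ?_ (P3 x v (Or.inl ⟨rfl, rfl⟩))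
        intro h
        rcases Finset.mem_insert.mp h with h' | h'
        · exact (hxy h').elim
        · exact hxt (hSt h')
      · have hvt : v ∈ (s.erase x).erase y :=
          Finset.mem_erase.mpr ⟨hvy, Finset.mem_erase.mpr ⟨hvx, hvs⟩⟩
        exact (ih v hvt hvD hvS hDt (Finset.insert_subset hvt hSt)).1

end Step

section Chain

variable [Fintype V] [DecidableEq V] {G : SimpleGraph V}

theorem upper_chain : ∀ {s r : Finset V}, Relation.ReflTransGen (PendantStep G) s r →
    ∃ n, s.card = r.card + 2*n ∧
      ∀ k, RWin G r ∅ true k ∅ ∅ → RWin G s ∅ true (k + n) ∅ ∅ := by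
  intro s r h
  induction h using Relation.ReflTransGen.head_induction_on with
  | refl => exact ⟨0, by ring_nf, fun k hk => by simpa using hk⟩
  | @head s s₁ step chain ih =>
    obtain ⟨n, hcard, hstep⟩ := ih
    rcases step with ⟨x, hx, y, hy, hadj, hleaf, ⟨z, hz, hzx, hyz, hyp⟩, ht⟩ |
      ⟨x, hx, y, hy, hadj, hseq, ht⟩
    · subst ht
      have hy' : y ∈ s.erase x := Finset.mem_erase.mpr ⟨hadj.ne', hy⟩
      have hc1 : ((s.erase x).erase y).card + 1 = (s.erase x).card :=
        Finset.card_erase_add_one hy'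
      have hc2 : (s.erase x).card + 1 = s.card := Finset.card_erase_add_one hx
      refine ⟨n+1, by omega, ?_⟩
      intro k hk
      have h2 := (lup hx hy hadj hleaf (hstep k hk)
        (Finset.empty_subset _) (Finset.empty_subset _)).1
      have he : k + (n+1) = (k+n)+1 := by ring
      rw [he]
      exact h2
    · subst ht
      subst hseq
      have hxy : x ≠ y := hadj.ne
      have hcs : ({x, y} : Finset V).card = 2 := Finset.card_pair hxy
      simp only [Finset.card_empty] at hcard
      refine ⟨1, by omega, ?_⟩
      intro k _
      refine .dmove _ _ _ x hx (Finset.notMem_empty _) (Finset.notMem_empty _)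
        (.win _ _ _ _ ?_)
      intro v hv _
      rcases Finset.mem_insert.mp hv with rfl | hv'
      · exact ⟨v, Finset.mem_insert_self _ _, Or.inl rfl⟩
      · rw [Finset.mem_singleton] at hv'
        subst hv'
        exact ⟨x, Finset.mem_insert_self _ _, Or.inr hadj⟩

end Chain


section Lower

variable [Fintype V] [DecidableEq V] {G : SimpleGraph V}

/-- The main lower-bound chain lemma. Along a chain of pendant-pair removals from `s`
down to `r` (of length `n`), we prove simultaneously: a bound for the Dominator-start
game, a tight bound for the Staller-start game, and a bound for the Staller-to-move game
in which one vertex `z` is regarded as already dominated. -/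
theorem lower_chain : ∀ {s r : Finset V}, Relation.ReflTransGen (PendantStep G) s r →
    ∃ n, s.card = r.card + 2*n ∧
      ((∀ κ, RWin G s ∅ true κ ∅ ∅ → ∃ β, RWin G r ∅ true β ∅ ∅ ∧ β + n ≤ κ + 1) ∧
       (∀ κ, RWin G s ∅ false κ ∅ ∅ → ∃ β, RWin G r ∅ false β ∅ ∅ ∧ β + n ≤ κ) ∧
       (∀ z ∈ s, ∀ κ, RWin G s {z} false κ ∅ ∅ →
          ∃ β, RWin G r ∅ true β ∅ ∅ ∧ β + n ≤ κ + 1)) := by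
  intro s r h
  induction h using Relation.ReflTransGen.head_induction_on with
  | refl =>
    refine ⟨0, by ring_nf, fun κ h => ⟨κ, h, by omega⟩, fun κ h => ⟨κ, h, by omega⟩, ?_⟩
    intro z hz κ h
    have h1 := h.extra {z} (by simp)
    rw [Finset.empty_union] at h1
    have h2 := h1.achange ∅ (by
      intro v hv hvA _
      rw [Set.mem_singleton_iff] at hvA
      exact ⟨z, Finset.mem_singleton_self z, Or.inl hvA.symm⟩)
    refine ⟨κ + 1, ?_, by omega⟩
    refine .dmove _ _ _ z hz (Finset.notMem_empty _) (Finset.notMem_empty _) ?_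
    rwa [Finset.insert_empty]
  | @head s s₁ step chain ih =>
    obtain ⟨n, hcard, FA₁, NE₁, NA₁⟩ := ih
    have noEmptyCover : ∀ {v : V}, (∃ u ∈ (∅ : Finset V), u = v ∨ G.Adj u v) → False := by
      rintro v ⟨u, hu, _⟩
      exact absurd hu (Finset.notMem_empty u)
    rcases step with ⟨x, hx, y, hy, hadj, hleaf, ⟨z₀, hz₀s, hz₀x, hyz₀, hyprop⟩, ht⟩ |
      ⟨x, hx, y, hy, hadj, hseq, ht⟩
    · -- main case: pendant pair (x, y) with support neighbour z₀
      subst ht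
      have hxy : x ≠ y := hadj.ne
      have hyx : y ≠ x := hadj.ne'
      have hyz₀ne : y ≠ z₀ := hyz₀.ne
      have hz₀y : z₀ ≠ y := hyz₀.ne'
      have hxz₀ : x ≠ z₀ := fun h => hz₀x h.symm
      have tmem : ∀ {v}, v ∈ s → v ≠ x → v ≠ y → v ∈ (s.erase x).erase y := by
        intro v hv h1 h2
        exact Finset.mem_erase.mpr ⟨h2, Finset.mem_erase.mpr ⟨h1, hv⟩⟩
      have tmem' : ∀ {v}, v ∈ (s.erase x).erase y → v ∈ s ∧ v ≠ x ∧ v ≠ y := by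
        intro v hv
        exact ⟨(Finset.mem_erase.mp (Finset.mem_erase.mp hv).2).2,
          (Finset.mem_erase.mp (Finset.mem_erase.mp hv).2).1, (Finset.mem_erase.mp hv).1⟩
      have hz₀t : z₀ ∈ (s.erase x).erase y := tmem hz₀s hz₀x hz₀y
      have cxcov : ∀ u ∈ s, (u = x ∨ G.Adj u x) → u = x ∨ u = y := by
        intro u hu h
        exact h.elim Or.inl (fun ha => Or.inr (hleaf u hu ha.symm))
      have cycov : ∀ u ∈ s, (u = y ∨ G.Adj u y) → u = y ∨ u = x ∨ u = z₀ := by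
        intro u hu h
        exact h.elim Or.inl (fun ha => Or.inr (hyprop u hu ha.symm))
      have hy' : y ∈ s.erase x := Finset.mem_erase.mpr ⟨hyx, hy⟩
      have hc1 : ((s.erase x).erase y).card + 1 = (s.erase x).card :=
        Finset.card_erase_add_one hy'
      have hc2 : (s.erase x).card + 1 = s.card := Finset.card_erase_add_one hx
      -- reusable win-node contradictions
      have hXuncov : ∀ {A : Set V} {E : Finset V}, x ∉ A →
          (∀ w ∈ E, w ∈ s ∧ w ≠ x ∧ w ≠ y) → RDom G s A E → False := by
        intro A E hxA hE hd
        obtain ⟨w, hw, hcov⟩ := hd x hx hxA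
        obtain ⟨hws, hwx, hwy⟩ := hE w hw
        rcases cxcov w hws hcov with h' | h' <;> [exact hwx h'; exact hwy h']
      have hYuncov : ∀ {A : Set V} {E : Finset V}, y ∉ A →
          (∀ w ∈ E, w ∈ s ∧ w ≠ y ∧ w ≠ x ∧ w ≠ z₀) → RDom G s A E → False := by
        intro A E hyA hE hd
        obtain ⟨w, hw, hcov⟩ := hd y hy hyA
        obtain ⟨hws, hwy, hwx, hwz₀⟩ := hE w hw
        rcases cycov w hws hcov with h' | h' | h'
        · exact hwy h'
        · exact hwx h'
        · exact hwz₀ h'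
      have emptyE : ∀ (P : V → Prop), ∀ w ∈ (∅ : Finset V), P w := by
        intro P w hw
        exact absurd hw (Finset.notMem_empty w)
      refine ⟨n + 1, by omega, ?_, ?_, ?_⟩
      · -- (FA) Dominator-start statement
        intro κ h
        cases h with
        | win _ _ _ _ hd => exact (noEmptyCover (hd x hx (Set.notMem_empty _))).elim
        | dmove κ' _ _ v₀ hv₀s hv₀D hv₀S hC =>
          simp only [Finset.insert_empty] at hC
          by_cases hv₀y : v₀ = y
          · -- Dominator opened with y: pass to the z₀-exempt game on the smaller board
            rw [hv₀y] at hC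
            have h1 := RWin.dvFree hx hC
              (by rw [Finset.mem_singleton]; exact hxy) (Finset.notMem_empty _) (by
                intro w hw hadj'
                exact Or.inr ⟨y, Finset.mem_singleton_self _, Or.inl (hleaf w hw hadj').symm⟩)
            have h2 := h1.stripOwned (Finset.mem_singleton_self y)
            rw [Finset.erase_singleton] at h2
            have h3 := h2.achange {z₀} (by
              intro v hv hvA hvz
              obtain ⟨hvs, hvx, hvy⟩ := tmem' hv
              rcases hvA with h' | h'
              · exact absurd h' (Set.notMem_empty v)
              · rcases hyprop v hvs h' with rfl | rfl
                · exact absurd rfl hvx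
                · exact absurd rfl hvz)
            obtain ⟨β, hβ, hle⟩ := NA₁ z₀ hz₀t κ' h3
            exact ⟨β, hβ, by omega⟩
          · -- Staller steals y
            have hsingle : RDom G s (∅ : Set V) {v₀} → False := by
              intro hd
              obtain ⟨u, hu, hcov⟩ := hd x hx (Set.notMem_empty _)
              rw [Finset.mem_singleton] at hu
              have hcov' : v₀ = x ∨ G.Adj v₀ x := hu ▸ hcov
              rcases cxcov v₀ hv₀s hcov' with h1 | h1
              · obtain ⟨u', hu', hcov2⟩ := hd z₀ hz₀s (Set.notMem_empty _)
                rw [Finset.mem_singleton] at hu'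
                have hcov2' : v₀ = z₀ ∨ G.Adj v₀ z₀ := hu' ▸ hcov2
                rcases hcov2' with h2 | h2
                · exact hz₀x (h2.symm.trans h1)
                · rw [h1] at h2
                  exact hz₀y (hleaf z₀ hz₀s h2)
              · exact hv₀y h1
            cases hC with
            | win _ _ _ _ hd => exact (hsingle hd).elim
            | smove _ _ _ hex hch =>
              have hCy := hch y hy
                (by rw [Finset.mem_singleton]; exact fun h => hv₀y h.symm)
                (Finset.notMem_empty _)
              simp only [Finset.insert_empty] at hCy
              cases hCy with
              | win _ _ _ _ hd => exact (hsingle hd).elim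
              | dmove κ₁ _ _ u hus huD huS hC2 =>
                rw [Finset.mem_singleton] at huD
                have huy : u ≠ y := by
                  intro h'
                  exact huS (by rw [h']; exact Finset.mem_singleton_self _)
                by_cases hux : u = x
                · -- forced reply x; the spare stone v₀ survives onto the smaller board
                  rw [hux] at hC2
                  have hv₀x : v₀ ≠ x := fun h' => huD (hux.trans h'.symm)
                  have h1 := RWin.stripXY hleaf hC2 (Finset.mem_insert_self _ _)
                    (Finset.mem_singleton_self _)
                    (Finset.insert_subset hx (Finset.singleton_subset_iff.mpr hv₀s))
                    (Finset.singleton_subset_iff.mpr hy) (by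
                      intro w hw hwS
                      rw [Finset.mem_singleton] at hwS
                      rcases Finset.mem_insert.mp hw with h' | h'
                      · exact hxy (h'.symm.trans hwS)
                      · rw [Finset.mem_singleton] at h'
                        exact hv₀y (h'.symm.trans hwS))
                  rw [Finset.erase_insert
                    (by rw [Finset.mem_singleton]; exact fun h' => hv₀x h'.symm),
                    Finset.erase_singleton] at h1
                  have hv₀t : v₀ ∈ (s.erase x).erase y := tmem hv₀s hv₀x hv₀y
                  have h2 : RWin G ((s.erase x).erase y) ∅ true (κ₁+1) ∅ ∅ := by
                    refine .dmove _ _ _ v₀ hv₀t (Finset.notMem_empty _)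
                      (Finset.notMem_empty _) ?_
                    rwa [Finset.insert_empty]
                  obtain ⟨β, hβ, hle⟩ := FA₁ (κ₁+1) h2
                  exact ⟨β, hβ, by omega⟩
                · by_cases hv₀x : v₀ = x
                  · -- the stone was on x; reply u survives onto the smaller board
                    rw [hv₀x] at hC2
                    have h1 := RWin.stripXY hleaf hC2
                      (Finset.mem_insert_of_mem (Finset.mem_singleton_self _))
                      (Finset.mem_singleton_self _)
                      (Finset.insert_subset hus (Finset.singleton_subset_iff.mpr hx))
                      (Finset.singleton_subset_iff.mpr hy) (by
                        intro w hw hwS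
                        rw [Finset.mem_singleton] at hwS
                        rcases Finset.mem_insert.mp hw with h' | h'
                        · exact huy (h'.symm.trans hwS)
                        · rw [Finset.mem_singleton] at h'
                          exact hxy (h'.symm.trans hwS))
                    rw [Finset.erase_insert_of_ne hux, Finset.erase_singleton,
                      Finset.insert_empty, Finset.erase_singleton] at h1
                    have hut : u ∈ (s.erase x).erase y := tmem hus hux huy
                    have h2 : RWin G ((s.erase x).erase y) ∅ true (κ₁+1) ∅ ∅ := by
                      refine .dmove _ _ _ u hut (Finset.notMem_empty _)
                        (Finset.notMem_empty _) ?_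
                      rwa [Finset.insert_empty]
                    obtain ⟨β, hβ, hle⟩ := FA₁ (κ₁+1) h2
                    exact ⟨β, hβ, by omega⟩
                  · -- neither stone is on the pair: Staller takes x and wins
                    have hEcond : ∀ w ∈ insert u ({v₀} : Finset V), w ∈ s ∧ w ≠ x ∧ w ≠ y := by
                      intro w hw
                      rcases Finset.mem_insert.mp hw with h' | h'
                      · exact h' ▸ ⟨hus, hux, huy⟩
                      · rw [Finset.mem_singleton] at h'
                        exact h' ▸ ⟨hv₀s, hv₀x, hv₀y⟩
                    cases hC2 with
                    | win _ _ _ _ hd =>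
                      exact (hXuncov (Set.notMem_empty _) hEcond hd).elim
                    | smove _ _ _ hex2 hch2 =>
                      have h3 := hch2 x hx (by
                          intro hc
                          rcases Finset.mem_insert.mp hc with h' | h'
                          · exact hux h'.symm
                          · rw [Finset.mem_singleton] at h'
                            exact hv₀x h'.symm)
                        (by rw [Finset.mem_singleton]; exact hxy)
                      refine (h3.noWin hx (Set.notMem_empty x) ?_ ?_ ?_).elim
                      · intro w hws hcov
                        rcases cxcov w hws hcov with rfl | rfl
                        · exact Finset.mem_insert_self _ _
                        · exact Finset.mem_insert_of_mem (Finset.mem_singleton_self _)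
                      · exact Finset.insert_subset hus (Finset.singleton_subset_iff.mpr hv₀s)
                      · intro w hw hwS
                        obtain ⟨-, hwx, hwy⟩ := hEcond w hw
                        rcases Finset.mem_insert.mp hwS with h' | h'
                        · exact hwx h'
                        · rw [Finset.mem_singleton] at h'
                          exact hwy h'
      · -- (NE) Staller-start statement
        intro κ h
        cases h with
        | win _ _ _ _ hd => exact (noEmptyCover (hd x hx (Set.notMem_empty _))).elim
        | smove _ _ _ hex hch =>
          have hCy := hch y hy (Finset.notMem_empty _) (Finset.notMem_empty _)
          simp only [Finset.insert_empty] at hCy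
          cases hCy with
          | win _ _ _ _ hd => exact (noEmptyCover (hd x hx (Set.notMem_empty _))).elim
          | dmove κ₁ _ _ u hus huD huS hC2 =>
            simp only [Finset.insert_empty] at hC2
            have huy : u ≠ y := by
              intro h'
              exact huS (by rw [h']; exact Finset.mem_singleton_self _)
            by_cases hux : u = x
            · rw [hux] at hC2
              have h1 := RWin.stripXY hleaf hC2 (Finset.mem_singleton_self _)
                (Finset.mem_singleton_self _) (Finset.singleton_subset_iff.mpr hx)
                (Finset.singleton_subset_iff.mpr hy) (by
                  intro w hw hwS
                  rw [Finset.mem_singleton] at hw hwS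
                  exact hxy (hw.symm.trans hwS))
              rw [Finset.erase_singleton, Finset.erase_singleton] at h1
              obtain ⟨β, hβ, hle⟩ := NE₁ κ₁ h1
              exact ⟨β, hβ, by omega⟩
            · cases hC2 with
              | win _ _ _ _ hd =>
                refine (hXuncov (Set.notMem_empty _) ?_ hd).elim
                intro w hw
                rw [Finset.mem_singleton] at hw
                exact hw ▸ ⟨hus, hux, huy⟩
              | smove _ _ _ hex2 hch2 =>
                have h3 := hch2 x hx
                  (by rw [Finset.mem_singleton]; exact fun h' => hux h'.symm)
                  (by rw [Finset.mem_singleton]; exact hxy)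
                refine (h3.noWin hx (Set.notMem_empty x) ?_
                  (Finset.singleton_subset_iff.mpr hus) ?_).elim
                · intro w hws hcov
                  rcases cxcov w hws hcov with rfl | rfl
                  · exact Finset.mem_insert_self _ _
                  · exact Finset.mem_insert_of_mem (Finset.mem_singleton_self _)
                · intro w hw hwS
                  rw [Finset.mem_singleton] at hw
                  rcases Finset.mem_insert.mp hwS with h' | h'
                  · exact hux (hw.symm.trans h')
                  · rw [Finset.mem_singleton] at h'
                    exact huy (hw.symm.trans h')
      · -- (NA) the z-exempt, Staller-to-move statement
        intro z hz κ h
        by_cases hzx : z = x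
        · -- the exempt vertex is the pendant leaf: Staller attacks z₀ first
          rw [hzx] at h
          have hyA : y ∉ ({x} : Set V) := fun h' => hyx (Set.mem_singleton_iff.mp h')
          have hz₀A : z₀ ∉ ({x} : Set V) := fun h' => hz₀x (Set.mem_singleton_iff.mp h')
          cases h with
          | win _ _ _ _ hd => exact (hYuncov hyA (emptyE _) hd).elim
          | smove _ _ _ hex hch =>
            have hCz := hch z₀ hz₀s (Finset.notMem_empty _) (Finset.notMem_empty _)
            simp only [Finset.insert_empty] at hCz
            cases hCz with
            | win _ _ _ _ hd => exact (hYuncov hyA (emptyE _) hd).elim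
            | dmove κ₁ _ _ u hus huD huS hC2 =>
              simp only [Finset.insert_empty] at hC2
              have huz₀ : u ≠ z₀ := fun h' =>
                huS (by rw [h']; exact Finset.mem_singleton_self _)
              by_cases huy : u = y
              · -- Dominator used the discount; absorb it via the z₀-exempt smaller game
                rw [huy] at hC2
                have h1 := RWin.dvFree hx hC2
                  (by rw [Finset.mem_singleton]; exact hxy)
                  (by rw [Finset.mem_singleton]; exact hxz₀) (by
                    intro w hw hadj'
                    exact Or.inr ⟨y, Finset.mem_singleton_self _,
                      Or.inl (hleaf w hw hadj').symm⟩)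
                have h2 := h1.stripOwned (Finset.mem_singleton_self y)
                rw [Finset.erase_singleton] at h2
                have h3 := h2.achange {z₀} (by
                  intro v hv hvA hvz
                  obtain ⟨hvs, hvx, hvy⟩ := tmem' hv
                  rcases hvA with h' | h'
                  · exact absurd (Set.mem_singleton_iff.mp h') hvx
                  · rcases hyprop v hvs h' with rfl | rfl
                    · exact absurd rfl hvx
                    · exact absurd rfl hvz)
                have h4 := h3.sremove ∅ (Finset.empty_subset _)
                obtain ⟨β, hβ, hle⟩ := NA₁ z₀ hz₀t κ₁ h4
                exact ⟨β, hβ, by omega⟩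
              · by_cases hux : u = x
                · -- reply on the exempt leaf: Staller answers y, forcing a board reply
                  rw [hux] at hC2
                  have hZx : RDom G s ({x} : Set V) {x} → False := by
                    intro hd
                    obtain ⟨w, hw, hcov⟩ := hd z₀ hz₀s hz₀A
                    rw [Finset.mem_singleton] at hw
                    rcases (hw ▸ hcov) with h' | h'
                    · exact hz₀x h'.symm
                    · exact hz₀y (hleaf z₀ hz₀s h')
                  cases hC2 with
                  | win _ _ _ _ hd => exact (hZx hd).elim
                  | smove _ _ _ hex2 hch2 =>
                    have h3 := hch2 y hy (by rw [Finset.mem_singleton]; exact hyx)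
                      (by rw [Finset.mem_singleton]; exact hyz₀ne)
                    cases h3 with
                    | win _ _ _ _ hd => exact (hZx hd).elim
                    | dmove κ₂ _ _ u₂ hu₂s hu₂D hu₂S hC3 =>
                      have hu₂x : u₂ ≠ x := fun h' =>
                        hu₂D (by rw [h']; exact Finset.mem_singleton_self _)
                      have hu₂y : u₂ ≠ y := fun h' =>
                        hu₂S (by rw [h']; exact Finset.mem_insert_self _ _)
                      have hu₂z₀ : u₂ ≠ z₀ := fun h' => hu₂S (by
                        rw [h']
                        exact Finset.mem_insert_of_mem (Finset.mem_singleton_self _))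
                      have h1 := RWin.stripXY hleaf hC3
                        (Finset.mem_insert_of_mem (Finset.mem_singleton_self _))
                        (Finset.mem_insert_self _ _)
                        (Finset.insert_subset hu₂s (Finset.singleton_subset_iff.mpr hx))
                        (Finset.insert_subset hy (Finset.singleton_subset_iff.mpr hz₀s))
                        (by
                          intro w hw hwS
                          rcases Finset.mem_insert.mp hw with h' | h'
                          · rcases Finset.mem_insert.mp hwS with h'' | h''
                            · exact hu₂y (h'.symm.trans h'')
                            · rw [Finset.mem_singleton] at h''
                              exact hu₂z₀ (h'.symm.trans h'')
                          · rw [Finset.mem_singleton] at h'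
                            rcases Finset.mem_insert.mp hwS with h'' | h''
                            · exact hxy (h'.symm.trans h'')
                            · rw [Finset.mem_singleton] at h''
                              exact hxz₀ (h'.symm.trans h''))
                      rw [Finset.erase_insert_of_ne hu₂x, Finset.erase_singleton,
                        Finset.insert_empty,
                        Finset.erase_insert
                          (by rw [Finset.mem_singleton]; exact hyz₀ne)] at h1
                      have h2 := h1.achange ∅ (by
                        intro v hv hvA _
                        exact absurd (Set.mem_singleton_iff.mp hvA) (tmem' hv).2.1)
                      have h3' := h2.sremove ∅ (Finset.empty_subset _)
                      have hu₂t : u₂ ∈ (s.erase x).erase y := tmem hu₂s hu₂x hu₂y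
                      have h4 : RWin G ((s.erase x).erase y) ∅ true (κ₂+1) ∅ ∅ := by
                        refine .dmove _ _ _ u₂ hu₂t (Finset.notMem_empty _)
                          (Finset.notMem_empty _) ?_
                        rwa [Finset.insert_empty]
                      obtain ⟨β, hβ, hle⟩ := FA₁ (κ₂+1) h4
                      exact ⟨β, hβ, by omega⟩
                · -- the reply is elsewhere: Staller answers y
                  have hucond : ∀ w ∈ ({u} : Finset V),
                      w ∈ s ∧ w ≠ y ∧ w ≠ x ∧ w ≠ z₀ := by
                    intro w hw
                    rw [Finset.mem_singleton] at hw
                    exact hw ▸ ⟨hus, huy, hux, huz₀⟩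
                  cases hC2 with
                  | win _ _ _ _ hd => exact (hYuncov hyA hucond hd).elim
                  | smove _ _ _ hex2 hch2 =>
                    have h3 := hch2 y hy
                      (by rw [Finset.mem_singleton]; exact fun h' => huy h'.symm)
                      (by rw [Finset.mem_singleton]; exact hyz₀ne)
                    cases h3 with
                    | win _ _ _ _ hd => exact (hYuncov hyA hucond hd).elim
                    | dmove κ₂ _ _ u₂ hu₂s hu₂D hu₂S hC3 =>
                      have hu₂u : u₂ ≠ u := fun h' =>
                        hu₂D (by rw [h']; exact Finset.mem_singleton_self _)
                      have hu₂y : u₂ ≠ y := fun h' =>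
                        hu₂S (by rw [h']; exact Finset.mem_insert_self _ _)
                      have hu₂z₀ : u₂ ≠ z₀ := fun h' => hu₂S (by
                        rw [h']
                        exact Finset.mem_insert_of_mem (Finset.mem_singleton_self _))
                      by_cases hu₂x : u₂ = x
                      · -- the forced x-reply came; stone u survives
                        rw [hu₂x] at hC3
                        have h1 := RWin.stripXY hleaf hC3 (Finset.mem_insert_self _ _)
                          (Finset.mem_insert_self _ _)
                          (Finset.insert_subset hx (Finset.singleton_subset_iff.mpr hus))
                          (Finset.insert_subset hy
                            (Finset.singleton_subset_iff.mpr hz₀s)) (by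
                            intro w hw hwS
                            rcases Finset.mem_insert.mp hw with h' | h'
                            · rcases Finset.mem_insert.mp hwS with h'' | h''
                              · exact hxy (h'.symm.trans h'')
                              · rw [Finset.mem_singleton] at h''
                                exact hxz₀ (h'.symm.trans h'')
                            · rw [Finset.mem_singleton] at h'
                              rcases Finset.mem_insert.mp hwS with h'' | h''
                              · exact huy (h'.symm.trans h'')
                              · rw [Finset.mem_singleton] at h''
                                exact huz₀ (h'.symm.trans h''))
                        rw [Finset.erase_insert
                            (by rw [Finset.mem_singleton]; exact fun h' => hux h'.symm),
                          Finset.erase_insert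
                            (by rw [Finset.mem_singleton]; exact hyz₀ne)] at h1
                        have h2 := h1.achange ∅ (by
                          intro v hv hvA _
                          exact absurd (Set.mem_singleton_iff.mp hvA) (tmem' hv).2.1)
                        have h3' := h2.sremove ∅ (Finset.empty_subset _)
                        have hut : u ∈ (s.erase x).erase y := tmem hus hux huy
                        have h4 : RWin G ((s.erase x).erase y) ∅ true (κ₂+1) ∅ ∅ := by
                          refine .dmove _ _ _ u hut (Finset.notMem_empty _)
                            (Finset.notMem_empty _) ?_
                          rwa [Finset.insert_empty]
                        obtain ⟨β, hβ, hle⟩ := FA₁ (κ₂+1) h4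
                        exact ⟨β, hβ, by omega⟩
                      · -- no reply on the pair: Staller takes x, and y is dead
                        have hpaircond : ∀ w ∈ insert u₂ ({u} : Finset V),
                            w ∈ s ∧ w ≠ y ∧ w ≠ x ∧ w ≠ z₀ := by
                          intro w hw
                          rcases Finset.mem_insert.mp hw with h' | h'
                          · exact h' ▸ ⟨hu₂s, hu₂y, hu₂x, hu₂z₀⟩
                          · rw [Finset.mem_singleton] at h'
                            exact h' ▸ ⟨hus, huy, hux, huz₀⟩
                        cases hC3 with
                        | win _ _ _ _ hd => exact (hYuncov hyA hpaircond hd).elim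
                        | smove _ _ _ hex3 hch3 =>
                          have h4 := hch3 x hx (by
                              intro hc
                              rcases Finset.mem_insert.mp hc with h' | h'
                              · exact hu₂x h'.symm
                              · rw [Finset.mem_singleton] at h'
                                exact hux h'.symm)
                            (by
                              intro hc
                              rcases Finset.mem_insert.mp hc with h' | h'
                              · exact hxy h'
                              · rw [Finset.mem_singleton] at h'
                                exact hxz₀ h')
                          refine (h4.noWin hy hyA ?_ ?_ ?_).elim
                          · intro w hws hcov
                            rcases cycov w hws hcov with rfl | rfl | rfl
                            · exact Finset.mem_insert_of_mem (Finset.mem_insert_self _ _)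
                            · exact Finset.mem_insert_self _ _
                            · exact Finset.mem_insert_of_mem (Finset.mem_insert_of_mem
                                (Finset.mem_singleton_self _))
                          · exact Finset.insert_subset hu₂s
                              (Finset.singleton_subset_iff.mpr hus)
                          · intro w hw hwS
                            obtain ⟨-, hwy, hwx, hwz₀⟩ := hpaircond w hw
                            rcases Finset.mem_insert.mp hwS with h' | h'
                            · exact hwx h'
                            · rcases Finset.mem_insert.mp h' with h'' | h''
                              · exact hwy h''
                              · rw [Finset.mem_singleton] at h''
                                exact hwz₀ h''
        · -- the exempt vertex is not the leaf: Staller steals y as usual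
          have hxA : x ∉ ({z} : Set V) := fun h' => hzx (Set.mem_singleton_iff.mp h').symm
          cases h with
          | win _ _ _ _ hd => exact (hXuncov hxA (emptyE _) hd).elim
          | smove _ _ _ hex hch =>
            have hCy := hch y hy (Finset.notMem_empty _) (Finset.notMem_empty _)
            cases hCy with
            | win _ _ _ _ hd => exact (hXuncov hxA (emptyE _) hd).elim
            | dmove κ₁ _ _ u hus huD huS hC2 =>
              simp only [Finset.insert_empty] at hC2
              have huy : u ≠ y := fun h' =>
                huS (by rw [h']; exact Finset.mem_singleton_self _)
              by_cases hux : u = x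
              · rw [hux] at hC2
                have h1 := RWin.stripXY hleaf hC2 (Finset.mem_singleton_self _)
                  (Finset.mem_singleton_self _) (Finset.singleton_subset_iff.mpr hx)
                  (Finset.singleton_subset_iff.mpr hy) (by
                    intro w hw hwS
                    rw [Finset.mem_singleton] at hw hwS
                    exact hxy (hw.symm.trans hwS))
                rw [Finset.erase_singleton, Finset.erase_singleton] at h1
                by_cases hzy : z = y
                · rw [hzy] at h1
                  have h2 := h1.achange ∅ (by
                    intro v hv hvA _
                    exact absurd (Set.mem_singleton_iff.mp hvA) (tmem' hv).2.2)
                  obtain ⟨β, hβ, hle⟩ := NE₁ κ₁ h2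
                  exact ⟨β, hβ.stos, by omega⟩
                · have hzt : z ∈ (s.erase x).erase y := tmem hz hzx hzy
                  obtain ⟨β, hβ, hle⟩ := NA₁ z hzt κ₁ h1
                  exact ⟨β, hβ, by omega⟩
              · cases hC2 with
                | win _ _ _ _ hd =>
                  refine (hXuncov hxA ?_ hd).elim
                  intro w hw
                  rw [Finset.mem_singleton] at hw
                  exact hw ▸ ⟨hus, hux, huy⟩
                | smove _ _ _ hex2 hch2 =>
                  have h3 := hch2 x hx
                    (by rw [Finset.mem_singleton]; exact fun h' => hux h'.symm)
                    (by rw [Finset.mem_singleton]; exact hxy)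
                  refine (h3.noWin hx hxA ?_ (Finset.singleton_subset_iff.mpr hus) ?_).elim
                  · intro w hws hcov
                    rcases cxcov w hws hcov with rfl | rfl
                    · exact Finset.mem_insert_self _ _
                    · exact Finset.mem_insert_of_mem (Finset.mem_singleton_self _)
                  · intro w hw hwS
                    rw [Finset.mem_singleton] at hw
                    rcases Finset.mem_insert.mp hwS with h' | h'
                    · exact hux (hw.symm.trans h')
                    · rw [Finset.mem_singleton] at h'
                      exact huy (hw.symm.trans h')
    · -- final case: the whole remaining board is a single edge
      subst ht
      subst hseq
      have hxy : x ≠ y := hadj.ne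
      have hcs : ({x, y} : Finset V).card = 2 := Finset.card_pair hxy
      simp only [Finset.card_empty] at hcard
      have hr : r = ∅ := Finset.card_eq_zero.mp (by omega)
      subst hr
      have hwin : ∀ b k, RWin G (∅ : Finset V) ∅ b k ∅ ∅ :=
        fun b k => .win _ _ _ _ (fun v hv _ => absurd hv (Finset.notMem_empty v))
      refine ⟨1, by omega, ?_, ?_, ?_⟩
      · exact fun κ _ => ⟨0, hwin true 0, by omega⟩
      · intro κ h
        cases h with
        | win _ _ _ _ hd =>
          obtain ⟨u, hu, _⟩ := hd x hx (Set.notMem_empty _)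
          exact absurd hu (Finset.notMem_empty u)
        | smove _ _ _ hex hch =>
          have hCy := hch y hy (Finset.notMem_empty _) (Finset.notMem_empty _)
          simp only [Finset.insert_empty] at hCy
          cases hCy with
          | win _ _ _ _ hd =>
            obtain ⟨u, hu, _⟩ := hd x hx (Set.notMem_empty _)
            exact absurd hu (Finset.notMem_empty u)
          | dmove κ₁ _ _ u hus huD huS hC2 =>
            exact ⟨0, hwin false 0, by omega⟩
      · exact fun z hz κ _ => ⟨0, hwin true 0, by omega⟩

end Lower

/-- Let `G` be a finite simple graph, `R(G)` a residual graph of `G`, and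
`H = G − V(R(G))`.  Then `n(H)/2 + γ_MB(R(G)) − 1 ≤ γ_MB(G) ≤ n(H)/2 + γ_MB(R(G))`
(both bounds being `∞` when `γ_MB(R(G)) = ∞`). -/
theorem gammaMB_bounds_of_residual [Fintype V] [DecidableEq V] (G : SimpleGraph V)
    (s : Finset V) (hs : IsResidualSet G s) :
    (((Fintype.card V - s.card) / 2 : ℕ) : ℕ∞) + gammaMB (G.induce (↑s : Set V)) - 1 ≤
        gammaMB G ∧
      gammaMB G ≤
        (((Fintype.card V - s.card) / 2 : ℕ) : ℕ∞) + gammaMB (G.induce (↑s : Set V)) := by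
  obtain ⟨hchain, hirr⟩ := hs
  have hcardle : s.card ≤ Fintype.card V := by
    simpa using Finset.card_le_card (Finset.subset_univ s)
  constructor
  · -- lower bound
    obtain ⟨n, hcard, FA, -, -⟩ := lower_chain hchain
    rw [Finset.card_univ] at hcard
    have hn : (Fintype.card V - s.card) / 2 = n := by omega
    rw [hn]
    show _ ≤ gammaMBRes G ∅
    refine le_sInf ?_
    rintro b ⟨m, hm, rfl⟩
    have hm' : RWin G Finset.univ ∅ true m ∅ ∅ := mbwin_iff_rwin_univ.mp hm
    obtain ⟨β, hβ, hle⟩ := FA m hm'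
    have hmb : MBWin (G.induce (↑s : Set V)) ∅ true β ∅ ∅ :=
      rwin_to_mbwin_induce s hβ ∅ ∅ (Finset.map_empty _).symm (Finset.map_empty _).symm
    have hind : gammaMB (G.induce (↑s : Set V)) ≤ (β : ℕ∞) :=
      sInf_le (Set.mem_image_of_mem _ hmb)
    calc ((n : ℕ) : ℕ∞) + gammaMB (G.induce (↑s : Set V)) - 1
        ≤ ((n : ℕ) : ℕ∞) + (β : ℕ∞) - 1 :=
          tsub_le_tsub_right (add_le_add_right hind _) 1
      _ ≤ (m : ℕ∞) := by
          rw [tsub_le_iff_right]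
          have h2 : ((n + β : ℕ) : ℕ∞) ≤ ((m + 1 : ℕ) : ℕ∞) := Nat.cast_le.mpr (by omega)
          push_cast at h2
          calc ((n : ℕ) : ℕ∞) + (β : ℕ∞) ≤ (m : ℕ∞) + 1 := h2
            _ = (m : ℕ∞) + 1 := rfl
  · -- upper bound
    by_cases hemp : {m : ℕ | MBWin (G.induce (↑s : Set V)) ∅ true m ∅ ∅} = ∅
    · have htop : gammaMB (G.induce (↑s : Set V)) = ⊤ := by
        show gammaMBRes _ _ = ⊤
        unfold gammaMBRes
        rw [hemp]
        simp
      rw [htop, add_top]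
      exact le_top
    · obtain ⟨m, hm⟩ := Set.nonempty_iff_ne_empty.mpr hemp
      set m₀ := sInf {m : ℕ | MBWin (G.induce (↑s : Set V)) ∅ true m ∅ ∅} with hm₀def
      have hm₀ : MBWin (G.induce (↑s : Set V)) ∅ true m₀ ∅ ∅ := Nat.sInf_mem ⟨m, hm⟩
      have hr : RWin G s ∅ true m₀ ∅ ∅ := by
        have h3 := mbwin_induce_to_rwin s hm₀
        simpa using h3
      obtain ⟨n, hcard, hstep⟩ := upper_chain hchain
      rw [Finset.card_univ] at hcard
      have hn : (Fintype.card V - s.card) / 2 = n := by omega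
      rw [hn]
      have hG : MBWin G ∅ true (m₀ + n) ∅ ∅ := mbwin_iff_rwin_univ.mpr (hstep m₀ hr)
      have h1 : gammaMB G ≤ ((m₀ + n : ℕ) : ℕ∞) := sInf_le (Set.mem_image_of_mem _ hG)
      have h2 : ((m₀ : ℕ) : ℕ∞) ≤ gammaMB (G.induce (↑s : Set V)) := by
        refine le_sInf ?_
        rintro b ⟨k, hk, rfl⟩
        exact Nat.cast_le.mpr (Nat.sInf_le hk)
      calc gammaMB G ≤ ((m₀ + n : ℕ) : ℕ∞) := h1
        _ = ((n : ℕ) : ℕ∞) + ((m₀ : ℕ) : ℕ∞) := by push_cast; ring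
        _ ≤ ((n : ℕ) : ℕ∞) + gammaMB (G.induce (↑s : Set V)) := add_le_add_right h2 _
end

section
/- For every integer n ≥ 3, the cycle C_n satisfies γ_MB(C_n) = γ_MB'(C_n) = ⌊n/2⌋. -/
variable {V : Type*}

open Fin.NatCast Fin.CommRing

section Pairing

variable [Fintype V] [DecidableEq V] (G : SimpleGraph V) (P : Finset (V × V)) (D₀ : Finset V)

/-- pairs not yet hit by Dominator -/
def Unhit (D : Finset V) : Finset (V × V) := P.filter (fun p => p.1 ∉ D ∧ p.2 ∉ D)

structure PairSetup : Prop where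
  ne : ∀ p ∈ P, p.1 ≠ p.2
  disj : ∀ p ∈ P, ∀ q ∈ P, p ≠ q → p.1 ≠ q.1 ∧ p.1 ≠ q.2 ∧ p.2 ≠ q.1 ∧ p.2 ≠ q.2
  dom : ∀ D' : Finset V, D₀ ⊆ D' → (∀ p ∈ P, p.1 ∈ D' ∨ p.2 ∈ D') → Dominates G ∅ D'

def InvP (D S : Finset V) : Prop :=
  D₀ ⊆ D ∧ ∀ p ∈ P, (p.1 ∈ D ∨ p.2 ∈ D) ∨ (p.1 ∉ D ∧ p.2 ∉ D ∧ p.1 ∉ S ∧ p.2 ∉ S)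

variable {G P D₀}

lemma unhit_mem {p : V × V} {D : Finset V} :
    p ∈ Unhit P D ↔ p ∈ P ∧ p.1 ∉ D ∧ p.2 ∉ D := by
  simp [Unhit]

lemma pair_step (hs : PairSetup G P D₀) {D S : Finset V} {p : V × V} {w : V}
    (hInv : InvP P D₀ D S) (hp : p ∈ Unhit P D) (hw : w = p.1 ∨ w = p.2)
    (S' : Finset V)
    (hS' : ∀ q ∈ Unhit P D, q ≠ p → q.1 ∉ S' ∧ q.2 ∉ S') :
    InvP P D₀ (insert w D) S' ∧ Unhit P (insert w D) = (Unhit P D).erase p := by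
  obtain ⟨hpP, hp1, hp2⟩ := unhit_mem.mp hp
  have hwD : Unhit P (insert w D) = (Unhit P D).erase p := by
    ext q
    rw [Finset.mem_erase, unhit_mem, unhit_mem]
    constructor
    · rintro ⟨hqP, hq1, hq2⟩
      refine ⟨?_, hqP, fun h => hq1 (Finset.mem_insert_of_mem h),
        fun h => hq2 (Finset.mem_insert_of_mem h)⟩
      rintro rfl
      rcases hw with h | h
      · exact hq1 (h ▸ Finset.mem_insert_self w D)
      · exact hq2 (h ▸ Finset.mem_insert_self w D)
    · rintro ⟨hqp, hqP, hq1, hq2⟩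
      have hd := hs.disj p hpP q hqP (Ne.symm hqp)
      refine ⟨hqP, ?_, ?_⟩
      · rw [Finset.mem_insert]; rintro (rfl | h)
        · rcases hw with h | h
          · exact hd.1 h.symm
          · exact hd.2.2.1 h.symm
        · exact hq1 h
      · rw [Finset.mem_insert]; rintro (rfl | h)
        · rcases hw with h | h
          · exact hd.2.1 h.symm
          · exact hd.2.2.2 h.symm
        · exact hq2 h
  refine ⟨⟨hInv.1.trans (Finset.subset_insert w D), ?_⟩, hwD⟩
  intro q hqP
  by_cases hqp : q = p
  · subst hqp
    left
    rcases hw with h | h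
    · exact Or.inl (h ▸ Finset.mem_insert_self w D)
    · exact Or.inr (h ▸ Finset.mem_insert_self w D)
  · rcases hInv.2 q hqP with h | h
    · exact Or.inl (Or.imp (fun h => Finset.mem_insert_of_mem h)
        (fun h => Finset.mem_insert_of_mem h) h)
    · have hqU : q ∈ Unhit P D := unhit_mem.mpr ⟨hqP, h.1, h.2.1⟩
      have hq' : q ∈ Unhit P (insert w D) := hwD ▸ Finset.mem_erase.mpr ⟨hqp, hqU⟩
      obtain ⟨_, hq1, hq2⟩ := unhit_mem.mp hq'
      exact Or.inr ⟨hq1, hq2, (hS' q hqU hqp).1, (hS' q hqU hqp).2⟩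

lemma pair_dominates (hs : PairSetup G P D₀) {D S : Finset V}
    (hInv : InvP P D₀ D S) (h0 : Unhit P D = ∅) : Dominates G ∅ D := by
  refine hs.dom D hInv.1 (fun p hp => ?_)
  by_contra hc
  push_neg at hc
  have : p ∈ Unhit P D := unhit_mem.mpr ⟨hp, hc.1, hc.2⟩
  simp [h0] at this

set_option linter.unusedSectionVars false

theorem pair_main (hs : PairSetup G P D₀) : ∀ m : ℕ,
    (∀ D S : Finset V, InvP P D₀ D S → (Unhit P D).card = m → MBWin G ∅ false m D S) ∧
    (∀ (D S : Finset V) (v : V), InvP P D₀ D S → (Unhit P D).card = m →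
      v ∉ D → v ∉ S → MBWin G ∅ true m D (insert v S)) := by
  intro m
  induction m using Nat.strong_induction_on with
  | _ m IH =>
  have h2 : ∀ (D S : Finset V) (v : V), InvP P D₀ D S → (Unhit P D).card = m →
      v ∉ D → v ∉ S → MBWin G ∅ true m D (insert v S) := by
    intro D S v hInv hcard hvD hvS
    rcases Nat.eq_zero_or_pos m with rfl | hm
    · exact MBWin.win _ _ _ _ (pair_dominates hs hInv (Finset.card_eq_zero.mp hcard))
    · have hne : (Unhit P D).Nonempty := Finset.card_pos.mp (hcard ▸ hm)
      have key : ∀ (p : V × V) (w : V), p ∈ Unhit P D → (w = p.1 ∨ w = p.2) →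
          (∀ q ∈ Unhit P D, q ≠ p → q.1 ≠ v ∧ q.2 ≠ v) → w ≠ v →
          MBWin G ∅ true m D (insert v S) := by
        intro p w hp hw hq hwv
        obtain ⟨hpP, hp1, hp2⟩ := unhit_mem.mp hp
        have hwD : w ∉ D := by rcases hw with rfl | rfl <;> assumption
        have hwS : w ∉ S := by
          rcases hInv.2 p hpP with h | h
          · rcases h with h | h
            · exact absurd h hp1
            · exact absurd h hp2
          · rcases hw with rfl | rfl
            · exact h.2.2.1
            · exact h.2.2.2
        have hS' : ∀ q ∈ Unhit P D, q ≠ p → q.1 ∉ insert v S ∧ q.2 ∉ insert v S := by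
          intro q hqU hqp
          obtain ⟨hqP, hq1, hq2⟩ := unhit_mem.mp hqU
          have hq' := hq q hqU hqp
          have hqS : q.1 ∉ S ∧ q.2 ∉ S := by
            rcases hInv.2 q hqP with h | h
            · rcases h with h | h
              · exact absurd h hq1
              · exact absurd h hq2
            · exact ⟨h.2.2.1, h.2.2.2⟩
          constructor
          · rw [Finset.mem_insert]; rintro (h | h); exacts [hq'.1 h, hqS.1 h]
          · rw [Finset.mem_insert]; rintro (h | h); exacts [hq'.2 h, hqS.2 h]
        obtain ⟨hInv', hU'⟩ := pair_step hs hInv hp hw (insert v S) hS'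
        have hcard' : (Unhit P (insert w D)).card = m - 1 := by
          rw [hU', Finset.card_erase_of_mem hp, hcard]
        obtain ⟨hm', rfl⟩ : ∃ j, m = j + 1 := ⟨m - 1, (Nat.succ_pred_eq_of_pos hm).symm⟩
        refine MBWin.dmove _ _ _ w hwD ?_ ?_
        · rw [Finset.mem_insert]; rintro (h | h); exacts [hwv h, hwS h]
        · exact (IH hm' (Nat.lt_succ_self hm')).1 (insert w D) (insert v S) hInv'
            (by simpa using hcard')
      by_cases hv : ∃ p ∈ Unhit P D, v = p.1 ∨ v = p.2
      · obtain ⟨p, hp, hvp⟩ := hv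
        obtain ⟨hpP, hp1, hp2⟩ := unhit_mem.mp hp
        refine key p (if v = p.1 then p.2 else p.1) hp ?_ ?_ ?_
        · split <;> simp
        · intro q hqU hqp
          have hd := hs.disj p hpP q (unhit_mem.mp hqU).1 (fun h => hqp h.symm)
          rcases hvp with rfl | rfl
          · exact ⟨fun h => hd.1 h.symm, fun h => hd.2.1 h.symm⟩
          · exact ⟨fun h => hd.2.2.1 h.symm, fun h => hd.2.2.2 h.symm⟩
        · have hne' := hs.ne p hpP
          split
          · rename_i h; rw [h]; exact fun hc => hne' hc.symm
          · rename_i h; exact fun hc => h hc.symm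
      · push_neg at hv
        obtain ⟨p, hp⟩ := hne
        refine key p p.1 hp (Or.inl rfl) ?_ ?_
        · intro q hqU hqp; exact ⟨fun h => (hv q hqU).1 h.symm, fun h => (hv q hqU).2 h.symm⟩
        · intro hc; exact (hv p hp).1 hc.symm
  refine ⟨?_, h2⟩
  intro D S hInv hcard
  rcases Nat.eq_zero_or_pos m with rfl | hm
  · exact MBWin.win _ _ _ _ (pair_dominates hs hInv (Finset.card_eq_zero.mp hcard))
  · have hne : (Unhit P D).Nonempty := Finset.card_pos.mp (hcard ▸ hm)
    obtain ⟨p, hp⟩ := hne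
    obtain ⟨hpP, hp1, hp2⟩ := unhit_mem.mp hp
    have hp1S : p.1 ∉ S := by
      rcases hInv.2 p hpP with h | h
      · rcases h with h | h; exacts [absurd h hp1, absurd h hp2]
      · exact h.2.2.1
    refine MBWin.smove _ _ _ ?_ (fun v hvD hvS => h2 D S v hInv hcard hvD hvS)
    intro hc
    have : p.1 ∈ D ∪ S := hc ▸ Finset.mem_univ p.1
    rcases Finset.mem_union.mp this with h | h; exacts [hp1 h, hp1S h]

/-- Dominator-start version -/
theorem pair_start (hs : PairSetup G P D₀) {D S : Finset V} {m : ℕ}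
    (hInv : InvP P D₀ D S) (hcard : (Unhit P D).card = m) (hm : 0 < m) :
    MBWin G ∅ true m D S := by
  have hne : (Unhit P D).Nonempty := Finset.card_pos.mp (hcard ▸ hm)
  obtain ⟨p, hp⟩ := hne
  obtain ⟨hpP, hp1, hp2⟩ := unhit_mem.mp hp
  have hp1S : p.1 ∉ S := by
    rcases hInv.2 p hpP with h | h
    · rcases h with h | h; exacts [absurd h hp1, absurd h hp2]
    · exact h.2.2.1
  have hS' : ∀ q ∈ Unhit P D, q ≠ p → q.1 ∉ S ∧ q.2 ∉ S := by
    intro q hqU hqp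
    obtain ⟨hqP, hq1, hq2⟩ := unhit_mem.mp hqU
    rcases hInv.2 q hqP with h | h
    · rcases h with h | h; exacts [absurd h hq1, absurd h hq2]
    · exact ⟨h.2.2.1, h.2.2.2⟩
  obtain ⟨hInv', hU'⟩ := pair_step hs hInv hp (Or.inl rfl) S hS'
  have hcard' : (Unhit P (insert p.1 D)).card = m - 1 := by
    rw [hU', Finset.card_erase_of_mem hp, hcard]
  obtain ⟨j, rfl⟩ : ∃ j, m = j + 1 := ⟨m - 1, (Nat.succ_pred_eq_of_pos hm).symm⟩
  exact MBWin.dmove _ _ _ p.1 hp1 hp1S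
    ((pair_main hs j).1 (insert p.1 D) S hInv' (by simpa using hcard'))

end Pairing

section CycleUpper

open Finset

variable {c : ℕ}

private lemma Ncast_inj {a b : ℕ} (ha : a < c+3) (hb : b < c+3) :
    (↑a : Fin (c+3)) = ↑b ↔ a = b := by
  rw [Fin.ext_iff, Fin.val_cast_of_lt ha, Fin.val_cast_of_lt hb]

private lemma val_one' : (1 : Fin (c+3)).val = 1 := rfl

private lemma cyc_adj {x y : Fin (c+3)} :
    (SimpleGraph.cycleGraph (c+3)).Adj x y ↔ y = x + 1 ∨ x = y + 1 := by
  rw [SimpleGraph.cycleGraph_adj']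
  have key : ∀ z w : Fin (c+3), (z - w).val = 1 ↔ z = w + 1 := by
    intro z w
    constructor
    · intro h
      have : z - w = 1 := by rw [Fin.ext_iff, val_one']; exact h
      rw [sub_eq_iff_eq_add] at this
      rw [this]; ring
    · intro h
      rw [h, show w + 1 - w = 1 by ring, val_one']
  rw [key, key]
  tauto

private lemma adj_offset (y : Fin (c+3)) (o : ℕ) :
    (SimpleGraph.cycleGraph (c+3)).Adj (y + ((o+1 : ℕ) : Fin (c+3))) (y + ((o : ℕ) : Fin (c+3))) := by
  rw [cyc_adj]; right; push_cast; ring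

private lemma cast_add_ne (b : Fin (c+3)) {o : ℕ} (h1 : 0 < o) (h2 : o < c+3) :
    b + ((o : ℕ) : Fin (c+3)) ≠ b := by
  intro hc
  have h3 : ((o : ℕ) : Fin (c+3)) = 0 := by
    have : b + ((o:ℕ) : Fin (c+3)) = b + 0 := by rw [hc, add_zero]
    exact add_left_cancel this
  rw [Fin.ext_iff, Fin.val_cast_of_lt h2, Fin.val_zero] at h3
  omega

private lemma offsets_ne (b : Fin (c+3)) {o o' : ℕ} (h : o < c+3) (h' : o' < c+3)
    (hne : o ≠ o') : b + ((o : ℕ) : Fin (c+3)) ≠ b + ((o' : ℕ) : Fin (c+3)) := by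
  rw [ne_eq, add_right_inj, Ncast_inj h h']
  exact hne

def cycPairs (b : Fin (c+3)) (a k : ℕ) : Finset (Fin (c+3) × Fin (c+3)) :=
  (Finset.range k).image (fun i => (b + ((2*i+a : ℕ) : Fin (c+3)), b + ((2*i+a+1 : ℕ) : Fin (c+3))))

lemma cycPairs_mem {b : Fin (c+3)} {a k : ℕ} {p : Fin (c+3) × Fin (c+3)} :
    p ∈ cycPairs b a k ↔ ∃ i < k, p = (b + ((2*i+a : ℕ) : Fin (c+3)), b + ((2*i+a+1 : ℕ) : Fin (c+3))) := by
  simp [cycPairs, eq_comm]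

lemma cycPairs_card (b : Fin (c+3)) (a k : ℕ) (hk : 2*k + a ≤ c + 3) :
    (cycPairs b a k).card = k := by
  rw [cycPairs, Finset.card_image_of_injOn, Finset.card_range]
  intro i hi j hj hij
  simp only [Finset.mem_range, Finset.mem_coe] at hi hj
  have := congrArg Prod.fst hij
  simp only [add_right_inj] at this
  have := (Ncast_inj (by omega) (by omega)).mp this
  omega

lemma cycPairs_setup (b : Fin (c+3)) (a k : ℕ) (hk : 2*k + a ≤ c + 3)
    (D₀ : Finset (Fin (c+3)))
    (hdom : ∀ D' : Finset (Fin (c+3)), D₀ ⊆ D' →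
      (∀ p ∈ cycPairs b a k, p.1 ∈ D' ∨ p.2 ∈ D') → Dominates (SimpleGraph.cycleGraph (c+3)) ∅ D') :
    PairSetup (SimpleGraph.cycleGraph (c+3)) (cycPairs b a k) D₀ := by
  constructor
  · intro p hp
    obtain ⟨i, hi, rfl⟩ := cycPairs_mem.mp hp
    exact offsets_ne b (by omega) (by omega) (by omega)
  · intro p hp q hq hpq
    obtain ⟨i, hi, rfl⟩ := cycPairs_mem.mp hp
    obtain ⟨j, hj, rfl⟩ := cycPairs_mem.mp hq
    have hij : i ≠ j := by rintro rfl; exact hpq rfl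
    exact ⟨offsets_ne b (by omega) (by omega) (by omega),
      offsets_ne b (by omega) (by omega) (by omega),
      offsets_ne b (by omega) (by omega) (by omega),
      offsets_ne b (by omega) (by omega) (by omega)⟩
  · exact hdom

private lemma hit_covers {b : Fin (c+3)} {D' : Finset (Fin (c+3))} {o j : ℕ}
    (h : b + ((o : ℕ) : Fin (c+3)) ∈ D' ∨ b + ((o+1 : ℕ) : Fin (c+3)) ∈ D')
    (hj : j = o ∨ j = o + 1) :
    ∃ u ∈ D', u = b + ((j : ℕ) : Fin (c+3)) ∨
      (SimpleGraph.cycleGraph (c+3)).Adj u (b + ((j : ℕ) : Fin (c+3))) := by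
  rcases h with h | h
  · refine ⟨_, h, ?_⟩
    rcases hj with h' | h' <;> rw [h']
    · exact Or.inl rfl
    · exact Or.inr (adj_offset b o).symm
  · refine ⟨_, h, ?_⟩
    rcases hj with h' | h' <;> rw [h']
    · exact Or.inr (adj_offset b o)
    · exact Or.inl rfl

private lemma decomp (b x : Fin (c+3)) : ∃ j, j < c+3 ∧ x = b + ((j : ℕ) : Fin (c+3)) :=
  ⟨(x - b).val, (x - b).isLt, by rw [Fin.cast_val_eq_self]; ring⟩

lemma cycPairs_dom_even (b : Fin (c+3)) (k : ℕ) (hk : c + 3 = 2*k) :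
    ∀ D' : Finset (Fin (c+3)), (∅ : Finset (Fin (c+3))) ⊆ D' →
      (∀ p ∈ cycPairs b 0 k, p.1 ∈ D' ∨ p.2 ∈ D') →
      Dominates (SimpleGraph.cycleGraph (c+3)) ∅ D' := by
  intro D' _ hhit x _
  obtain ⟨j, hjlt, rfl⟩ := decomp b x
  have hik : j / 2 < k := by omega
  have hpmem : (b + ((2*(j/2)+0 : ℕ) : Fin (c+3)), b + ((2*(j/2)+0+1 : ℕ) : Fin (c+3))) ∈ cycPairs b 0 k :=
    cycPairs_mem.mpr ⟨j/2, hik, rfl⟩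
  exact hit_covers (hhit _ hpmem) (by omega)

lemma cycPairs_dom_odd (b : Fin (c+3)) (k : ℕ) (hk : c + 3 = 2*k + 3) :
    ∀ D' : Finset (Fin (c+3)), ({b} : Finset (Fin (c+3))) ⊆ D' →
      (∀ p ∈ cycPairs b 2 k, p.1 ∈ D' ∨ p.2 ∈ D') →
      Dominates (SimpleGraph.cycleGraph (c+3)) ∅ D' := by
  intro D' hb hhit x _
  have hbD : b ∈ D' := hb (Finset.mem_singleton_self b)
  obtain ⟨j, hjlt, rfl⟩ := decomp b x
  by_cases hsmall : j = 0 ∨ j = 1 ∨ j = c + 2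
  · refine ⟨b, hbD, ?_⟩
    rcases hsmall with h0 | h0 | h0 <;> rw [h0]
    · left; norm_num
    · right; rw [cyc_adj]; left; norm_num
    · right; rw [cyc_adj]; right
      have hcast : ((c+2 : ℕ) : Fin (c+3)) + 1 = 0 := by
        rw [show (1 : Fin (c+3)) = ((1:ℕ) : Fin (c+3)) by norm_num, ← Nat.cast_add]
        exact Fin.natCast_self (c+3)
      rw [add_assoc, hcast, add_zero]
  · push_neg at hsmall
    have hik : (j-2)/2 < k := by omega
    have hpmem : (b + ((2*((j-2)/2)+2 : ℕ) : Fin (c+3)), b + ((2*((j-2)/2)+2+1 : ℕ) : Fin (c+3))) ∈ cycPairs b 2 k :=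
      cycPairs_mem.mpr ⟨(j-2)/2, hik, rfl⟩
    exact hit_covers (hhit _ hpmem) (by omega)

theorem cycle_upper (c : ℕ) :
    MBWin (SimpleGraph.cycleGraph (c+3)) ∅ true ((c+3)/2) ∅ ∅ ∧
    MBWin (SimpleGraph.cycleGraph (c+3)) ∅ false ((c+3)/2) ∅ ∅ := by
  have hunivne : (∅ : Finset (Fin (c+3))) ∪ ∅ ≠ Finset.univ := by
    intro h
    have : (0 : Fin (c+3)) ∈ (∅ : Finset (Fin (c+3))) ∪ ∅ := h ▸ Finset.mem_univ _
    simp at this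
  rcases Nat.even_or_odd (c+3) with he | ho
  · obtain ⟨k, hk⟩ := he
    have hk' : c + 3 = 2 * k := by omega
    have hsetup := cycPairs_setup (0 : Fin (c+3)) 0 k (by omega) ∅
      (cycPairs_dom_even 0 k hk')
    have hUeq : Unhit (cycPairs (0 : Fin (c+3)) 0 k) ∅ = cycPairs (0 : Fin (c+3)) 0 k := by
      ext p; rw [unhit_mem]
      exact ⟨fun h => h.1, fun h => ⟨h, Finset.notMem_empty _, Finset.notMem_empty _⟩⟩
    have hcard0 : (Unhit (cycPairs (0 : Fin (c+3)) 0 k) ∅).card = k := by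
      rw [hUeq]; exact cycPairs_card _ _ _ (by omega)
    have hInv : InvP (cycPairs (0 : Fin (c+3)) 0 k) ∅ ∅ ∅ :=
      ⟨Finset.Subset.refl _, fun p _ => Or.inr
        ⟨Finset.notMem_empty _, Finset.notMem_empty _, Finset.notMem_empty _, Finset.notMem_empty _⟩⟩
    have hkval : (c+3)/2 = k := by omega
    have hkpos : 0 < k := by omega
    rw [hkval]
    exact ⟨pair_start hsetup hInv hcard0 hkpos,
      (pair_main hsetup k).1 ∅ ∅ hInv hcard0⟩
  · obtain ⟨k, hk'⟩ : ∃ k, c + 3 = 2 * k + 3 := by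
      obtain ⟨k0, h0⟩ := ho; exact ⟨k0 - 1, by omega⟩
    have hkval : (c+3)/2 = k + 1 := by omega
    rw [hkval]
    constructor
    · -- D-game: play 0 first
      have hsetup := cycPairs_setup (0 : Fin (c+3)) 2 k (by omega) {0}
        (cycPairs_dom_odd 0 k hk')
      refine MBWin.dmove _ _ _ 0 (Finset.notMem_empty _) (Finset.notMem_empty _) ?_
      have hfree : ∀ p ∈ cycPairs (0 : Fin (c+3)) 2 k,
          p.1 ∉ insert (0 : Fin (c+3)) (∅ : Finset (Fin (c+3))) ∧
            p.2 ∉ insert (0 : Fin (c+3)) (∅ : Finset (Fin (c+3))) := by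
        intro p hp
        obtain ⟨i, hi, rfl⟩ := cycPairs_mem.mp hp
        have e0 : insert (0 : Fin (c+3)) (∅ : Finset (Fin (c+3))) = {0} := rfl
        rw [e0]
        constructor <;> rw [Finset.mem_singleton]
        · exact cast_add_ne 0 (by omega) (by omega)
        · exact cast_add_ne 0 (by omega) (by omega)
      have hUeq : Unhit (cycPairs (0 : Fin (c+3)) 2 k) (insert 0 ∅) = cycPairs (0 : Fin (c+3)) 2 k := by
        ext p; rw [unhit_mem]
        exact ⟨fun h => h.1, fun h => ⟨h, (hfree p h).1, (hfree p h).2⟩⟩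
      have hcard : (Unhit (cycPairs (0 : Fin (c+3)) 2 k) (insert 0 ∅)).card = k := by
        rw [hUeq]; exact cycPairs_card _ _ _ (by omega)
      have hInv : InvP (cycPairs (0 : Fin (c+3)) 2 k) {0} (insert 0 ∅) ∅ := by
        refine ⟨by intro z hz; rw [Finset.mem_singleton] at hz; rw [hz]; exact Finset.mem_insert_self _ _,
          fun p hp => Or.inr ⟨(hfree p hp).1, (hfree p hp).2, Finset.notMem_empty _, Finset.notMem_empty _⟩⟩
      exact (pair_main hsetup k).1 _ ∅ hInv hcard
    · -- S-game
      refine MBWin.smove _ _ _ hunivne (fun v _ _ => ?_)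
      have h1cast : (1 : Fin (c+3)) = ((1:ℕ) : Fin (c+3)) := by norm_num
      have hvne : (v + 1 : Fin (c+3)) ∉ ({v} : Finset (Fin (c+3))) := by
        rw [Finset.mem_singleton, h1cast]
        exact cast_add_ne v (by omega) (by omega)
      refine MBWin.dmove _ _ _ (v+1) (Finset.notMem_empty _) hvne ?_
      set b := v + 1 with hb
      have hsetup := cycPairs_setup b 2 k (by omega) {b} (cycPairs_dom_odd b k hk')
      have hvb : v = b + ((c+2 : ℕ) : Fin (c+3)) := by
        have hcast : ((c+2 : ℕ) : Fin (c+3)) + 1 = 0 := by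
          rw [h1cast, ← Nat.cast_add]
          exact Fin.natCast_self (c+3)
        rw [hb, add_assoc, add_comm (1 : Fin (c+3)), hcast, add_zero]
      have hfree : ∀ p ∈ cycPairs b 2 k,
          p.1 ∉ insert b (∅ : Finset (Fin (c+3))) ∧ p.2 ∉ insert b (∅ : Finset (Fin (c+3))) ∧
            p.1 ∉ ({v} : Finset (Fin (c+3))) ∧ p.2 ∉ ({v} : Finset (Fin (c+3))) := by
        intro p hp
        obtain ⟨i, hi, rfl⟩ := cycPairs_mem.mp hp
        have e0 : insert b (∅ : Finset (Fin (c+3))) = {b} := rfl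
        rw [e0]
        refine ⟨?_, ?_, ?_, ?_⟩ <;> rw [Finset.mem_singleton]
        · exact cast_add_ne b (by omega) (by omega)
        · exact cast_add_ne b (by omega) (by omega)
        · rw [hvb]; exact offsets_ne b (by omega) (by omega) (by omega)
        · rw [hvb]; exact offsets_ne b (by omega) (by omega) (by omega)
      have hUeq : Unhit (cycPairs b 2 k) (insert b ∅) = cycPairs b 2 k := by
        ext p; rw [unhit_mem]
        exact ⟨fun h => h.1, fun h => ⟨h, (hfree p h).1, (hfree p h).2.1⟩⟩
      have hcard : (Unhit (cycPairs b 2 k) (insert b ∅)).card = k := by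
        rw [hUeq]; exact cycPairs_card _ _ _ (by omega)
      have hInv : InvP (cycPairs b 2 k) {b} (insert b ∅) ({v} : Finset (Fin (c+3))) := by
        refine ⟨by intro z hz; rw [Finset.mem_singleton] at hz; rw [hz]; exact Finset.mem_insert_self _ _,
          fun p hp => Or.inr ⟨(hfree p hp).1, (hfree p hp).2.1, (hfree p hp).2.2.1, (hfree p hp).2.2.2⟩⟩
      exact (pair_main hsetup k).1 _ _ hInv hcard

end CycleUpper

section CycleLower

open Finset

variable {d : ℕ}

-- N = d + 4 throughout this section (cycles of length ≥ 4)

/-- closed neighborhood -/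
def nbr (x : Fin (d+4)) : Finset (Fin (d+4)) := {x - 1, x, x + 1}

lemma mem_nbr {u x : Fin (d+4)} : u ∈ nbr x ↔ u = x - 1 ∨ u = x ∨ u = x + 1 := by
  simp [nbr]

lemma nbr_symm {u x : Fin (d+4)} : u ∈ nbr x ↔ x ∈ nbr u := by
  rw [mem_nbr, mem_nbr]
  constructor
  · rintro (h | h | h)
    · right; right; rw [h]; ring
    · right; left; rw [h]
    · left; rw [h]; ring
  · rintro (h | h | h)
    · right; right; rw [h]; ring
    · right; left; rw [h]
    · left; rw [h]; ring

/-- undominated vertices -/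
def UU (D : Finset (Fin (d+4))) : Finset (Fin (d+4)) :=
  Finset.univ.filter (fun x => ∀ u ∈ D, u ∉ nbr x)

lemma mem_UU {x : Fin (d+4)} {D : Finset (Fin (d+4))} :
    x ∈ UU D ↔ ∀ u ∈ D, u ∉ nbr x := by
  simp [UU]

lemma UU_not_mem_D {x : Fin (d+4)} {D : Finset (Fin (d+4))} (h : x ∈ UU D) : x ∉ D :=
  fun hx => (mem_UU.mp h) x hx (by rw [mem_nbr]; tauto)

lemma UU_succ_not_mem_D {x : Fin (d+4)} {D : Finset (Fin (d+4))} (h : x ∈ UU D) :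
    x + 1 ∉ D :=
  fun hx => (mem_UU.mp h) (x+1) hx (by rw [mem_nbr]; tauto)

lemma UU_pred_not_mem_D {x : Fin (d+4)} {D : Finset (Fin (d+4))} (h : x ∈ UU D) :
    x - 1 ∉ D :=
  fun hx => (mem_UU.mp h) (x-1) hx (by rw [mem_nbr]; tauto)

lemma mem_UU_insert {x w : Fin (d+4)} {D : Finset (Fin (d+4))} :
    x ∈ UU (insert w D) ↔ x ∈ UU D ∧ w ∉ nbr x := by
  rw [mem_UU, mem_UU]
  constructor
  · intro h
    exact ⟨fun u hu => h u (Finset.mem_insert_of_mem hu), h w (Finset.mem_insert_self _ _)⟩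
  · rintro ⟨h1, h2⟩ u hu
    rcases Finset.mem_insert.mp hu with rfl | hu
    · exact h2
    · exact h1 u hu

lemma adj_iff_nbr {u v : Fin (d+4)} :
    (u = v ∨ (SimpleGraph.cycleGraph (d+4)).Adj u v) ↔ u ∈ nbr v := by
  have h : (SimpleGraph.cycleGraph ((d+1)+3)).Adj u v ↔ v = u + 1 ∨ u = v + 1 := cyc_adj
  rw [mem_nbr]
  constructor
  · rintro (rfl | ha)
    · right; left; rfl
    · rcases h.mp ha with h' | h'
      · left; rw [h']; ring
      · right; right; exact h'
  · rintro (h' | h' | h')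
    · right; apply h.mpr; left; rw [h']; ring
    · left; exact h'
    · right; exact h.mpr (Or.inr h')

lemma dominates_iff_UU {D : Finset (Fin (d+4))} :
    Dominates (SimpleGraph.cycleGraph (d+4)) ∅ D ↔ UU D = ∅ := by
  constructor
  · intro h
    rw [Finset.eq_empty_iff_forall_notMem]
    intro x hx
    obtain ⟨u, hu, hcov⟩ := h x (Set.notMem_empty x)
    exact (mem_UU.mp hx) u hu (adj_iff_nbr.mp hcov)
  · intro h x _
    by_contra hc
    push_neg at hc
    have hx : x ∈ UU D := mem_UU.mpr (fun u hu hnb => by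
      rcases adj_iff_nbr.mpr hnb with h' | h'
      · exact (hc u hu).1 h'
      · exact (hc u hu).2 h')
    rw [h] at hx
    exact absurd hx (Finset.notMem_empty x)

/-- independent subsets (no two consecutive) -/
def Ind (T : Finset (Fin (d+4))) : Prop := ∀ x ∈ T, x + 1 ∉ T

open scoped Classical in
/-- maximum size of an independent set of undominated vertices -/
noncomputable def Sig (D : Finset (Fin (d+4))) : ℕ :=
  (((UU D).powerset).filter Ind).sup Finset.card

lemma Sig_ge {T D : Finset (Fin (d+4))} (hT : T ⊆ UU D) (hI : Ind T) : T.card ≤ Sig D := by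
  classical
  rw [Sig]
  exact Finset.le_sup (by simp only [Finset.mem_filter, Finset.mem_powerset]; exact ⟨hT, hI⟩)

lemma Sig_exists (D : Finset (Fin (d+4))) :
    ∃ T, T ⊆ UU D ∧ Ind T ∧ T.card = Sig D := by
  classical
  have hne : (((UU D).powerset).filter Ind).Nonempty := by
    refine ⟨∅, ?_⟩
    simp only [Finset.mem_filter, Finset.mem_powerset]
    exact ⟨Finset.empty_subset _, fun x hx => absurd hx (Finset.notMem_empty x)⟩
  obtain ⟨T, hT, hsup⟩ := Finset.exists_mem_eq_sup _ hne Finset.card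
  simp only [Finset.mem_filter, Finset.mem_powerset] at hT
  exact ⟨T, hT.1, hT.2, hsup.symm⟩

lemma Sig_le (D : Finset (Fin (d+4))) : Sig D ≤ d + 4 := by
  obtain ⟨T, hT, _, hcard⟩ := Sig_exists D
  rw [← hcard]
  calc T.card ≤ (Finset.univ : Finset (Fin (d+4))).card := Finset.card_le_card (Finset.subset_univ T)
  _ = d + 4 := by simp

lemma fin_one_ne_zero : (1 : Fin (d+4)) ≠ 0 := by
  simp [Fin.ext_iff]

lemma fin_succ_ne_self (x : Fin (d+4)) : x + 1 ≠ x := by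
  intro h
  have : x + 1 = x + 0 := by rw [h, add_zero]
  exact fin_one_ne_zero (add_left_cancel this)

lemma Sig_pos {D : Finset (Fin (d+4))} {x : Fin (d+4)} (hx : x ∈ UU D) : 1 ≤ Sig D := by
  have : ({x} : Finset (Fin (d+4))).card ≤ Sig D := by
    apply Sig_ge (by simpa using hx)
    intro y hy
    rw [Finset.mem_singleton] at hy
    subst hy
    rw [Finset.mem_singleton]
    exact fin_succ_ne_self y
  simpa using this

def doomF (D S : Finset (Fin (d+4))) : Prop :=
  ∃ s ∈ S, s ∈ UU D ∧ (s - 1 ∈ S ∨ s + 1 ∈ S ∨ s - 2 ∉ D ∨ s + 2 ∉ D)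

def doomT (D S : Finset (Fin (d+4))) : Prop :=
  ∃ s ∈ S, s ∈ UU D ∧
    ((s - 1 ∈ S ∧ s - 2 ∉ D) ∨ (s + 1 ∈ S ∧ s + 2 ∉ D) ∨ (s - 1 ∈ S ∧ s + 1 ∈ S))

open scoped Classical in
noncomputable def fF (D S : Finset (Fin (d+4))) : ℕ :=
  if UU D = ∅ then 0 else if D = ∅ then (d+4)/2 else if doomF D S then d+4 else Sig D

open scoped Classical in
noncomputable def fT (D S : Finset (Fin (d+4))) : ℕ :=
  if UU D = ∅ then 0 else if D = ∅ then (d+4)/2 else if doomT D S then d+4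
  else if ∃ w, w ∉ D ∧ w ∉ S ∧ fF (insert w D) S + 2 ≤ Sig D then Sig D - 1 else Sig D

end CycleLower

section CycleLower2

open Finset

variable {d : ℕ}

private lemma offne (x : Fin (d+4)) {a b : ℕ} (ha : a < d+4) (hb : b < d+4) (hne : a ≠ b) :
    x + ((a : ℕ) : Fin (d+4)) ≠ x + ((b : ℕ) : Fin (d+4)) :=
  offsets_ne (c := d+1) x ha hb hne

private lemma sh0 (s : Fin (d+4)) : s = s + ((0 : ℕ) : Fin (d+4)) := by norm_num

private lemma sh1 (s : Fin (d+4)) : s + 1 = s + ((1 : ℕ) : Fin (d+4)) := by norm_num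

private lemma sh2 (s : Fin (d+4)) : s + 2 = s + ((2 : ℕ) : Fin (d+4)) := by norm_num

private lemma shm1 (s : Fin (d+4)) : s - 1 = s + ((d+3 : ℕ) : Fin (d+4)) := by
  have h : ((d+3 : ℕ) : Fin (d+4)) + 1 = 0 := by
    rw [show (1 : Fin (d+4)) = ((1:ℕ) : Fin (d+4)) by norm_num, ← Nat.cast_add]
    exact Fin.natCast_self _
  have h2 : ((d+3 : ℕ) : Fin (d+4)) = -1 := eq_neg_of_add_eq_zero_left h
  rw [h2]; ring

private lemma shm2 (s : Fin (d+4)) : s - 2 = s + ((d+2 : ℕ) : Fin (d+4)) := by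
  have h : ((d+2 : ℕ) : Fin (d+4)) + 2 = 0 := by
    rw [show (2 : Fin (d+4)) = ((2:ℕ) : Fin (d+4)) by norm_num, ← Nat.cast_add]
    exact Fin.natCast_self _
  have h2 : ((d+2 : ℕ) : Fin (d+4)) = -2 := eq_neg_of_add_eq_zero_left h
  rw [h2]; ring

/-- the five key vertices around s are pairwise distinct (except s-2 vs s+2) -/
private lemma ne_m1_p1 (s : Fin (d+4)) : s - 1 ≠ s + 1 := by
  rw [shm1, sh1]; exact offne s (by omega) (by omega) (by omega)
private lemma add_add_cast (x : Fin (d+4)) (a b : ℕ) :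
    x + ((a:ℕ) : Fin (d+4)) + ((b:ℕ) : Fin (d+4)) = x + ((a+b : ℕ) : Fin (d+4)) := by
  rw [add_assoc, ← Nat.cast_add]

private lemma cast_reduce (a : ℕ) : ((a + (d+4) : ℕ) : Fin (d+4)) = ((a:ℕ) : Fin (d+4)) := by
  rw [Nat.cast_add, Fin.natCast_self, add_zero]

private lemma self_ne_shift (u : Fin (d+4)) {a : ℕ} (h1 : 0 < a) (h2 : a < d+4) :
    u ≠ u + ((a:ℕ) : Fin (d+4)) := by
  intro h
  exact offne u (show (0:ℕ) < d+4 by omega) h2 (by omega) (by rw [← sh0]; exact h)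

private lemma ne_m1_self (s : Fin (d+4)) : s - 1 ≠ s := by
  rw [shm1]
  intro h
  exact self_ne_shift s (a := d+3) (by omega) (by omega) h.symm
private lemma ne_p1_self (s : Fin (d+4)) : s + 1 ≠ s := fin_succ_ne_self s
private lemma ne_m2_m1 (s : Fin (d+4)) : s - 2 ≠ s - 1 := by
  rw [shm1, shm2]; exact offne s (by omega) (by omega) (by omega)
private lemma ne_m2_self (s : Fin (d+4)) : s - 2 ≠ s := by
  rw [shm2]; nth_rewrite 2 [sh0 s]; exact offne s (by omega) (by omega) (by omega)
private lemma ne_m2_p1 (s : Fin (d+4)) : s - 2 ≠ s + 1 := by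
  rw [shm2, sh1]; exact offne s (by omega) (by omega) (by omega)
private lemma ne_p2_m1 (s : Fin (d+4)) : s + 2 ≠ s - 1 := by
  rw [shm1, sh2]; exact offne s (by omega) (by omega) (by omega)
private lemma ne_p2_self (s : Fin (d+4)) : s + 2 ≠ s := by
  rw [sh2]; nth_rewrite 2 [sh0 s]; exact offne s (by omega) (by omega) (by omega)
private lemma ne_p2_p1 (s : Fin (d+4)) : s + 2 ≠ s + 1 := by
  rw [sh2, sh1]; exact offne s (by omega) (by omega) (by omega)

lemma ind_inter_nbr_le_two {T : Finset (Fin (d+4))} (hI : Ind T) (v : Fin (d+4)) :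
    (T ∩ nbr v).card ≤ 2 := by
  by_cases hv : v ∈ T
  · have hv1 : v + 1 ∉ T := hI v hv
    have hsub : T ∩ nbr v ⊆ {v - 1, v} := by
      intro x hx
      rw [Finset.mem_inter, mem_nbr] at hx
      rcases hx.2 with h | h | h
      · rw [Finset.mem_insert, Finset.mem_singleton]; exact Or.inl h
      · rw [Finset.mem_insert, Finset.mem_singleton]; exact Or.inr h
      · exact absurd (h ▸ hx.1) hv1
    exact (Finset.card_le_card hsub).trans ((Finset.card_insert_le _ _).trans (by simp))
  · have hsub : T ∩ nbr v ⊆ {v - 1, v + 1} := by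
      intro x hx
      rw [Finset.mem_inter, mem_nbr] at hx
      rcases hx.2 with h | h | h
      · rw [Finset.mem_insert, Finset.mem_singleton]; exact Or.inl h
      · exact absurd (h ▸ hx.1) hv
      · rw [Finset.mem_insert, Finset.mem_singleton]; exact Or.inr h
    exact (Finset.card_le_card hsub).trans ((Finset.card_insert_le _ _).trans (by simp))

lemma sdiff_nbr_subset_UU_insert {T D : Finset (Fin (d+4))} {v : Fin (d+4)}
    (hT : T ⊆ UU D) : T \ nbr v ⊆ UU (insert v D) := by
  intro x hx
  rw [Finset.mem_sdiff] at hx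
  exact mem_UU_insert.mpr ⟨hT hx.1, fun hn => hx.2 (nbr_symm.mp hn)⟩

lemma Ind_subset {T T' : Finset (Fin (d+4))} (h : T' ⊆ T) (hI : Ind T) : Ind T' :=
  fun x hx hx1 => hI x (h hx) (h hx1)

lemma Sig_drop_two (D : Finset (Fin (d+4))) (v : Fin (d+4)) :
    Sig D ≤ Sig (insert v D) + 2 := by
  obtain ⟨T, hT, hI, hc⟩ := Sig_exists D
  have h1 := Sig_ge (sdiff_nbr_subset_UU_insert (v := v) hT) (Ind_subset (Finset.sdiff_subset) hI)
  have h2 := Finset.card_sdiff_add_card_inter T (nbr v)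
  have h3 := ind_inter_nbr_le_two hI v
  omega

lemma Sig_le_two_of_dom {D : Finset (Fin (d+4))} {v : Fin (d+4)}
    (h : UU (insert v D) = ∅) : Sig D ≤ 2 := by
  obtain ⟨T, hT, hI, hc⟩ := Sig_exists D
  have hTnb : T ⊆ nbr v := by
    intro x hx
    by_contra hxn
    have : x ∈ UU (insert v D) := mem_UU_insert.mpr ⟨hT hx, fun hn => hxn (nbr_symm.mp hn)⟩
    rw [h] at this
    exact absurd this (Finset.notMem_empty x)
  have h2 := ind_inter_nbr_le_two hI v
  rw [Finset.inter_eq_left.mpr hTnb] at h2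
  omega

lemma fF_lower (D S : Finset (Fin (d+4))) (v : Fin (d+4)) :
    Sig D ≤ fF (insert v D) S + 2 := by
  rw [fF]
  split_ifs with h1 h2 h3
  · exact Sig_le_two_of_dom h1
  · exact absurd h2 (Finset.insert_ne_empty v D)
  · have := Sig_le D; omega
  · have := Sig_drop_two D v; omega

lemma UU_ne_empty_of_mem {D : Finset (Fin (d+4))} {x : Fin (d+4)} (h : x ∈ UU D) :
    UU D ≠ ∅ := fun hE => absurd (hE ▸ h) (Finset.notMem_empty x)

/-- doomT survives any Dominator move -/
lemma doomT_step {D S : Finset (Fin (d+4))} (h : doomT D S) {v : Fin (d+4)}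
    (hvD : v ∉ D) (hvS : v ∉ S) :
    doomF (insert v D) S ∧ UU (insert v D) ≠ ∅ := by
  obtain ⟨s, hsS, hsU, hcl⟩ := h
  have hvs : v ≠ s := fun h => hvS (h ▸ hsS)
  rcases hcl with ⟨h1, h2⟩ | ⟨h1, h2⟩ | ⟨h1, h2⟩
  · -- s-1 ∈ S, s-2 ∉ D
    by_cases hv : v = s + 1
    · subst hv
      have hsm1U : s - 1 ∈ UU D := by
        refine mem_UU.mpr (fun u hu hnb => ?_)
        rw [mem_nbr] at hnb
        rcases hnb with h' | h' | h'
        · rw [show s-1-1 = s-2 by ring] at h'; exact h2 (h' ▸ hu)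
        · exact UU_pred_not_mem_D hsU (h' ▸ hu)
        · rw [show s-1+1 = s by ring] at h'; exact UU_not_mem_D hsU (h' ▸ hu)
      have hsm1U' : s - 1 ∈ UU (insert (s+1) D) := by
        refine mem_UU_insert.mpr ⟨hsm1U, ?_⟩
        rw [mem_nbr]
        rintro (h' | h' | h')
        · rw [show s-1-1 = s-2 by ring] at h'; exact ne_m2_p1 s h'.symm
        · exact ne_m1_p1 s h'.symm
        · rw [show s-1+1 = s by ring] at h'; exact ne_p1_self s h'
      refine ⟨⟨s - 1, h1, hsm1U', ?_⟩, UU_ne_empty_of_mem hsm1U'⟩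
      right; left
      rw [show s-1+1 = s by ring]
      exact hsS
    · have hsU' : s ∈ UU (insert v D) := by
        refine mem_UU_insert.mpr ⟨hsU, ?_⟩
        rw [mem_nbr]
        rintro (h' | h' | h')
        · exact hvS (h' ▸ h1)
        · exact hvs h'
        · exact hv h'
      exact ⟨⟨s, hsS, hsU', Or.inl h1⟩, UU_ne_empty_of_mem hsU'⟩
  · -- s+1 ∈ S, s+2 ∉ D
    by_cases hv : v = s - 1
    · subst hv
      have hsp1U : s + 1 ∈ UU D := by
        refine mem_UU.mpr (fun u hu hnb => ?_)
        rw [mem_nbr] at hnb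
        rcases hnb with h' | h' | h'
        · rw [show s+1-1 = s by ring] at h'; exact UU_not_mem_D hsU (h' ▸ hu)
        · exact UU_succ_not_mem_D hsU (h' ▸ hu)
        · rw [show s+1+1 = s+2 by ring] at h'; exact h2 (h' ▸ hu)
      have hsp1U' : s + 1 ∈ UU (insert (s-1) D) := by
        refine mem_UU_insert.mpr ⟨hsp1U, ?_⟩
        rw [mem_nbr]
        rintro (h' | h' | h')
        · rw [show s+1-1 = s by ring] at h'; exact ne_m1_self s h'
        · exact ne_m1_p1 s h'
        · rw [show s+1+1 = s+2 by ring] at h'; exact ne_p2_m1 s h'.symm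
      refine ⟨⟨s + 1, h1, hsp1U', ?_⟩, UU_ne_empty_of_mem hsp1U'⟩
      left
      rw [show s+1-1 = s by ring]
      exact hsS
    · have hsU' : s ∈ UU (insert v D) := by
        refine mem_UU_insert.mpr ⟨hsU, ?_⟩
        rw [mem_nbr]
        rintro (h' | h' | h')
        · exact hv h'
        · exact hvs h'
        · exact hvS (h' ▸ h1)
      exact ⟨⟨s, hsS, hsU', Or.inr (Or.inl h1)⟩, UU_ne_empty_of_mem hsU'⟩
  · -- s-1 ∈ S and s+1 ∈ S
    have hsU' : s ∈ UU (insert v D) := by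
      refine mem_UU_insert.mpr ⟨hsU, ?_⟩
      rw [mem_nbr]
      rintro (h' | h' | h')
      · exact hvS (h' ▸ h1)
      · exact hvs h'
      · exact hvS (h' ▸ h2)
    exact ⟨⟨s, hsS, hsU', Or.inl h1⟩, UU_ne_empty_of_mem hsU'⟩

/-- From a doomF position Staller can move to a doomT position -/
lemma doomF_step {D S : Finset (Fin (d+4))} (h : doomF D S)
    (hfree : ∃ z, z ∉ D ∧ z ∉ S) :
    ∃ v, v ∉ D ∧ v ∉ S ∧ doomT D (insert v S) := by
  obtain ⟨s, hsS, hsU, hcl⟩ := h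
  by_cases h1 : s - 1 ∈ S
  · by_cases h2 : s + 1 ∈ S
    · obtain ⟨z, hz1, hz2⟩ := hfree
      exact ⟨z, hz1, hz2, s, Finset.mem_insert_of_mem hsS, hsU,
        Or.inr (Or.inr ⟨Finset.mem_insert_of_mem h1, Finset.mem_insert_of_mem h2⟩)⟩
    · exact ⟨s+1, UU_succ_not_mem_D hsU, h2, s, Finset.mem_insert_of_mem hsS, hsU,
        Or.inr (Or.inr ⟨Finset.mem_insert_of_mem h1, Finset.mem_insert_self _ _⟩)⟩
  · by_cases h2 : s + 1 ∈ S
    · exact ⟨s-1, UU_pred_not_mem_D hsU, h1, s, Finset.mem_insert_of_mem hsS, hsU,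
        Or.inr (Or.inr ⟨Finset.mem_insert_self _ _, Finset.mem_insert_of_mem h2⟩)⟩
    · rcases hcl with h3 | h3 | h3 | h3
      · exact absurd h3 h1
      · exact absurd h3 h2
      · exact ⟨s-1, UU_pred_not_mem_D hsU, h1, s, Finset.mem_insert_of_mem hsS, hsU,
          Or.inl ⟨Finset.mem_insert_self _ _, h3⟩⟩
      · exact ⟨s+1, UU_succ_not_mem_D hsU, h2, s, Finset.mem_insert_of_mem hsS, hsU,
          Or.inr (Or.inl ⟨Finset.mem_insert_self _ _, h3⟩)⟩

/-- explicit independent set in the complement of one closed neighborhood -/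
lemma Sig_singleton_lower (v : Fin (d+4)) : (d+4)/2 - 1 ≤ Sig (insert v ∅) := by
  classical
  set K := (d+4)/2 - 1 with hK
  set T : Finset (Fin (d+4)) := (Finset.range K).image (fun k => v + ((2*k+2 : ℕ) : Fin (d+4))) with hT
  have hbound : ∀ k, k < K → 2*k+2 < d+4 := by intro k hk; omega
  have hTcard : T.card = K := by
    rw [hT, Finset.card_image_of_injOn, Finset.card_range]
    intro i hi j hj hij
    simp only [Finset.mem_range, Finset.mem_coe] at hi hj
    by_contra hne
    exact offne v (hbound i hi) (hbound j hj) (by omega) hij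
  have hTU : T ⊆ UU (insert v ∅) := by
    intro x hx
    rw [hT, Finset.mem_image] at hx
    obtain ⟨k, hk, rfl⟩ := hx
    rw [Finset.mem_range] at hk
    refine mem_UU.mpr (fun u hu hnb => ?_)
    rcases Finset.mem_insert.mp hu with rfl | hu'
    · rw [mem_nbr] at hnb
      rcases hnb with h' | h' | h'
      · rw [shm1, add_add_cast, show 2*k+2+(d+3) = (2*k+1)+(d+4) by omega, cast_reduce] at h'
        exact self_ne_shift u (by omega) (by omega) h'
      · exact self_ne_shift u (by omega) (hbound k hk) h'
      · rw [sh1, add_add_cast] at h'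
        exact self_ne_shift u (by omega) (by omega) h'
    · exact absurd hu' (Finset.notMem_empty u)
  have hTI : Ind T := by
    intro x hx hx1
    rw [hT, Finset.mem_image] at hx hx1
    obtain ⟨k, hk, rfl⟩ := hx
    obtain ⟨k', hk', he⟩ := hx1
    rw [Finset.mem_range] at hk hk'
    rw [sh1, add_add_cast] at he
    exact offne v (hbound k' hk') (by omega) (by omega) he
  have := Sig_ge hTU hTI
  omega

/-- some vertex is undominated by a single stone -/
lemma UU_singleton_ne (v : Fin (d+4)) : v + ((2:ℕ) : Fin (d+4)) ∈ UU (insert v ∅) := by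
  refine mem_UU.mpr (fun u hu hnb => ?_)
  rcases Finset.mem_insert.mp hu with rfl | hu'
  · rw [mem_nbr] at hnb
    rcases hnb with h' | h' | h'
    · rw [shm1, add_add_cast, show 2+(d+3) = 1+(d+4) by omega, cast_reduce] at h'
      exact self_ne_shift u (by omega) (by omega) h'
    · exact self_ne_shift u (by omega) (by omega) h'
    · rw [sh1, add_add_cast] at h'
      exact self_ne_shift u (by omega) (by omega) h'
  · exact absurd hu' (Finset.notMem_empty u)

/-- condition (b) of the potential -/
lemma keyB {D S : Finset (Fin (d+4))} {v : Fin (d+4)} (hvD : v ∉ D) (hvS : v ∉ S) :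
    fT D S ≤ fF (insert v D) S + 1 := by
  rw [fT]
  split_ifs with h1 h2 h3 h4
  · exact Nat.zero_le _
  · -- D = ∅
    subst h2
    rw [fF]
    split_ifs with g1 g2 g3
    · exact absurd g1 (UU_ne_empty_of_mem (UU_singleton_ne v))
    · exact absurd g2 (Finset.insert_ne_empty v ∅)
    · omega
    · have := Sig_singleton_lower v; omega
  · -- doomT
    obtain ⟨hdf, hne⟩ := doomT_step h3 hvD hvS
    rw [fF]
    rw [if_neg hne, if_neg (Finset.insert_ne_empty v D), if_pos hdf]
    omega
  · -- delta = 1 branch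
    have := fF_lower D S v
    omega
  · -- delta = 0 branch
    push_neg at h4
    have := h4 v hvD hvS
    omega

end CycleLower2

section CycleLower3

open Finset

variable {d : ℕ}

lemma Sig_drop_one (D : Finset (Fin (d+4))) (w : Fin (d+4))
    (hsub : ∀ T, T ⊆ UU D → Ind T → (T ∩ nbr w).card ≤ 1) :
    Sig D ≤ Sig (insert w D) + 1 := by
  obtain ⟨T, hT, hI, hc⟩ := Sig_exists D
  have h1 := Sig_ge (sdiff_nbr_subset_UU_insert (v := w) hT) (Ind_subset (Finset.sdiff_subset) hI)
  have h2 := Finset.card_sdiff_add_card_inter T (nbr w)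
  have h3 := hsub T hT hI
  omega

lemma consec_pair_card {T : Finset (Fin (d+4))} (hI : Ind T) (x : Fin (d+4)) :
    (T ∩ {x, x+1}).card ≤ 1 := by
  by_cases hx : x ∈ T
  · have hx1 := hI x hx
    have hsub : T ∩ {x, x+1} ⊆ {x} := by
      intro y hy
      rw [Finset.mem_inter, Finset.mem_insert, Finset.mem_singleton] at hy
      rcases hy.2 with h | h
      · rw [Finset.mem_singleton]; exact h
      · exact absurd (h ▸ hy.1) hx1
    exact (Finset.card_le_card hsub).trans (by simp)
  · have hsub : T ∩ {x, x+1} ⊆ {x+1} := by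
      intro y hy
      rw [Finset.mem_inter, Finset.mem_insert, Finset.mem_singleton] at hy
      rcases hy.2 with h | h
      · exact absurd (h ▸ hy.1) hx
      · rw [Finset.mem_singleton]; exact h
    exact (Finset.card_le_card hsub).trans (by simp)

lemma not_mem_UU_elim {x : Fin (d+4)} {D : Finset (Fin (d+4))} (h : x ∉ UU D) :
    ∃ u ∈ D, u ∈ nbr x := by
  rw [mem_UU] at h
  push_neg at h
  obtain ⟨u, hu, hnb⟩ := h
  exact ⟨u, hu, hnb⟩

lemma indU_inter {D : Finset (Fin (d+4))} (hIndU : ∀ a ∈ UU D, a + 1 ∉ UU D)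
    {w : Fin (d+4)} (hwD : w ∉ D) :
    ∀ T, T ⊆ UU D → Ind T → (T ∩ nbr w).card ≤ 1 := by
  intro T hT hI
  by_cases hwU : w ∈ UU D
  · have hsub : T ∩ nbr w ⊆ {w} := by
      intro x hx
      rw [Finset.mem_inter] at hx
      rcases mem_nbr.mp hx.2 with h' | h' | h'
      · exfalso
        have hxU := hT hx.1
        rw [h'] at hxU
        have := hIndU (w-1) hxU
        rw [show w-1+1 = w by ring] at this
        exact this hwU
      · rw [Finset.mem_singleton]; exact h'
      · exfalso
        have := hIndU w hwU
        rw [h'] at hx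
        exact this (hT hx.1)
    exact (Finset.card_le_card hsub).trans (by simp)
  · obtain ⟨u, huD, hunb⟩ := not_mem_UU_elim hwU
    rcases mem_nbr.mp hunb with h' | h' | h'
    · -- u = w - 1 ∈ D
      have hsub : T ∩ nbr w ⊆ {w+1} := by
        intro x hx
        rw [Finset.mem_inter] at hx
        rcases mem_nbr.mp hx.2 with h'' | h'' | h''
        · exfalso
          have := UU_not_mem_D (hT hx.1)
          rw [h''] at this
          exact this (h' ▸ huD)
        · exact absurd (h'' ▸ hT hx.1) hwU
        · rw [Finset.mem_singleton]; exact h''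
      exact (Finset.card_le_card hsub).trans (by simp)
    · exact absurd (h' ▸ huD) hwD
    · -- u = w + 1 ∈ D
      have hsub : T ∩ nbr w ⊆ {w-1} := by
        intro x hx
        rw [Finset.mem_inter] at hx
        rcases mem_nbr.mp hx.2 with h'' | h'' | h''
        · rw [Finset.mem_singleton]; exact h''
        · exact absurd (h'' ▸ hT hx.1) hwU
        · exfalso
          have := UU_not_mem_D (hT hx.1)
          rw [h''] at this
          exact this (h' ▸ huD)
      exact (Finset.card_le_card hsub).trans (by simp)

lemma exists_boundary_pair {D : Finset (Fin (d+4))} (hD : D.Nonempty)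
    {a : Fin (d+4)} (haU : a ∈ UU D) (ha1U : a + 1 ∈ UU D) :
    ∃ s, s ∈ UU D ∧ s - 1 ∈ UU D ∧ s - 2 ∉ UU D := by
  classical
  obtain ⟨e, heD⟩ := hD
  have hex : ∃ k : ℕ, a + 1 - ((k : ℕ) : Fin (d+4)) ∉ UU D := by
    refine ⟨(a + 1 - e).val, ?_⟩
    rw [Fin.cast_val_eq_self, show a + 1 - (a + 1 - e) = e by ring]
    exact fun h => UU_not_mem_D h heD
  have hk2 : 2 ≤ Nat.find hex := by
    by_contra hlt
    push_neg at hlt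
    have hspec := Nat.find_spec hex
    interval_cases h : Nat.find hex
    · rw [Nat.cast_zero, sub_zero] at hspec
      exact hspec ha1U
    · rw [Nat.cast_one, show a + 1 - 1 = a by ring] at hspec
      exact hspec haU
  set k0 := Nat.find hex with hk0
  have hgs : ∀ k : ℕ, a + 1 - (((k+1 : ℕ)) : Fin (d+4)) = a + 1 - ((k : ℕ) : Fin (d+4)) - 1 := by
    intro k; rw [Nat.cast_add, Nat.cast_one]; ring
  refine ⟨a + 1 - ((k0 - 2 : ℕ) : Fin (d+4)), ?_, ?_, ?_⟩
  · exact not_not.mp (Nat.find_min hex (by omega))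
  · rw [show a + 1 - ((k0 - 2 : ℕ) : Fin (d+4)) - 1 = a + 1 - (((k0-2)+1 : ℕ) : Fin (d+4)) from
      (hgs _).symm, show k0-2+1 = k0-1 by omega]
    exact not_not.mp (Nat.find_min hex (by omega))
  · rw [show a + 1 - ((k0 - 2 : ℕ) : Fin (d+4)) - 2 = a + 1 - (((k0-2)+1 : ℕ) : Fin (d+4)) - 1 by
        rw [hgs]; ring,
      show a + 1 - (((k0-2)+1 : ℕ) : Fin (d+4)) - 1 = a + 1 - (((k0-2)+1+1 : ℕ) : Fin (d+4)) from
      (hgs _).symm, show k0-2+1+1 = k0 by omega]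
    exact Nat.find_spec hex

/-- condition (c) of the potential -/
lemma keyC {D S : Finset (Fin (d+4))} (hne : D ∪ S ≠ Finset.univ) :
    ∃ v, v ∉ D ∧ v ∉ S ∧ fF D S ≤ fT D (insert v S) := by
  classical
  have hfree : ∃ z, z ∉ D ∧ z ∉ S := by
    by_contra hc
    push_neg at hc
    refine hne (Finset.eq_univ_iff_forall.mpr (fun z => ?_))
    by_cases h : z ∈ D
    · exact Finset.mem_union_left _ h
    · exact Finset.mem_union_right _ (hc z h)
  rw [fF]
  split_ifs with h1 h2 h3
  · obtain ⟨z, hz1, hz2⟩ := hfree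
    exact ⟨z, hz1, hz2, Nat.zero_le _⟩
  · obtain ⟨z, hz1, hz2⟩ := hfree
    refine ⟨z, hz1, hz2, ?_⟩
    rw [fT, if_neg h1, if_pos h2]
  · obtain ⟨v, hv1, hv2, hdT⟩ := doomF_step h3 hfree
    refine ⟨v, hv1, hv2, ?_⟩
    rw [fT, if_neg h1, if_neg h2, if_pos hdT]
  · -- live case, fF = Sig D
    by_cases hadj : ∃ a ∈ UU D, a + 1 ∈ UU D
    · -- case (i)
      obtain ⟨a, haU, ha1U⟩ := hadj
      obtain ⟨s, hsU, hs1U, hs2U⟩ :=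
        exists_boundary_pair (Finset.nonempty_iff_ne_empty.mpr h2) haU ha1U
      have hs2D : s - 2 ∉ D :=
        fun hD => (mem_UU.mp hs1U) _ hD (mem_nbr.mpr (Or.inl (by ring)))
      have hsS : s ∉ S := fun hS => h3 ⟨s, hS, hsU, Or.inr (Or.inr (Or.inl hs2D))⟩
      have hsD : s ∉ D := UU_not_mem_D hsU
      refine ⟨s, hsD, hsS, ?_⟩
      rw [fT, if_neg h1, if_neg h2]
      split_ifs with g1 g2
      · exact Sig_le D
      · exfalso
        obtain ⟨w, hwD, hwS', hdrop⟩ := g2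
        have hws : w ≠ s := fun h => hwS' (h ▸ Finset.mem_insert_self s S)
        rw [fF] at hdrop
        split_ifs at hdrop with k1 k2 k3
        · -- dominating move w : impossible
          have hUsub : ∀ x ∈ UU D, x ∈ nbr w := by
            intro x hx
            by_contra hxn
            have : x ∈ UU (insert w D) :=
              mem_UU_insert.mpr ⟨hx, fun hn => hxn (nbr_symm.mp hn)⟩
            rw [k1] at this
            exact absurd this (Finset.notMem_empty x)
          have hw : w = s - 1 := by
            rcases mem_nbr.mp (hUsub s hsU) with h' | h' | h'
            · exfalso
              have h'' : w = s + 1 := by rw [h']; ring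
              subst h''
              rcases mem_nbr.mp (hUsub _ hs1U) with h3' | h3' | h3'
              · rw [show s+1-1 = s by ring] at h3'; exact ne_m1_self s h3'
              · exact ne_m1_p1 s h3'
              · rw [show s+1+1 = s+2 by ring] at h3'; exact ne_p2_m1 s h3'.symm
            · exact absurd h'.symm hws
            · rw [h']; ring
          subst hw
          have hSig1 : Sig D ≤ 1 := by
            obtain ⟨T, hT, hI, hc⟩ := Sig_exists D
            rw [← hc]
            have hsub : T ⊆ {s - 1, s} := by
              intro x hx
              rcases mem_nbr.mp (hUsub x (hT hx)) with h' | h' | h'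
              · exfalso
                rw [show s-1-1 = s-2 by ring] at h'
                exact hs2U (h' ▸ hT hx)
              · rw [Finset.mem_insert]; exact Or.inl h'
              · rw [show s-1+1 = s by ring] at h'
                rw [Finset.mem_insert, Finset.mem_singleton]; exact Or.inr h'
            have heq : T ∩ {s-1, (s-1)+1} = T := by
              rw [show (s-1)+1 = s by ring]
              exact Finset.inter_eq_left.mpr hsub
            have := consec_pair_card hI (s-1)
            rw [heq] at this
            exact this
          omega
        · exact absurd k2 (Finset.insert_ne_empty w D)
        · have := Sig_le D; omega
        · -- live after w : per-move analysis
          by_cases hw1 : w = s - 1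
          · subst hw1
            have hd1 : Sig D ≤ Sig (insert (s-1) D) + 1 := by
              refine Sig_drop_one D (s-1) (fun T hT hI => ?_)
              have hsub : T ∩ nbr (s-1) ⊆ T ∩ {s-1, (s-1)+1} := by
                intro x hx
                rw [Finset.mem_inter] at hx ⊢
                refine ⟨hx.1, ?_⟩
                rcases mem_nbr.mp hx.2 with h' | h' | h'
                · exfalso
                  rw [show s-1-1 = s-2 by ring] at h'
                  exact hs2U (h' ▸ hT hx.1)
                · rw [Finset.mem_insert]; exact Or.inl h'
                · rw [Finset.mem_insert, Finset.mem_singleton]; exact Or.inr h'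
              exact (Finset.card_le_card hsub).trans (consec_pair_card hI (s-1))
            omega
          · by_cases hw2 : w = s + 1
            · subst hw2
              obtain ⟨T, hT, hI, hc⟩ := Sig_exists D
              by_cases hboth : s ∈ T ∧ s + 2 ∈ T
              · -- replacement surgery : T' = insert (s-1) (T \ nbr (s+1))
                have hsm1T : s - 1 ∉ T := by
                  intro h
                  have := hI (s-1) h
                  rw [show s-1+1 = s by ring] at this
                  exact this hboth.1
                have hsnb : s ∈ nbr (s+1) := mem_nbr.mpr (Or.inl (by ring))
                have hs2nb : s + 2 ∈ nbr (s+1) := mem_nbr.mpr (Or.inr (Or.inr (by ring)))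
                have hT'sub : insert (s-1) (T \ nbr (s+1)) ⊆ UU (insert (s+1) D) := by
                  intro x hx
                  rcases Finset.mem_insert.mp hx with rfl | hx'
                  · refine mem_UU_insert.mpr ⟨hs1U, ?_⟩
                    rw [mem_nbr]
                    rintro (h' | h' | h')
                    · rw [show s-1-1 = s-2 by ring] at h'; exact ne_m2_p1 s h'.symm
                    · exact ne_m1_p1 s h'.symm
                    · rw [show s-1+1 = s by ring] at h'; exact ne_p1_self s h'
                  · exact sdiff_nbr_subset_UU_insert hT hx'
                have hT'ind : Ind (insert (s-1) (T \ nbr (s+1))) := by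
                  intro x hx hx1
                  rcases Finset.mem_insert.mp hx with rfl | hx'
                  · rw [show s-1+1 = s by ring] at hx1
                    rcases Finset.mem_insert.mp hx1 with h' | h'
                    · exact ne_m1_self s h'.symm
                    · exact (Finset.mem_sdiff.mp h').2 hsnb
                  · rcases Finset.mem_insert.mp hx1 with h' | h'
                    · have hx2 : x = s - 2 := by linear_combination h'
                      rw [hx2] at hx'
                      exact hs2U (hT (Finset.mem_sdiff.mp hx').1)
                    · exact hI x (Finset.mem_sdiff.mp hx').1 (Finset.mem_sdiff.mp h').1
                have hinter : T ∩ nbr (s+1) = {s, s+2} := by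
                  ext x
                  rw [Finset.mem_inter, Finset.mem_insert, Finset.mem_singleton]
                  constructor
                  · rintro ⟨hxT, hxnb⟩
                    rcases mem_nbr.mp hxnb with h' | h' | h'
                    · left; rw [h']; ring
                    · exfalso
                      rw [h'] at hxT
                      exact (hI s hboth.1) hxT
                    · right; rw [h']; ring
                  · rintro (rfl | rfl)
                    · exact ⟨hboth.1, hsnb⟩
                    · exact ⟨hboth.2, hs2nb⟩
                have hcardinter : (T ∩ nbr (s+1)).card = 2 := by
                  rw [hinter]
                  rw [Finset.card_insert_of_notMem (by
                    rw [Finset.mem_singleton]; exact fun h => ne_p2_self s h.symm)]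
                  simp
                have hcard' : (insert (s-1) (T \ nbr (s+1))).card = T.card - 1 := by
                  rw [Finset.card_insert_of_notMem
                    (fun h => hsm1T (Finset.mem_sdiff.mp h).1)]
                  have := Finset.card_sdiff_add_card_inter T (nbr (s+1))
                  omega
                have hge := Sig_ge hT'sub hT'ind
                have hTpos : 1 ≤ T.card := by
                  rw [hc]; exact Sig_pos hsU
                omega
              · -- intersection at most 1 for this particular T
                have h1' := Sig_ge (sdiff_nbr_subset_UU_insert (v := s+1) hT)
                  (Ind_subset (Finset.sdiff_subset) hI)
                have h2' := Finset.card_sdiff_add_card_inter T (nbr (s+1))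
                have h3' : (T ∩ nbr (s+1)).card ≤ 1 := by
                  by_cases hsp1 : s + 1 ∈ T
                  · have hsub : T ∩ nbr (s+1) ⊆ {s+1} := by
                      intro x hx
                      rw [Finset.mem_inter] at hx
                      rcases mem_nbr.mp hx.2 with h' | h' | h'
                      · exfalso
                        have hxs : x = s := by linear_combination h'
                        rw [hxs] at hx
                        exact (hI s hx.1) hsp1
                      · rw [Finset.mem_singleton]; exact h'
                      · exfalso
                        have := hI (s+1) hsp1
                        rw [show s+1+1 = s+2 by ring] at this
                        have hxs : x = s + 2 := by linear_combination h'
                        rw [hxs] at hx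
                        exact this hx.1
                    exact (Finset.card_le_card hsub).trans (by simp)
                  · by_cases hsT : s ∈ T
                    · have hsub : T ∩ nbr (s+1) ⊆ {s} := by
                        intro x hx
                        rw [Finset.mem_inter] at hx
                        rcases mem_nbr.mp hx.2 with h' | h' | h'
                        · rw [Finset.mem_singleton]; linear_combination h'
                        · exact absurd (h' ▸ hx.1) hsp1
                        · exfalso
                          have hxs : x = s + 2 := by linear_combination h'
                          exact hboth ⟨hsT, hxs ▸ hx.1⟩
                      exact (Finset.card_le_card hsub).trans (by simp)
                    · have hsub : T ∩ nbr (s+1) ⊆ {s+2} := by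
                        intro x hx
                        rw [Finset.mem_inter] at hx
                        rcases mem_nbr.mp hx.2 with h' | h' | h'
                        · exfalso
                          have hxs : x = s := by linear_combination h'
                          exact hsT (hxs ▸ hx.1)
                        · exact absurd (h' ▸ hx.1) hsp1
                        · rw [Finset.mem_singleton]; linear_combination h'
                      exact (Finset.card_le_card hsub).trans (by simp)
                omega
            · by_cases hw3 : w = s - 2
              · subst hw3
                obtain ⟨u, huD, hunb⟩ := not_mem_UU_elim hs2U
                have hu : u = s - 2 - 1 := by
                  rcases mem_nbr.mp hunb with h' | h' | h'
                  · exact h'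
                  · exact absurd (h' ▸ huD) hwD
                  · exfalso
                    rw [show s-2+1 = s-1 by ring] at h'
                    exact UU_not_mem_D hs1U (h' ▸ huD)
                have hd1 : Sig D ≤ Sig (insert (s-2) D) + 1 := by
                  refine Sig_drop_one D (s-2) (fun T hT hI => ?_)
                  have hsub : T ∩ nbr (s-2) ⊆ {s-1} := by
                    intro x hx
                    rw [Finset.mem_inter] at hx
                    rcases mem_nbr.mp hx.2 with h' | h' | h'
                    · exfalso
                      rw [← hu] at h'
                      exact UU_not_mem_D (hT hx.1) (h' ▸ huD)
                    · exact absurd (h' ▸ hT hx.1) hs2U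
                    · rw [Finset.mem_singleton, h']; ring
                  exact (Finset.card_le_card hsub).trans (by simp)
                omega
              · -- otherwise: doomF follows, contradicting k3
                refine k3 ⟨s, Finset.mem_insert_self s S, ?_, Or.inr (Or.inr (Or.inl ?_))⟩
                · refine mem_UU_insert.mpr ⟨hsU, ?_⟩
                  rw [mem_nbr]
                  rintro (h' | h' | h')
                  · exact hw1 h'
                  · exact hws h'
                  · exact hw2 h'
                · rw [Finset.mem_insert]
                  rintro (h | h)
                  · exact hw3 h.symm
                  · exact hs2D h
      · exact le_refl _
    · -- case (ii) : UU D is independent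
      push_neg at hadj
      obtain ⟨z, hz1, hz2⟩ := hfree
      refine ⟨z, hz1, hz2, ?_⟩
      rw [fT, if_neg h1, if_neg h2]
      split_ifs with g1 g2
      · exact Sig_le D
      · exfalso
        obtain ⟨w, hwD, hwS', hdrop⟩ := g2
        rw [fF] at hdrop
        split_ifs at hdrop with k1 k2 k3
        · -- dominating move : Sig D ≤ 1
          have hSig1 : Sig D ≤ 1 := by
            obtain ⟨T, hT, hI, hc⟩ := Sig_exists D
            rw [← hc]
            have hTnb : T ⊆ nbr w := by
              intro x hx
              by_contra hxn
              have : x ∈ UU (insert w D) :=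
                mem_UU_insert.mpr ⟨hT hx, fun hn => hxn (nbr_symm.mp hn)⟩
              rw [k1] at this
              exact absurd this (Finset.notMem_empty x)
            have := indU_inter hadj hwD T hT hI
            rwa [Finset.inter_eq_left.mpr hTnb] at this
          omega
        · exact absurd k2 (Finset.insert_ne_empty w D)
        · have := Sig_le D; omega
        · have := Sig_drop_one D w (indU_inter hadj hwD)
          omega
      · exact le_refl _

end CycleLower3

section MainLower

open Finset

variable {d : ℕ}

theorem cycle_lower {t : Bool} {k : ℕ} {D S : Finset (Fin (d+4))}
    (h : MBWin (SimpleGraph.cycleGraph (d+4)) ∅ t k D S) :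
    cond t (fT D S) (fF D S) ≤ k := by
  induction h with
  | win t k D S hdom =>
    have hU : UU D = ∅ := dominates_iff_UU.mp hdom
    cases t
    · show fF D S ≤ k
      rw [fF, if_pos hU]
      exact Nat.zero_le k
    · show fT D S ≤ k
      rw [fT, if_pos hU]
      exact Nat.zero_le k
  | dmove k D S v hvD hvS hw ih =>
    show fT D S ≤ k + 1
    have h1 := keyB (S := S) hvD hvS
    have ih' : fF (insert v D) S ≤ k := ih
    omega
  | smove k D S hne2 hall ih =>
    show fF D S ≤ k
    obtain ⟨v, hv1, hv2, hle⟩ := keyC hne2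
    exact hle.trans (ih v hv1 hv2)

lemma UU_empty_mem : (0 : Fin (d+4)) ∈ UU (∅ : Finset (Fin (d+4))) :=
  mem_UU.mpr (fun u hu => absurd hu (Finset.notMem_empty u))

theorem cycle_lower_start {t : Bool} {m : ℕ}
    (h : MBWin (SimpleGraph.cycleGraph (d+4)) ∅ t m (∅ : Finset (Fin (d+4))) ∅) :
    (d+4)/2 ≤ m := by
  have hU : UU (∅ : Finset (Fin (d+4))) ≠ ∅ := UU_ne_empty_of_mem UU_empty_mem
  have := cycle_lower h
  cases t
  · rw [fF, if_neg hU, if_pos rfl] at this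
    exact this
  · rw [fT, if_neg hU, if_pos rfl] at this
    exact this

end MainLower

section Final

lemma dom_empty_absurd_three : ¬ Dominates (SimpleGraph.cycleGraph 3) ∅ (∅ : Finset (Fin 3)) := by
  intro h
  obtain ⟨u, hu, _⟩ := h 0 (Set.notMem_empty 0)
  exact absurd hu (Finset.notMem_empty u)

lemma three_lower {t : Bool} {m : ℕ}
    (h : MBWin (SimpleGraph.cycleGraph 3) ∅ t m (∅ : Finset (Fin 3)) ∅) : 1 ≤ m := by
  rcases Nat.eq_zero_or_pos m with rfl | hm
  · exfalso
    cases t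
    · cases h with
      | win _ _ _ _ hdom => exact dom_empty_absurd_three hdom
      | smove _ _ _ hne hall =>
        have h0 := hall 0 (Finset.notMem_empty 0) (Finset.notMem_empty 0)
        cases h0 with
        | win _ _ _ _ hdom => exact dom_empty_absurd_three hdom
    · cases h with
      | win _ _ _ _ hdom => exact dom_empty_absurd_three hdom
  · exact hm

lemma sInf_image_eq {P : ℕ → Prop} {K : ℕ} (hK : P K) (hlow : ∀ m, P m → K ≤ m) :
    sInf ((fun m : ℕ => (m : ℕ∞)) '' {m | P m}) = (K : ℕ∞) := by
  apply le_antisymm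
  · exact sInf_le ⟨K, hK, rfl⟩
  · apply le_sInf
    rintro b ⟨m, hm, rfl⟩
    show (K : ℕ∞) ≤ (m : ℕ∞)
    exact_mod_cast hlow m hm

end Final


/-- For every integer `n ≥ 3`, the cycle `C_n` satisfies
`γ_MB(C_n) = γ_MB'(C_n) = ⌊n/2⌋`. -/
theorem gammaMB_cycle (n : ℕ) (hn : 3 ≤ n) :
    gammaMB (SimpleGraph.cycleGraph n) = ((n / 2 : ℕ) : ℕ∞) ∧
    gammaMB' (SimpleGraph.cycleGraph n) = ((n / 2 : ℕ) : ℕ∞) := by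
  obtain ⟨c, rfl⟩ : ∃ c, n = c + 3 := ⟨n - 3, by omega⟩
  have hup := cycle_upper c
  have hlow : ∀ (t : Bool) (m : ℕ),
      MBWin (SimpleGraph.cycleGraph (c+3)) ∅ t m (∅ : Finset (Fin (c+3))) ∅ →
      (c+3)/2 ≤ m := by
    intro t m h
    rcases Nat.eq_zero_or_pos c with rfl | hc
    · exact three_lower h
    · obtain ⟨e, rfl⟩ : ∃ e, c = e + 1 := ⟨c - 1, by omega⟩
      exact cycle_lower_start (d := e) h
  constructor
  · rw [gammaMB, gammaMBRes]
    exact sInf_image_eq hup.1 (hlow true)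
  · rw [gammaMB', gammaMBRes']
    exact sInf_image_eq hup.2 (hlow false)
end

section
/- If G and H are finite simple graphs and G ∪ H denotes their disjoint union, then γ_MB(G) + γ_MB(H) ≤ γ_MB(G ∪ H) ≤ min{γ_MB'(G) + γ_MB(H), γ_MB(G) + γ_MB'(H)} and max{γ_MB'(G) + γ_MB(H), γ_MB(G) + γ_MB'(H)} ≤ γ_MB'(G ∪ H) ≤ γ_MB'(G) + γ_MB'(H), with the convention that a sum involving ∞ equals ∞. -/
variable {V : Type*}

open Finset

namespace MBAux
variable [Fintype V] [DecidableEq V]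
open scoped Classical in
noncomputable def val (G : SimpleGraph V) (A : Set V) : Bool → Finset V → Finset V → ℕ∞
  | true, D, S =>
    if Dominates G A D then 0
    else (Finset.univ \ (D ∪ S)).attach.inf fun v => 1 + val G A false (insert v.1 D) S
  | false, D, S =>
    if Dominates G A D then 0
    else if D ∪ S = Finset.univ then ⊤
    else (Finset.univ \ (D ∪ S)).attach.sup fun v => val G A true D (insert v.1 S)
  termination_by t D S => (Finset.univ \ (D ∪ S)).card
  decreasing_by
  · have hv := v.2
    apply Finset.card_lt_card
    have hsub : Finset.univ \ (insert v.1 D ∪ S) ⊆ Finset.univ \ (D ∪ S) := by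
      apply Finset.sdiff_subset_sdiff (le_refl _)
      exact Finset.union_subset_union (Finset.subset_insert _ _) (le_refl _)
    rw [Finset.ssubset_iff_of_subset hsub]
    exact ⟨v.1, hv, by simp⟩
  · have hv := v.2
    apply Finset.card_lt_card
    have hsub : Finset.univ \ (D ∪ insert v.1 S) ⊆ Finset.univ \ (D ∪ S) := by
      apply Finset.sdiff_subset_sdiff (le_refl _)
      exact Finset.union_subset_union (le_refl _) (Finset.subset_insert _ _)
    rw [Finset.ssubset_iff_of_subset hsub]
    exact ⟨v.1, hv, by simp⟩

variable {G : SimpleGraph V} {A : Set V} {D S : Finset V}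

lemma val_true_of_dom (h : Dominates G A D) : val G A true D S = 0 := by rw [val, if_pos h]
lemma val_false_of_dom (h : Dominates G A D) : val G A false D S = 0 := by rw [val, if_pos h]
lemma val_true_of_not_dom (h : ¬Dominates G A D) :
    val G A true D S =
      (Finset.univ \ (D ∪ S)).attach.inf fun v => 1 + val G A false (insert v.1 D) S := by
  rw [val, if_neg h]
lemma val_false_of_full (h : ¬Dominates G A D) (h2 : D ∪ S = Finset.univ) :
    val G A false D S = ⊤ := by rw [val, if_neg h, if_pos h2]
lemma val_false_of_not (h : ¬Dominates G A D) (h2 : D ∪ S ≠ Finset.univ) :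
    val G A false D S =
      (Finset.univ \ (D ∪ S)).attach.sup fun v => val G A true D (insert v.1 S) := by
  rw [val, if_neg h, if_neg h2]

lemma card_free_insert_left_lt {v : V} (hv : v ∈ Finset.univ \ (D ∪ S)) :
    (Finset.univ \ (insert v D ∪ S)).card < (Finset.univ \ (D ∪ S)).card := by
  apply Finset.card_lt_card
  have hsub : Finset.univ \ (insert v D ∪ S) ⊆ Finset.univ \ (D ∪ S) := by
    apply Finset.sdiff_subset_sdiff (le_refl _)
    exact Finset.union_subset_union (Finset.subset_insert _ _) (le_refl _)
  rw [Finset.ssubset_iff_of_subset hsub]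
  exact ⟨v, hv, by simp⟩

lemma card_free_insert_right_lt {v : V} (hv : v ∈ Finset.univ \ (D ∪ S)) :
    (Finset.univ \ (D ∪ insert v S)).card < (Finset.univ \ (D ∪ S)).card := by
  apply Finset.card_lt_card
  have hsub : Finset.univ \ (D ∪ insert v S) ⊆ Finset.univ \ (D ∪ S) := by
    apply Finset.sdiff_subset_sdiff (le_refl _)
    exact Finset.union_subset_union (le_refl _) (Finset.subset_insert _ _)
  rw [Finset.ssubset_iff_of_subset hsub]
  exact ⟨v, hv, by simp⟩

lemma smono_pass (G : SimpleGraph V) (A : Set V) : ∀ n : ℕ,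
    (∀ (t : Bool) (D S₁ S₂ : Finset V), S₁ ⊆ S₂ →
      (Finset.univ \ (D ∪ S₁)).card ≤ n → val G A t D S₁ ≤ val G A t D S₂) ∧
    (∀ D S : Finset V, (Finset.univ \ (D ∪ S)).card ≤ n →
      val G A true D S ≤ val G A false D S) := by
  intro n
  induction n using Nat.strong_induction_on with
  | _ n ih =>
  have hsm : ∀ (t : Bool) (D S₁ S₂ : Finset V), S₁ ⊆ S₂ →
      (Finset.univ \ (D ∪ S₁)).card ≤ n → val G A t D S₁ ≤ val G A t D S₂ := by
    intro t D S₁ S₂ hsub hcard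
    by_cases hdom : Dominates G A D
    · cases t
      · rw [val_false_of_dom hdom]; exact zero_le
      · rw [val_true_of_dom hdom]; exact zero_le
    · cases t
      · -- t = false
        by_cases hfull2 : D ∪ S₂ = Finset.univ
        · rw [val_false_of_full hdom hfull2]; exact le_top
        · have hfull1 : D ∪ S₁ ≠ Finset.univ := by
            intro h
            exact hfull2 (Finset.univ_subset_iff.1
              (h ▸ Finset.union_subset_union (le_refl _) hsub))
          rw [val_false_of_not hdom hfull1]
          apply Finset.sup_le
          rintro ⟨s, hs⟩ -
          have hsD : s ∉ D := by
            rw [Finset.mem_sdiff, Finset.mem_union] at hs; tauto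
          by_cases hs2 : s ∈ S₂
          · -- use smono then pass at strictly smaller measures
            have hlt1 : (Finset.univ \ (D ∪ insert s S₁)).card < n :=
              lt_of_lt_of_le (card_free_insert_right_lt hs) hcard
            have h1 : val G A true D (insert s S₁) ≤ val G A true D S₂ :=
              (ih _ hlt1).1 true D (insert s S₁) S₂
                (Finset.insert_subset hs2 hsub) (le_refl _)
            have hlt2 : (Finset.univ \ (D ∪ S₂)).card < n := by
              refine lt_of_lt_of_le ?_ hcard
              apply Finset.card_lt_card
              have hsub2 : Finset.univ \ (D ∪ S₂) ⊆ Finset.univ \ (D ∪ S₁) :=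
                Finset.sdiff_subset_sdiff (le_refl _)
                  (Finset.union_subset_union (le_refl _) hsub)
              rw [Finset.ssubset_iff_of_subset hsub2]
              refine ⟨s, hs, by simp [hs2]⟩
            exact h1.trans ((ih _ hlt2).2 D S₂ (le_refl _))
          · have hsfree : s ∈ Finset.univ \ (D ∪ S₂) := by
              simp only [Finset.mem_sdiff, Finset.mem_union] at hs ⊢
              tauto
            have hlt1 : (Finset.univ \ (D ∪ insert s S₁)).card < n :=
              lt_of_lt_of_le (card_free_insert_right_lt hs) hcard
            refine le_trans ((ih _ hlt1).1 true D (insert s S₁) (insert s S₂)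
              (Finset.insert_subset_insert _ hsub) (le_refl _)) ?_
            rw [val_false_of_not hdom hfull2]
            exact Finset.le_sup (f := fun v => val G A true D (insert v.1 S₂))
              (Finset.mem_attach _ ⟨s, hsfree⟩)
      · -- t = true
        rw [val_true_of_not_dom hdom, val_true_of_not_dom hdom]
        apply Finset.le_inf
        rintro ⟨v, hv⟩ -
        have hv1 : v ∈ Finset.univ \ (D ∪ S₁) := by
          simp only [Finset.mem_sdiff, Finset.mem_union] at hv ⊢
          push_neg at hv ⊢
          exact ⟨hv.1, hv.2.1, fun hmem => hv.2.2 (hsub hmem)⟩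
        refine le_trans (Finset.inf_le (Finset.mem_attach _ ⟨v, hv1⟩)) ?_
        have hlt : (Finset.univ \ (insert v D ∪ S₁)).card < n :=
          lt_of_lt_of_le (card_free_insert_left_lt hv1) hcard
        exact add_le_add_right ((ih _ hlt).1 false (insert v D) S₁ S₂ hsub (le_refl _)) 1
  refine ⟨hsm, ?_⟩
  intro D S hcard
  by_cases hdom : Dominates G A D
  · rw [val_true_of_dom hdom]; exact zero_le
  · by_cases hfull : D ∪ S = Finset.univ
    · rw [val_false_of_full hdom hfull]; exact le_top
    · rw [val_false_of_not hdom hfull]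
      have hne : (Finset.univ \ (D ∪ S)).Nonempty := by
        rw [Finset.sdiff_nonempty]
        intro h
        exact hfull (Finset.univ_subset_iff.1 h)
      obtain ⟨s, hs⟩ := hne
      refine le_trans ?_ (Finset.le_sup (Finset.mem_attach _ ⟨s, hs⟩))
      exact hsm true D S (insert s S) (Finset.subset_insert _ _) hcard

lemma val_smono (t : Bool) (D : Finset V) {S₁ S₂ : Finset V} (h : S₁ ⊆ S₂) :
    val G A t D S₁ ≤ val G A t D S₂ :=
  (smono_pass G A _).1 t D S₁ S₂ h (le_refl _)

lemma val_pass (D S : Finset V) : val G A true D S ≤ val G A false D S :=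
  (smono_pass G A _).2 D S (le_refl _)

lemma val_le_of_win {t : Bool} {k : ℕ} (h : MBWin G A t k D S) : val G A t D S ≤ k := by
  induction h with
  | win t k D S hdom =>
    cases t
    · rw [val_false_of_dom hdom]; exact zero_le
    · rw [val_true_of_dom hdom]; exact zero_le
  | dmove k D S v hvD hvS h ih =>
    by_cases hdom : Dominates G A D
    · rw [val_true_of_dom hdom]; exact zero_le
    · rw [val_true_of_not_dom hdom]
      have hv : v ∈ Finset.univ \ (D ∪ S) := by simp [hvD, hvS]
      refine le_trans (Finset.inf_le (Finset.mem_attach _ ⟨v, hv⟩)) ?_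
      calc 1 + val G A false (insert v D) S ≤ 1 + (k : ℕ∞) := add_le_add_right ih 1
        _ = ((k + 1 : ℕ) : ℕ∞) := by push_cast; ring
  | smove k D S hfull h ih =>
    by_cases hdom : Dominates G A D
    · rw [val_false_of_dom hdom]; exact zero_le
    · rw [val_false_of_not hdom hfull]
      apply Finset.sup_le
      rintro ⟨v, hv⟩ -
      rw [Finset.mem_sdiff, Finset.mem_union] at hv
      push_neg at hv
      exact ih v hv.2.1 hv.2.2

lemma win_of_val_le : ∀ (n : ℕ) (t : Bool) (k : ℕ) (D S : Finset V),
    (Finset.univ \ (D ∪ S)).card ≤ n → val G A t D S ≤ k → MBWin G A t k D S := by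
  intro n
  induction n using Nat.strong_induction_on with
  | _ n ih =>
  intro t k D S hcard hle
  by_cases hdom : Dominates G A D
  · exact MBWin.win t k D S hdom
  · cases t
    · -- Staller to move
      by_cases hfull : D ∪ S = Finset.univ
      · rw [val_false_of_full hdom hfull] at hle
        exact absurd (top_le_iff.1 hle).symm (by simp)
      · refine MBWin.smove k D S hfull ?_
        intro v hvD hvS
        have hv : v ∈ Finset.univ \ (D ∪ S) := by simp [hvD, hvS]
        have hlt : (Finset.univ \ (D ∪ insert v S)).card < n :=
          lt_of_lt_of_le (card_free_insert_right_lt hv) hcard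
        refine ih _ hlt true k D (insert v S) (le_refl _) ?_
        refine le_trans ?_ hle
        rw [val_false_of_not hdom hfull]
        exact Finset.le_sup (f := fun w => val G A true D (insert w.1 S))
          (Finset.mem_attach _ ⟨v, hv⟩)
    · -- Dominator to move
      rw [val_true_of_not_dom hdom] at hle
      have hne : (Finset.univ \ (D ∪ S)).Nonempty := by
        by_contra h
        rw [Finset.not_nonempty_iff_eq_empty] at h
        rw [h, Finset.attach_empty, Finset.inf_empty] at hle
        exact absurd (top_le_iff.1 hle).symm (by simp)
      obtain ⟨⟨v, hv⟩, -, heq⟩ :=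
        Finset.exists_mem_eq_inf (Finset.univ \ (D ∪ S)).attach hne.attach
          (fun v => 1 + val G A false (insert v.1 D) S)
      rw [heq] at hle
      have hxne : val G A false (insert v D) S ≠ ⊤ := by
        intro h
        rw [h, add_top] at hle
        exact absurd (top_le_iff.1 hle).symm (by simp)
      lift val G A false (insert v D) S to ℕ using hxne with m hm
      have hk : m + 1 ≤ k := by
        have := hle
        rw [show (1 : ℕ∞) + (m : ℕ∞) = ((m + 1 : ℕ) : ℕ∞) by push_cast; ring] at this
        exact_mod_cast this
      have hvD : v ∉ D := by rw [Finset.mem_sdiff, Finset.mem_union] at hv; tauto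
      have hvS : v ∉ S := by rw [Finset.mem_sdiff, Finset.mem_union] at hv; tauto
      have hlt : (Finset.univ \ (insert v D ∪ S)).card < n :=
        lt_of_lt_of_le (card_free_insert_left_lt hv) hcard
      have hwin : MBWin G A false (k - 1) (insert v D) S := by
        refine ih _ hlt false (k - 1) (insert v D) S (le_refl _) ?_
        rw [← hm]
        exact_mod_cast Nat.le_sub_one_of_lt (Nat.lt_of_lt_of_le (Nat.lt_succ_self m) hk)
      have hk1 : k - 1 + 1 = k := Nat.succ_pred_eq_of_pos (Nat.lt_of_lt_of_le (Nat.succ_pos m) hk)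
      exact hk1 ▸ MBWin.dmove (k - 1) D S v hvD hvS hwin

lemma gammaMBRes_eq_val (G : SimpleGraph V) (A : Set V) :
    gammaMBRes G A = val G A true ∅ ∅ := by
  apply le_antisymm
  · rcases eq_top_or_lt_top (val G A true ∅ ∅) with h | h
    · rw [h]; exact le_top
    · obtain ⟨m, hm⟩ := (WithTop.lt_iff_exists_coe.1 h).imp (fun m hm => hm.1)
      apply sInf_le
      exact ⟨m, win_of_val_le _ true m ∅ ∅ (le_refl _) (le_of_eq hm), hm.symm⟩
  · apply le_sInf
    rintro b ⟨m, hm, rfl⟩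
    exact val_le_of_win hm

lemma gammaMBRes'_eq_val (G : SimpleGraph V) (A : Set V) :
    gammaMBRes' G A = val G A false ∅ ∅ := by
  apply le_antisymm
  · rcases eq_top_or_lt_top (val G A false ∅ ∅) with h | h
    · rw [h]; exact le_top
    · obtain ⟨m, hm⟩ := (WithTop.lt_iff_exists_coe.1 h).imp (fun m hm => hm.1)
      apply sInf_le
      exact ⟨m, win_of_val_le _ false m ∅ ∅ (le_refl _) (le_of_eq hm), hm.symm⟩
  · apply le_sInf
    rintro b ⟨m, hm, rfl⟩
    exact val_le_of_win hm

end MBAux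

namespace MBAux

variable {α β : Type*} [Fintype α] [DecidableEq α] [Fintype β] [DecidableEq β]
variable {G : SimpleGraph α} {H : SimpleGraph β}

lemma disjSum_union (D₁ S₁ : Finset α) (D₂ S₂ : Finset β) :
    D₁.disjSum D₂ ∪ S₁.disjSum S₂ = (D₁ ∪ S₁).disjSum (D₂ ∪ S₂) := by
  ext x
  cases x <;> simp

lemma disjSum_eq_univ {D₁ : Finset α} {D₂ : Finset β} :
    D₁.disjSum D₂ = Finset.univ ↔ D₁ = Finset.univ ∧ D₂ = Finset.univ := by
  simp only [Finset.eq_univ_iff_forall]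
  constructor
  · intro h
    exact ⟨fun a => by simpa using h (Sum.inl a), fun b => by simpa using h (Sum.inr b)⟩
  · rintro ⟨h1, h2⟩ x
    cases x <;> simp [h1 _, h2 _]

lemma insert_inl_disjSum (a : α) (D₁ : Finset α) (D₂ : Finset β) :
    insert (Sum.inl a) (D₁.disjSum D₂) = (insert a D₁).disjSum D₂ := by
  ext x
  cases x <;> simp

lemma insert_inr_disjSum (b : β) (D₁ : Finset α) (D₂ : Finset β) :
    insert (Sum.inr b) (D₁.disjSum D₂) = D₁.disjSum (insert b D₂) := by
  ext x
  cases x <;> simp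

lemma dominates_disjSum {D₁ : Finset α} {D₂ : Finset β} :
    Dominates (G ⊕g H) ∅ (D₁.disjSum D₂) ↔ Dominates G ∅ D₁ ∧ Dominates H ∅ D₂ := by
  constructor
  · intro h
    constructor
    · intro a _
      obtain ⟨u, hu, hadj⟩ := h (Sum.inl a) (Set.notMem_empty _)
      rcases u with u | u
      · rw [Finset.inl_mem_disjSum] at hu
        refine ⟨u, hu, ?_⟩
        simpa using hadj
      · exfalso; simpa using hadj
    · intro b _
      obtain ⟨u, hu, hadj⟩ := h (Sum.inr b) (Set.notMem_empty _)
      rcases u with u | u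
      · exfalso; simpa using hadj
      · rw [Finset.inr_mem_disjSum] at hu
        refine ⟨u, hu, ?_⟩
        simpa using hadj
  · rintro ⟨h1, h2⟩ x _
    rcases x with a | b
    · obtain ⟨u, hu, hadj⟩ := h1 a (Set.notMem_empty _)
      exact ⟨Sum.inl u, Finset.inl_mem_disjSum.2 hu, by simpa using hadj⟩
    · obtain ⟨u, hu, hadj⟩ := h2 b (Set.notMem_empty _)
      exact ⟨Sum.inr u, Finset.inr_mem_disjSum.2 hu, by simpa using hadj⟩

lemma inl_mem_free {D₁ S₁ : Finset α} {D₂ S₂ : Finset β} {a : α} :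
    Sum.inl a ∈ Finset.univ \ (D₁.disjSum D₂ ∪ S₁.disjSum S₂) ↔
      a ∈ Finset.univ \ (D₁ ∪ S₁) := by
  rw [disjSum_union]
  simp

lemma inr_mem_free {D₁ S₁ : Finset α} {D₂ S₂ : Finset β} {b : β} :
    Sum.inr b ∈ Finset.univ \ (D₁.disjSum D₂ ∪ S₁.disjSum S₂) ↔
      b ∈ Finset.univ \ (D₂ ∪ S₂) := by
  rw [disjSum_union]
  simp

lemma val_sum_eq_top_left :
    ∀ (n : ℕ) (t : Bool) (D₁ S₁ : Finset α) (D₂ S₂ : Finset β),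
    (Finset.univ \ (D₁.disjSum D₂ ∪ S₁.disjSum S₂)).card ≤ n →
    D₁ ∪ S₁ = Finset.univ → ¬Dominates G ∅ D₁ →
    val (G ⊕g H) ∅ t (D₁.disjSum D₂) (S₁.disjSum S₂) = ⊤ := by
  intro n
  induction n using Nat.strong_induction_on with
  | _ n ih =>
  intro t D₁ S₁ D₂ S₂ hcard hfull hdom
  have hdomU : ¬Dominates (G ⊕g H) ∅ (D₁.disjSum D₂) := fun h =>
    hdom (dominates_disjSum.1 h).1
  cases t
  · by_cases hfullU : D₁.disjSum D₂ ∪ S₁.disjSum S₂ = Finset.univ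
    · exact val_false_of_full hdomU hfullU
    · rw [val_false_of_not hdomU hfullU]
      have hne : (Finset.univ \ (D₁.disjSum D₂ ∪ S₁.disjSum S₂)).Nonempty := by
        rw [Finset.sdiff_nonempty]
        intro h
        exact hfullU (Finset.univ_subset_iff.1 h)
      obtain ⟨v, hv⟩ := hne
      rw [eq_top_iff]
      refine le_trans ?_ (Finset.le_sup
        (f := fun w => val (G ⊕g H) ∅ true (D₁.disjSum D₂) (insert w.1 (S₁.disjSum S₂)))
        (Finset.mem_attach _ ⟨v, hv⟩))
      rcases v with a | b
      · exfalso
        have := inl_mem_free.1 hv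
        rw [Finset.mem_sdiff, hfull] at this
        simp at this
      · rw [insert_inr_disjSum]
        have hlt : (Finset.univ \ (D₁.disjSum D₂ ∪ S₁.disjSum (insert b S₂))).card < n := by
          refine lt_of_lt_of_le ?_ hcard
          rw [← insert_inr_disjSum]
          exact card_free_insert_right_lt hv
        rw [ih _ hlt true D₁ S₁ D₂ (insert b S₂) (le_refl _) hfull hdom]
  · rw [val_true_of_not_dom hdomU]
    rw [Finset.inf_eq_top_iff]
    rintro ⟨v, hv⟩ -
    rcases v with a | b
    · exfalso
      have := inl_mem_free.1 hv
      rw [Finset.mem_sdiff, hfull] at this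
      simp at this
    · rw [insert_inr_disjSum]
      have hlt : (Finset.univ \ ((D₁.disjSum (insert b D₂)) ∪ S₁.disjSum S₂)).card < n := by
        refine lt_of_lt_of_le ?_ hcard
        rw [← insert_inr_disjSum]
        exact card_free_insert_left_lt hv
      rw [ih _ hlt false D₁ S₁ (insert b D₂) S₂ (le_refl _) hfull hdom, add_top]

lemma val_sum_eq_top_right :
    ∀ (n : ℕ) (t : Bool) (D₁ S₁ : Finset α) (D₂ S₂ : Finset β),
    (Finset.univ \ (D₁.disjSum D₂ ∪ S₁.disjSum S₂)).card ≤ n →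
    D₂ ∪ S₂ = Finset.univ → ¬Dominates H ∅ D₂ →
    val (G ⊕g H) ∅ t (D₁.disjSum D₂) (S₁.disjSum S₂) = ⊤ := by
  intro n
  induction n using Nat.strong_induction_on with
  | _ n ih =>
  intro t D₁ S₁ D₂ S₂ hcard hfull hdom
  have hdomU : ¬Dominates (G ⊕g H) ∅ (D₁.disjSum D₂) := fun h =>
    hdom (dominates_disjSum.1 h).2
  cases t
  · by_cases hfullU : D₁.disjSum D₂ ∪ S₁.disjSum S₂ = Finset.univ
    · exact val_false_of_full hdomU hfullU
    · rw [val_false_of_not hdomU hfullU]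
      have hne : (Finset.univ \ (D₁.disjSum D₂ ∪ S₁.disjSum S₂)).Nonempty := by
        rw [Finset.sdiff_nonempty]
        intro h
        exact hfullU (Finset.univ_subset_iff.1 h)
      obtain ⟨v, hv⟩ := hne
      rw [eq_top_iff]
      refine le_trans ?_ (Finset.le_sup
        (f := fun w => val (G ⊕g H) ∅ true (D₁.disjSum D₂) (insert w.1 (S₁.disjSum S₂)))
        (Finset.mem_attach _ ⟨v, hv⟩))
      rcases v with a | b
      · rw [insert_inl_disjSum]
        have hlt : (Finset.univ \ (D₁.disjSum D₂ ∪ (insert a S₁).disjSum S₂)).card < n := by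
          refine lt_of_lt_of_le ?_ hcard
          rw [← insert_inl_disjSum]
          exact card_free_insert_right_lt hv
        rw [ih _ hlt true D₁ (insert a S₁) D₂ S₂ (le_refl _) hfull hdom]
      · exfalso
        have := inr_mem_free.1 hv
        rw [Finset.mem_sdiff, hfull] at this
        simp at this
  · rw [val_true_of_not_dom hdomU]
    rw [Finset.inf_eq_top_iff]
    rintro ⟨v, hv⟩ -
    rcases v with a | b
    · rw [insert_inl_disjSum]
      have hlt : (Finset.univ \ ((insert a D₁).disjSum D₂ ∪ S₁.disjSum S₂)).card < n := by
        refine lt_of_lt_of_le ?_ hcard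
        rw [← insert_inl_disjSum]
        exact card_free_insert_left_lt hv
      rw [ih _ hlt false (insert a D₁) S₁ D₂ S₂ (le_refl _) hfull hdom, add_top]
    · exfalso
      have := inr_mem_free.1 hv
      rw [Finset.mem_sdiff, hfull] at this
      simp at this

lemma val_true_le_step {V : Type*} [Fintype V] [DecidableEq V] {G : SimpleGraph V}
    {A : Set V} {D S : Finset V} {a : V} (ha : a ∈ Finset.univ \ (D ∪ S)) :
    val G A true D S ≤ 1 + val G A false (insert a D) S := by
  by_cases hdom : Dominates G A D
  · rw [val_true_of_dom hdom]; exact zero_le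
  · rw [val_true_of_not_dom hdom]
    exact Finset.inf_le (f := fun v => 1 + val G A false (insert v.1 D) S)
      (Finset.mem_attach _ ⟨a, ha⟩)

lemma val_step_le_false {V : Type*} [Fintype V] [DecidableEq V] {G : SimpleGraph V}
    {A : Set V} {D S : Finset V} {a : V} (ha : a ∈ Finset.univ \ (D ∪ S)) :
    val G A true D (insert a S) ≤ val G A false D S := by
  by_cases hdom : Dominates G A D
  · rw [val_true_of_dom hdom]; exact zero_le
  · have hfull : D ∪ S ≠ Finset.univ := by
      intro h
      rw [Finset.mem_sdiff, h] at ha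
      simp at ha
    rw [val_false_of_not hdom hfull]
    exact Finset.le_sup (f := fun v => val G A true D (insert v.1 S))
      (Finset.mem_attach _ ⟨a, ha⟩)

lemma lower : ∀ (n : ℕ) (D₁ S₁ : Finset α) (D₂ S₂ : Finset β),
    (Finset.univ \ (D₁.disjSum D₂ ∪ S₁.disjSum S₂)).card ≤ n →
    (val G ∅ true D₁ S₁ + val H ∅ true D₂ S₂ ≤
      val (G ⊕g H) ∅ true (D₁.disjSum D₂) (S₁.disjSum S₂)) ∧
    (val G ∅ false D₁ S₁ + val H ∅ true D₂ S₂ ≤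
      val (G ⊕g H) ∅ false (D₁.disjSum D₂) (S₁.disjSum S₂)) ∧
    (val G ∅ true D₁ S₁ + val H ∅ false D₂ S₂ ≤
      val (G ⊕g H) ∅ false (D₁.disjSum D₂) (S₁.disjSum S₂)) := by
  intro n
  induction n using Nat.strong_induction_on with
  | _ n ih =>
  intro D₁ S₁ D₂ S₂ hcard
  have hM : val G ∅ true D₁ S₁ + val H ∅ true D₂ S₂ ≤
      val (G ⊕g H) ∅ true (D₁.disjSum D₂) (S₁.disjSum S₂) := by
    by_cases hdomU : Dominates (G ⊕g H) ∅ (D₁.disjSum D₂)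
    · obtain ⟨h1, h2⟩ := dominates_disjSum.1 hdomU
      rw [val_true_of_dom h1, val_true_of_dom h2, add_zero]
      exact zero_le
    · rw [val_true_of_not_dom hdomU]
      apply Finset.le_inf
      rintro ⟨v, hv⟩ -
      rcases v with a | b
      · rw [insert_inl_disjSum]
        have ha : a ∈ Finset.univ \ (D₁ ∪ S₁) := inl_mem_free.1 hv
        have hlt : (Finset.univ \ ((insert a D₁).disjSum D₂ ∪ S₁.disjSum S₂)).card < n := by
          refine lt_of_lt_of_le ?_ hcard
          rw [← insert_inl_disjSum]
          exact card_free_insert_left_lt hv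
        have hrec := (ih _ hlt (insert a D₁) S₁ D₂ S₂ (le_refl _)).2.1
        calc val G ∅ true D₁ S₁ + val H ∅ true D₂ S₂
            ≤ (1 + val G ∅ false (insert a D₁) S₁) + val H ∅ true D₂ S₂ :=
              add_le_add_left (val_true_le_step ha) _
          _ = 1 + (val G ∅ false (insert a D₁) S₁ + val H ∅ true D₂ S₂) := add_assoc _ _ _
          _ ≤ 1 + val (G ⊕g H) ∅ false ((insert a D₁).disjSum D₂) (S₁.disjSum S₂) :=
              add_le_add_right hrec 1
      · rw [insert_inr_disjSum]
        have hb : b ∈ Finset.univ \ (D₂ ∪ S₂) := inr_mem_free.1 hv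
        have hlt : (Finset.univ \ (D₁.disjSum (insert b D₂) ∪ S₁.disjSum S₂)).card < n := by
          refine lt_of_lt_of_le ?_ hcard
          rw [← insert_inr_disjSum]
          exact card_free_insert_left_lt hv
        have hrec := (ih _ hlt D₁ S₁ (insert b D₂) S₂ (le_refl _)).2.2
        calc val G ∅ true D₁ S₁ + val H ∅ true D₂ S₂
            ≤ val G ∅ true D₁ S₁ + (1 + val H ∅ false (insert b D₂) S₂) :=
              add_le_add_right (val_true_le_step hb) _
          _ = 1 + (val G ∅ true D₁ S₁ + val H ∅ false (insert b D₂) S₂) := by ring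
          _ ≤ 1 + val (G ⊕g H) ∅ false (D₁.disjSum (insert b D₂)) (S₁.disjSum S₂) :=
              add_le_add_right hrec 1
  refine ⟨hM, ?_, ?_⟩
  · -- G false, H true
    by_cases hdomU : Dominates (G ⊕g H) ∅ (D₁.disjSum D₂)
    · obtain ⟨h1, h2⟩ := dominates_disjSum.1 hdomU
      rw [val_false_of_dom h1, val_true_of_dom h2, add_zero]
      exact zero_le
    · by_cases hfullU : D₁.disjSum D₂ ∪ S₁.disjSum S₂ = Finset.univ
      · rw [val_false_of_full hdomU hfullU]; exact le_top
      · by_cases hdomG : Dominates G ∅ D₁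
        · rw [val_false_of_dom hdomG, zero_add]
          refine le_trans ?_ ((val_pass _ _).trans (le_refl _))
          calc val H ∅ true D₂ S₂ = val G ∅ true D₁ S₁ + val H ∅ true D₂ S₂ := by
                rw [val_true_of_dom hdomG, zero_add]
            _ ≤ val (G ⊕g H) ∅ true (D₁.disjSum D₂) (S₁.disjSum S₂) := hM
        · by_cases hfullG : D₁ ∪ S₁ = Finset.univ
          · rw [val_sum_eq_top_left _ false D₁ S₁ D₂ S₂ hcard hfullG hdomG]
            exact le_top
          · have hneG : (Finset.univ \ (D₁ ∪ S₁)).Nonempty := by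
              rw [Finset.sdiff_nonempty]
              intro h
              exact hfullG (Finset.univ_subset_iff.1 h)
            obtain ⟨⟨s, hs⟩, -, hseq⟩ := Finset.exists_mem_eq_sup
              (Finset.univ \ (D₁ ∪ S₁)).attach hneG.attach
              (fun v => val G ∅ true D₁ (insert v.1 S₁))
            rw [val_false_of_not hdomG hfullG, hseq]
            have hsU : Sum.inl s ∈ Finset.univ \ (D₁.disjSum D₂ ∪ S₁.disjSum S₂) :=
              inl_mem_free.2 hs
            rw [val_false_of_not hdomU hfullU]
            refine le_trans ?_ (Finset.le_sup
              (f := fun w => val (G ⊕g H) ∅ true (D₁.disjSum D₂) (insert w.1 (S₁.disjSum S₂)))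
              (Finset.mem_attach _ ⟨Sum.inl s, hsU⟩))
            rw [insert_inl_disjSum]
            have hlt : (Finset.univ \ (D₁.disjSum D₂ ∪ (insert s S₁).disjSum S₂)).card < n := by
              refine lt_of_lt_of_le ?_ hcard
              rw [← insert_inl_disjSum]
              exact card_free_insert_right_lt hsU
            exact (ih _ hlt D₁ (insert s S₁) D₂ S₂ (le_refl _)).1
  · -- G true, H false
    by_cases hdomU : Dominates (G ⊕g H) ∅ (D₁.disjSum D₂)
    · obtain ⟨h1, h2⟩ := dominates_disjSum.1 hdomU
      rw [val_true_of_dom h1, val_false_of_dom h2, add_zero]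
      exact zero_le
    · by_cases hfullU : D₁.disjSum D₂ ∪ S₁.disjSum S₂ = Finset.univ
      · rw [val_false_of_full hdomU hfullU]; exact le_top
      · by_cases hdomH : Dominates H ∅ D₂
        · rw [val_false_of_dom hdomH, add_zero]
          refine le_trans ?_ (val_pass _ _)
          calc val G ∅ true D₁ S₁ = val G ∅ true D₁ S₁ + val H ∅ true D₂ S₂ := by
                rw [val_true_of_dom hdomH, add_zero]
            _ ≤ val (G ⊕g H) ∅ true (D₁.disjSum D₂) (S₁.disjSum S₂) := hM
        · by_cases hfullH : D₂ ∪ S₂ = Finset.univ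
          · rw [val_sum_eq_top_right _ false D₁ S₁ D₂ S₂ hcard hfullH hdomH]
            exact le_top
          · have hneH : (Finset.univ \ (D₂ ∪ S₂)).Nonempty := by
              rw [Finset.sdiff_nonempty]
              intro h
              exact hfullH (Finset.univ_subset_iff.1 h)
            obtain ⟨⟨s, hs⟩, -, hseq⟩ := Finset.exists_mem_eq_sup
              (Finset.univ \ (D₂ ∪ S₂)).attach hneH.attach
              (fun v => val H ∅ true D₂ (insert v.1 S₂))
            rw [val_false_of_not hdomH hfullH, hseq]
            have hsU : Sum.inr s ∈ Finset.univ \ (D₁.disjSum D₂ ∪ S₁.disjSum S₂) :=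
              inr_mem_free.2 hs
            rw [val_false_of_not hdomU hfullU]
            refine le_trans ?_ (Finset.le_sup
              (f := fun w => val (G ⊕g H) ∅ true (D₁.disjSum D₂) (insert w.1 (S₁.disjSum S₂)))
              (Finset.mem_attach _ ⟨Sum.inr s, hsU⟩))
            rw [insert_inr_disjSum]
            have hlt : (Finset.univ \ (D₁.disjSum D₂ ∪ S₁.disjSum (insert s S₂))).card < n := by
              refine lt_of_lt_of_le ?_ hcard
              rw [← insert_inr_disjSum]
              exact card_free_insert_right_lt hsU
            exact (ih _ hlt D₁ S₁ D₂ (insert s S₂) (le_refl _)).1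

lemma upper : ∀ (n : ℕ) (D₁ S₁ : Finset α) (D₂ S₂ : Finset β),
    (Finset.univ \ (D₁.disjSum D₂ ∪ S₁.disjSum S₂)).card ≤ n →
    (val (G ⊕g H) ∅ true (D₁.disjSum D₂) (S₁.disjSum S₂) ≤
      val G ∅ true D₁ S₁ + val H ∅ false D₂ S₂) ∧
    (val (G ⊕g H) ∅ true (D₁.disjSum D₂) (S₁.disjSum S₂) ≤
      val G ∅ false D₁ S₁ + val H ∅ true D₂ S₂) ∧
    (val (G ⊕g H) ∅ false (D₁.disjSum D₂) (S₁.disjSum S₂) ≤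
      val G ∅ false D₁ S₁ + val H ∅ false D₂ S₂) := by
  intro n
  induction n using Nat.strong_induction_on with
  | _ n ih =>
  intro D₁ S₁ D₂ S₂ hcard
  have hU0 : val (G ⊕g H) ∅ false (D₁.disjSum D₂) (S₁.disjSum S₂) ≤
      val G ∅ false D₁ S₁ + val H ∅ false D₂ S₂ := by
    by_cases hdomU : Dominates (G ⊕g H) ∅ (D₁.disjSum D₂)
    · rw [val_false_of_dom hdomU]; exact zero_le
    · by_cases hfullU : D₁.disjSum D₂ ∪ S₁.disjSum S₂ = Finset.univ
      · -- both sides full; one side not dominated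
        have hfull12 := disjSum_eq_univ.1 ((disjSum_union D₁ S₁ D₂ S₂) ▸ hfullU)
        by_cases hdomG : Dominates G ∅ D₁
        · have hdomH : ¬Dominates H ∅ D₂ := fun h => hdomU (dominates_disjSum.2 ⟨hdomG, h⟩)
          rw [val_false_of_full hdomH hfull12.2, add_top]
          exact le_top
        · rw [val_false_of_full hdomG hfull12.1, top_add]
          exact le_top
      · rw [val_false_of_not hdomU hfullU]
        apply Finset.sup_le
        rintro ⟨v, hv⟩ -
        rcases v with s | s
        · rw [insert_inl_disjSum]
          have hs : s ∈ Finset.univ \ (D₁ ∪ S₁) := inl_mem_free.1 hv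
          have hlt : (Finset.univ \ (D₁.disjSum D₂ ∪ (insert s S₁).disjSum S₂)).card < n := by
            refine lt_of_lt_of_le ?_ hcard
            rw [← insert_inl_disjSum]
            exact card_free_insert_right_lt hv
          calc val (G ⊕g H) ∅ true (D₁.disjSum D₂) ((insert s S₁).disjSum S₂)
              ≤ val G ∅ true D₁ (insert s S₁) + val H ∅ false D₂ S₂ :=
                (ih _ hlt D₁ (insert s S₁) D₂ S₂ (le_refl _)).1
            _ ≤ val G ∅ false D₁ S₁ + val H ∅ false D₂ S₂ :=
                add_le_add_left (val_step_le_false hs) _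
        · rw [insert_inr_disjSum]
          have hs : s ∈ Finset.univ \ (D₂ ∪ S₂) := inr_mem_free.1 hv
          have hlt : (Finset.univ \ (D₁.disjSum D₂ ∪ S₁.disjSum (insert s S₂))).card < n := by
            refine lt_of_lt_of_le ?_ hcard
            rw [← insert_inr_disjSum]
            exact card_free_insert_right_lt hv
          calc val (G ⊕g H) ∅ true (D₁.disjSum D₂) (S₁.disjSum (insert s S₂))
              ≤ val G ∅ false D₁ S₁ + val H ∅ true D₂ (insert s S₂) :=
                (ih _ hlt D₁ S₁ D₂ (insert s S₂) (le_refl _)).2.1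
            _ ≤ val G ∅ false D₁ S₁ + val H ∅ false D₂ S₂ :=
                add_le_add_right (val_step_le_false hs) _
  refine ⟨?_, ?_, hU0⟩
  · -- U true ≤ G true + H false
    by_cases hdomU : Dominates (G ⊕g H) ∅ (D₁.disjSum D₂)
    · rw [val_true_of_dom hdomU]; exact zero_le
    · by_cases hdomG : Dominates G ∅ D₁
      · refine (val_pass _ _).trans (hU0.trans ?_)
        rw [val_false_of_dom hdomG, val_true_of_dom hdomG]
      · by_cases hfullG : D₁ ∪ S₁ = Finset.univ
        · have : val G ∅ true D₁ S₁ = ⊤ := by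
            rw [val_true_of_not_dom hdomG]
            have he : Finset.univ \ (D₁ ∪ S₁) = ∅ := by rw [hfullG, Finset.sdiff_self]
            rw [he, Finset.attach_empty, Finset.inf_empty]
          rw [this, top_add]
          exact le_top
        · have hneG : (Finset.univ \ (D₁ ∪ S₁)).Nonempty := by
            rw [Finset.sdiff_nonempty]
            intro h
            exact hfullG (Finset.univ_subset_iff.1 h)
          obtain ⟨⟨a, ha⟩, -, haeq⟩ := Finset.exists_mem_eq_inf
            (Finset.univ \ (D₁ ∪ S₁)).attach hneG.attach
            (fun v => 1 + val G ∅ false (insert v.1 D₁) S₁)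
          have haU : Sum.inl a ∈ Finset.univ \ (D₁.disjSum D₂ ∪ S₁.disjSum S₂) :=
            inl_mem_free.2 ha
          have hlt : (Finset.univ \ ((insert a D₁).disjSum D₂ ∪ S₁.disjSum S₂)).card < n := by
            refine lt_of_lt_of_le ?_ hcard
            rw [← insert_inl_disjSum]
            exact card_free_insert_left_lt haU
          calc val (G ⊕g H) ∅ true (D₁.disjSum D₂) (S₁.disjSum S₂)
              ≤ 1 + val (G ⊕g H) ∅ false (insert (Sum.inl a) (D₁.disjSum D₂)) (S₁.disjSum S₂) :=
                val_true_le_step haU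
            _ = 1 + val (G ⊕g H) ∅ false ((insert a D₁).disjSum D₂) (S₁.disjSum S₂) := by
                rw [insert_inl_disjSum]
            _ ≤ 1 + (val G ∅ false (insert a D₁) S₁ + val H ∅ false D₂ S₂) :=
                add_le_add_right (ih _ hlt (insert a D₁) S₁ D₂ S₂ (le_refl _)).2.2 1
            _ = (1 + val G ∅ false (insert a D₁) S₁) + val H ∅ false D₂ S₂ :=
                (add_assoc _ _ _).symm
            _ = val G ∅ true D₁ S₁ + val H ∅ false D₂ S₂ := by
                rw [val_true_of_not_dom hdomG, haeq]
  · -- U true ≤ G false + H true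
    by_cases hdomU : Dominates (G ⊕g H) ∅ (D₁.disjSum D₂)
    · rw [val_true_of_dom hdomU]; exact zero_le
    · by_cases hdomH : Dominates H ∅ D₂
      · refine (val_pass _ _).trans (hU0.trans ?_)
        rw [val_false_of_dom hdomH, val_true_of_dom hdomH]
      · by_cases hfullH : D₂ ∪ S₂ = Finset.univ
        · have : val H ∅ true D₂ S₂ = ⊤ := by
            rw [val_true_of_not_dom hdomH]
            have he : Finset.univ \ (D₂ ∪ S₂) = ∅ := by rw [hfullH, Finset.sdiff_self]
            rw [he, Finset.attach_empty, Finset.inf_empty]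
          rw [this, add_top]
          exact le_top
        · have hneH : (Finset.univ \ (D₂ ∪ S₂)).Nonempty := by
            rw [Finset.sdiff_nonempty]
            intro h
            exact hfullH (Finset.univ_subset_iff.1 h)
          obtain ⟨⟨b, hb⟩, -, hbeq⟩ := Finset.exists_mem_eq_inf
            (Finset.univ \ (D₂ ∪ S₂)).attach hneH.attach
            (fun v => 1 + val H ∅ false (insert v.1 D₂) S₂)
          have hbU : Sum.inr b ∈ Finset.univ \ (D₁.disjSum D₂ ∪ S₁.disjSum S₂) :=
            inr_mem_free.2 hb
          have hlt : (Finset.univ \ (D₁.disjSum (insert b D₂) ∪ S₁.disjSum S₂)).card < n := by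
            refine lt_of_lt_of_le ?_ hcard
            rw [← insert_inr_disjSum]
            exact card_free_insert_left_lt hbU
          calc val (G ⊕g H) ∅ true (D₁.disjSum D₂) (S₁.disjSum S₂)
              ≤ 1 + val (G ⊕g H) ∅ false (insert (Sum.inr b) (D₁.disjSum D₂)) (S₁.disjSum S₂) :=
                val_true_le_step hbU
            _ = 1 + val (G ⊕g H) ∅ false (D₁.disjSum (insert b D₂)) (S₁.disjSum S₂) := by
                rw [insert_inr_disjSum]
            _ ≤ 1 + (val G ∅ false D₁ S₁ + val H ∅ false (insert b D₂) S₂) :=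
                add_le_add_right (ih _ hlt D₁ S₁ (insert b D₂) S₂ (le_refl _)).2.2 1
            _ = val G ∅ false D₁ S₁ + (1 + val H ∅ false (insert b D₂) S₂) := by ring
            _ = val G ∅ false D₁ S₁ + val H ∅ true D₂ S₂ := by
                rw [val_true_of_not_dom hdomH, hbeq]

end MBAux


/-- If `G` and `H` are finite simple graphs and `G ⊕g H` is their disjoint union, then
`γ_MB(G) + γ_MB(H) ≤ γ_MB(G ∪ H) ≤ min{γ_MB'(G) + γ_MB(H), γ_MB(G) + γ_MB'(H)}` and
`max{γ_MB'(G) + γ_MB(H), γ_MB(G) + γ_MB'(H)} ≤ γ_MB'(G ∪ H) ≤ γ_MB'(G) + γ_MB'(H)`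
(a sum involving `∞` being `∞`). -/
theorem gammaMB_disjoint_union {α β : Type*} [Fintype α] [DecidableEq α]
    [Fintype β] [DecidableEq β] (G : SimpleGraph α) (H : SimpleGraph β) :
    gammaMB G + gammaMB H ≤ gammaMB (G ⊕g H) ∧
    gammaMB (G ⊕g H) ≤ min (gammaMB' G + gammaMB H) (gammaMB G + gammaMB' H) ∧
    max (gammaMB' G + gammaMB H) (gammaMB G + gammaMB' H) ≤ gammaMB' (G ⊕g H) ∧
    gammaMB' (G ⊕g H) ≤ gammaMB' G + gammaMB' H := by
  have h0 : (∅ : Finset α).disjSum (∅ : Finset β) = (∅ : Finset (α ⊕ β)) := by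
    ext x; cases x <;> simp
  have eG : gammaMB G = MBAux.val G ∅ true ∅ ∅ := MBAux.gammaMBRes_eq_val G ∅
  have eG' : gammaMB' G = MBAux.val G ∅ false ∅ ∅ := MBAux.gammaMBRes'_eq_val G ∅
  have eH : gammaMB H = MBAux.val H ∅ true ∅ ∅ := MBAux.gammaMBRes_eq_val H ∅
  have eH' : gammaMB' H = MBAux.val H ∅ false ∅ ∅ := MBAux.gammaMBRes'_eq_val H ∅
  have eU : gammaMB (G ⊕g H) =
      MBAux.val (G ⊕g H) ∅ true ((∅ : Finset α).disjSum (∅ : Finset β))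
        ((∅ : Finset α).disjSum (∅ : Finset β)) := by
    rw [h0]; exact MBAux.gammaMBRes_eq_val (G ⊕g H) ∅
  have eU' : gammaMB' (G ⊕g H) =
      MBAux.val (G ⊕g H) ∅ false ((∅ : Finset α).disjSum (∅ : Finset β))
        ((∅ : Finset α).disjSum (∅ : Finset β)) := by
    rw [h0]; exact MBAux.gammaMBRes'_eq_val (G ⊕g H) ∅
  have hlow := MBAux.lower (G := G) (H := H)
    ((Finset.univ \ ((∅ : Finset α).disjSum (∅ : Finset β) ∪
      (∅ : Finset α).disjSum (∅ : Finset β))).card) ∅ ∅ ∅ ∅ (le_refl _)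
  have hup := MBAux.upper (G := G) (H := H)
    ((Finset.univ \ ((∅ : Finset α).disjSum (∅ : Finset β) ∪
      (∅ : Finset α).disjSum (∅ : Finset β))).card) ∅ ∅ ∅ ∅ (le_refl _)
  refine ⟨?_, le_min ?_ ?_, max_le ?_ ?_, ?_⟩
  · rw [eG, eH, eU]; exact hlow.1
  · rw [eG', eH, eU]; exact hup.2.1
  · rw [eG, eH', eU]; exact hup.1
  · rw [eG', eH, eU']
    exact le_trans hlow.2.1 (le_refl _)
  · rw [eG, eH', eU']
    exact le_trans hlow.2.2 (le_refl _)
  · rw [eG', eH', eU']; exact hup.2.2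
end
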